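/- arXiv:1208.0312 — 9 statements merged into one kernel-verified Lean document; each statement's English description precedes it below -/
import Mathlib

section
/- Let B = 2. Consider an instance of jobs with positive integer lengths and arbitrary feasible slot sets in which at least one fractional (preemptive) schedule exists. Then there exists a fractional schedule attaining the minimum fractional active time in which every value x_{j,s} and every value a_s lies in the set {0, 1/2, 1}. -/
open Finset

/-- A fractional (preemptive) schedule. -/
def IsFracSchedule {J S : Type*} [Fintype J] [Fintype S]
    (B : ℕ) (T : J → Finset S) (len : J → ℕ) (x : J → S → ℝ) (a : S → ℝ) : Prop :=
  (∀ j s, 0 ≤ x j s) ∧ (∀ s, 0 ≤ a s ∧ a s ≤ 1) ∧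
    (∀ j s, s ∉ T j → x j s = 0) ∧
    (∀ j, ∑ s, x j s = (len j : ℝ)) ∧
    (∀ j s, x j s ≤ a s) ∧
    (∀ s, ∑ j, x j s ≤ (B : ℝ) * a s)

namespace HalfIntAux

variable {V : Type*} [Fintype V]

/-- Row sum of an integer-coefficient row against a real vector. -/
noncomputable def rs (r : V → ℤ) (f : V → ℝ) : ℝ := ∑ v, (r v : ℝ) * f v

lemma rs_def (r : V → ℤ) (f : V → ℝ) : rs r f = ∑ v, (r v : ℝ) * f v := rfl

lemma rs_sub (r q : V → ℤ) (c : ℤ) (f : V → ℝ) :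
    rs (fun v => q v - c * r v) f = rs q f - c * rs r f := by
  simp only [rs, Finset.mul_sum, ← Finset.sum_sub_distrib]
  congr 1; ext v; push_cast; ring

lemma rs_update (r : V → ℤ) (f g : V → ℝ) (u : V) (h : ∀ v, v ≠ u → f v = g v) :
    rs r f = rs r g + (r u : ℝ) * (f u - g u) := by
  classical
  simp only [rs]
  rw [← Finset.add_sum_erase _ _ (Finset.mem_univ u),
      ← Finset.add_sum_erase _ (fun v => (r v : ℝ) * g v) (Finset.mem_univ u)]
  have : ∑ v ∈ Finset.univ.erase u, (r v : ℝ) * f v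
       = ∑ v ∈ Finset.univ.erase u, (r v : ℝ) * g v := by
    apply Finset.sum_congr rfl
    intro v hv
    rw [h v (Finset.ne_of_mem_erase hv)]
  rw [this]; ring

lemma rs_zero_of_support (r : V → ℤ) (f : V → ℝ)
    (h : ∀ v, r v ≠ 0 → f v = 0) : rs r f = 0 := by
  apply Finset.sum_eq_zero
  intro v _
  by_cases hv : r v = 0
  · simp [hv]
  · simp [h v hv]

open Classical in
lemma rs_pair (r : V → ℤ) (u u' : V) (hne : u ≠ u') (α β : ℝ) :
    rs r (fun t => if t = u then α else if t = u' then β else 0)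
      = (r u : ℝ) * α + (r u' : ℝ) * β := by
  classical
  simp only [rs]
  rw [← Finset.add_sum_erase _ _ (Finset.mem_univ u)]
  rw [← Finset.add_sum_erase _ _ (Finset.mem_erase.2 ⟨Ne.symm hne, Finset.mem_univ u'⟩)]
  rw [if_pos rfl, if_neg (Ne.symm hne), if_pos rfl]
  have : ∑ v ∈ (Finset.univ.erase u).erase u',
      (r v : ℝ) * (if v = u then α else if v = u' then β else 0) = 0 := by
    apply Finset.sum_eq_zero
    intro v hv
    have h1 : v ≠ u' := Finset.ne_of_mem_erase hv
    have h2 : v ≠ u := Finset.ne_of_mem_erase (Finset.mem_of_mem_erase hv)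
    simp [h1, h2]
  rw [this]; ring

omit [Fintype V] in
lemma exists_int_sum (s : Finset V) (f : V → ℝ) (h : ∀ v ∈ s, ∃ k : ℤ, f v = k) :
    ∃ K : ℤ, ∑ v ∈ s, f v = K := by
  classical
  induction s using Finset.induction_on with
  | empty => exact ⟨0, by simp⟩
  | @insert a s ha ih =>
    obtain ⟨k, hk⟩ := h a (Finset.mem_insert_self a s)
    obtain ⟨K, hK⟩ := ih (fun v hv => h v (Finset.mem_insert_of_mem hv))
    exact ⟨k + K, by rw [Finset.sum_insert ha, hk, hK]; push_cast; ring⟩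

end HalfIntAux

namespace Master

open HalfIntAux

variable {V : Type*} [Fintype V]

/-- The master half-integrality lemma: a rigid integer linear system with even
right-hand sides, in which each variable has total coefficient weight at most 2,
has an integral solution wherever it is solvable. -/
theorem master (n : ℕ) :
    ∀ (A : Finset V) (L : Multiset ((V → ℤ) × ℤ)) (w : V → ℝ),
    A.card ≤ n →
    (∀ p ∈ L, ∀ v, v ∉ A → p.1 v = 0) →
    (∀ v ∈ A, (L.map (fun p => |p.1 v|)).sum ≤ 2) →
    (∀ p ∈ L, ∃ k : ℤ, p.2 = 2 * k) →
    (∀ p ∈ L, rs p.1 w = (p.2 : ℝ)) →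
    (∀ d : V → ℝ, (∀ v, v ∉ A → d v = 0) → (∀ p ∈ L, rs p.1 d = 0) → ∀ v, d v = 0) →
    ∀ v ∈ A, ∃ k : ℤ, w v = (k : ℝ) := by
  classical
  induction n with
  | zero =>
    intro A L w hcard _ _ _ _ _ v hv
    rw [Nat.le_zero, Finset.card_eq_zero] at hcard
    simp [hcard] at hv
  | succ n ih =>
    intro A L w hcard hsupp hocc heven hsol hrig
    -- notation
    set cnt : V → ℤ := fun u => (L.map (fun p => |p.1 u|)).sum with hcntdef
    have hcnt_nn : ∀ u, 0 ≤ cnt u := by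
      intro u
      apply Multiset.sum_nonneg
      intro x hx
      obtain ⟨p, _, rfl⟩ := Multiset.mem_map.1 hx
      exact abs_nonneg _
    have hcnt_single : ∀ u, ∀ p ∈ L, |p.1 u| ≤ cnt u := by
      intro u p hp
      exact Multiset.single_le_sum (by
        intro x hx
        obtain ⟨q, _, rfl⟩ := Multiset.mem_map.1 hx
        exact abs_nonneg _) _ (Multiset.mem_map_of_mem _ hp)
    -- the common finishing step: a row `ρ` whose coefficient on `u` is `±1`,
    -- all of whose other active variables are already known integral.
    have key : ∀ (u : V) (ρ : (V → ℤ) × ℤ), ρ ∈ L → |ρ.1 u| = 1 →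
        (∀ v' ∈ A.erase u, ∃ k : ℤ, w v' = (k : ℝ)) → ∃ k : ℤ, w u = (k : ℝ) := by
      intro u ρ hρL habs hprev
      have hsum : (ρ.1 u : ℝ) * w u + ∑ v' ∈ Finset.univ.erase u, (ρ.1 v' : ℝ) * w v'
          = (ρ.2 : ℝ) := by
        rw [Finset.add_sum_erase _ (fun v' => (ρ.1 v' : ℝ) * w v') (Finset.mem_univ u)]
        exact hsol ρ hρL
      have hint : ∀ v' ∈ Finset.univ.erase u, ∃ k : ℤ, (ρ.1 v' : ℝ) * w v' = (k : ℝ) := by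
        intro v' hv'
        by_cases hz : ρ.1 v' = 0
        · exact ⟨0, by simp [hz]⟩
        · have hvA : v' ∈ A := by
            by_contra hvA
            exact hz (hsupp ρ hρL v' hvA)
          have : v' ∈ A.erase u :=
            Finset.mem_erase.2 ⟨Finset.ne_of_mem_erase hv', hvA⟩
          obtain ⟨k, hk⟩ := hprev v' this
          exact ⟨ρ.1 v' * k, by rw [hk]; push_cast; ring⟩
      obtain ⟨K, hK⟩ := exists_int_sum _ _ hint
      rw [hK] at hsum
      rcases (abs_eq (by norm_num : (0:ℤ) ≤ 1)).1 habs with h1 | h1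
      · exact ⟨ρ.2 - K, by rw [h1] at hsum; push_cast at hsum ⊢; linarith⟩
      · exact ⟨K - ρ.2, by rw [h1] at hsum; push_cast at hsum ⊢; linarith⟩
    by_cases hA1 : ∃ u ∈ A, cnt u ≤ 1
    · -- a variable occurring with total weight ≤ 1
      obtain ⟨u, huA, hle⟩ := hA1
      have h01 : cnt u = 0 ∨ cnt u = 1 := by have := hcnt_nn u; omega
      rcases h01 with h0 | h1
      · -- weight 0 : the indicator of u is in the kernel, contradiction
        exfalso
        have hall0 : ∀ p ∈ L, p.1 u = 0 := by
          intro p hp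
          have := hcnt_single u p hp
          rw [h0] at this
          exact abs_eq_zero.1 (le_antisymm this (abs_nonneg _))
        have := hrig (fun v' => if v' = u then (1:ℝ) else 0)
          (by
            intro v' hv'
            have : v' ≠ u := fun h => hv' (h ▸ huA)
            simp [this])
          (by
            intro p hp
            apply rs_zero_of_support
            intro v' hv'
            have : v' ≠ u := fun h => hv' (by rw [h]; exact hall0 p hp)
            simp [this]) u
        simp at this
      · -- weight 1 : a single row with coefficient ±1; eliminate u and that row
        set L₁ := L.filter (fun p => p.1 u ≠ 0) with hL₁def
        set L₀ := L.filter (fun p => ¬ p.1 u ≠ 0) with hL₀def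
        have hLsplit : L₁ + L₀ = L := Multiset.filter_add_not _ L
        have hL₀zero : ∀ p ∈ L₀, p.1 u = 0 := by
          intro p hp
          exact not_not.1 (Multiset.mem_filter.1 hp).2
        have hL₀sum : (L₀.map (fun p => |p.1 u|)).sum = 0 := by
          rw [Multiset.sum_eq_zero]
          intro x hx
          obtain ⟨p, hp, rfl⟩ := Multiset.mem_map.1 hx
          rw [hL₀zero p hp, abs_zero]
        have hsplitsum : ∀ z : V, (L₁.map (fun p => |p.1 z|)).sum + (L₀.map (fun p => |p.1 z|)).sum = cnt z := by
          intro z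
          rw [hcntdef]
          conv_rhs => rw [← hLsplit]
          simp [Multiset.map_add, Multiset.sum_add]
        have hL₁sum : (L₁.map (fun p => |p.1 u|)).sum = 1 := by
          have := hsplitsum u
          rw [hL₀sum, h1] at this
          omega
        -- L₁ is a singleton {ρ}
        have hcard_le : (L₁.card : ℤ) ≤ 1 := by
          calc (L₁.card : ℤ) = (L₁.map (fun _ => (1:ℤ))).sum := by simp
          _ ≤ (L₁.map (fun p => |p.1 u|)).sum := by
              apply Multiset.sum_map_le_sum_map
              intro p hp
              have h5 : p.1 u ≠ 0 := (Multiset.mem_filter.1 hp).2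
              have := abs_pos.2 h5
              omega
          _ = 1 := hL₁sum
        have hL₁ne : L₁ ≠ 0 := by
          intro h
          rw [h] at hL₁sum
          simp at hL₁sum
        have hcard1 : L₁.card = 1 := by
          have h2 := Multiset.card_pos.2 hL₁ne
          omega
        obtain ⟨ρ, hρ⟩ := Multiset.card_eq_one.1 hcard1
        have hρL₁ : ρ ∈ L₁ := by rw [hρ]; exact Multiset.mem_singleton_self ρ
        have hρL : ρ ∈ L := Multiset.mem_of_le (Multiset.filter_le _ L) hρL₁
        have habs : |ρ.1 u| = 1 := by
          rw [hρ] at hL₁sum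
          simpa using hL₁sum
        have hρu : ρ.1 u = 1 ∨ ρ.1 u = -1 := (abs_eq (by norm_num : (0:ℤ) ≤ 1)).1 habs
        have hρsq : (ρ.1 u : ℝ) * (ρ.1 u : ℝ) = 1 := by
          rcases hρu with h | h <;> rw [h] <;> norm_num
        -- apply induction hypothesis to (A.erase u, L₀)
        have hprev : ∀ v' ∈ A.erase u, ∃ k : ℤ, w v' = (k : ℝ) := by
          apply ih (A.erase u) L₀ w
          · rw [Finset.card_erase_of_mem huA]; omega
          · intro p hp v' hv'
            by_cases hvu : v' = u
            · rw [hvu]; exact hL₀zero p hp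
            · have : v' ∉ A := by
                intro hvA
                exact hv' (Finset.mem_erase.2 ⟨hvu, hvA⟩)
              exact hsupp p (Multiset.mem_of_le (Multiset.filter_le _ L) hp) v' this
          · intro v' hv'
            have hvA : v' ∈ A := Finset.mem_of_mem_erase hv'
            have h2 := hocc v' hvA
            have h3 : cnt v' = (Multiset.map (fun p => |p.1 v'|) L).sum := rfl
            have := hsplitsum v'
            have hnn : 0 ≤ (L₁.map (fun p => |p.1 v'|)).sum := by
              apply Multiset.sum_nonneg
              intro x hx
              obtain ⟨q, _, rfl⟩ := Multiset.mem_map.1 hx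
              exact abs_nonneg _
            omega
          · exact fun p hp => heven p (Multiset.mem_of_le (Multiset.filter_le _ L) hp)
          · exact fun p hp => hsol p (Multiset.mem_of_le (Multiset.filter_le _ L) hp)
          · -- rigidity of the reduced system
            intro d' hd'supp hd'rows
            have hd'u : d' u = 0 := hd'supp u (Finset.notMem_erase u A)
            set d : V → ℝ := fun v' => if v' = u then -(ρ.1 u : ℝ) * rs ρ.1 d' else d' v' with hddef
            have hdeq : ∀ v', v' ≠ u → d v' = d' v' := by
              intro v' hv'; simp [hddef, hv']
            have hdall : ∀ v', d v' = 0 := by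
              apply hrig d
              · intro v' hv'
                have hvu : v' ≠ u := fun h => hv' (h ▸ huA)
                rw [hdeq v' hvu]
                exact hd'supp v' (fun h => hv' (Finset.mem_of_mem_erase h))
              · intro p hp
                rw [← hLsplit] at hp
                rcases Multiset.mem_add.1 hp with hp1 | hp0
                · -- p = ρ
                  have hpρ : p = ρ := by rw [hρ] at hp1; exact Multiset.mem_singleton.1 hp1
                  subst hpρ
                  rw [rs_update p.1 d d' u hdeq]
                  have : d u = -(p.1 u : ℝ) * rs p.1 d' := by simp [hddef]
                  rw [this, hd'u]
                  linear_combination (-(rs p.1 d')) * hρsq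
                · -- p ∈ L₀
                  rw [rs_update p.1 d d' u hdeq, hL₀zero p hp0]
                  rw [hd'rows p hp0]
                  simp
            intro v'
            by_cases hvu : v' = u
            · rw [hvu]; exact hd'u
            · rw [← hdeq v' hvu]; exact hdall v'
        intro v hv
        by_cases hvu : v = u
        · rw [hvu]; exact key u ρ hρL habs hprev
        · exact hprev v (Finset.mem_erase.2 ⟨hvu, hv⟩)
    · -- every active variable has total weight exactly 2
      push_neg at hA1
      have hcnt2 : ∀ u ∈ A, cnt u = 2 := by
        intro u hu
        have := hA1 u hu
        have := hocc u hu
        have h3 : cnt u = (Multiset.map (fun p => |p.1 u|) L).sum := rfl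
        omega
      by_cases hB : ∃ u ∈ A, (L.filter (fun p => p.1 u ≠ 0)).card = 2
      · -- two rows with coefficient ±1 on u : merge them
        obtain ⟨u, huA, hc2⟩ := hB
        set L₁ := L.filter (fun p => p.1 u ≠ 0) with hL₁def
        set L₀ := L.filter (fun p => ¬ p.1 u ≠ 0) with hL₀def
        have hLsplit : L₁ + L₀ = L := Multiset.filter_add_not _ L
        have hL₀zero : ∀ p ∈ L₀, p.1 u = 0 := fun p hp =>
          not_not.1 (Multiset.mem_filter.1 hp).2
        have hsplitsum : ∀ z : V, (Multiset.map (fun p => |p.1 z|) L₁).sum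
            + (Multiset.map (fun p => |p.1 z|) L₀).sum = cnt z := by
          intro z
          have : cnt z = (Multiset.map (fun p => |p.1 z|) (L₁ + L₀)).sum := by
            rw [hLsplit]
          rw [this, Multiset.map_add, Multiset.sum_add]
        have hL₀sum : (Multiset.map (fun p => |p.1 u|) L₀).sum = 0 := by
          rw [Multiset.sum_eq_zero]
          intro x hx
          obtain ⟨p, hp, rfl⟩ := Multiset.mem_map.1 hx
          rw [hL₀zero p hp, abs_zero]
        have hL₁sum : (Multiset.map (fun p => |p.1 u|) L₁).sum = 2 := by
          have h4 := hsplitsum u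
          have h5 := hcnt2 u huA
          omega
        obtain ⟨ρ, σ, hρσ⟩ := Multiset.card_eq_two.1 hc2
        have hρL₁ : ρ ∈ L₁ := by rw [hρσ]; simp
        have hσL₁ : σ ∈ L₁ := by rw [hρσ]; simp
        have hρL : ρ ∈ L := Multiset.mem_of_le (Multiset.filter_le _ L) hρL₁
        have hσL : σ ∈ L := Multiset.mem_of_le (Multiset.filter_le _ L) hσL₁
        have hρu0 : ρ.1 u ≠ 0 := (Multiset.mem_filter.1 hρL₁).2
        have hσu0 : σ.1 u ≠ 0 := (Multiset.mem_filter.1 hσL₁).2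
        have habsρ : |ρ.1 u| = 1 ∧ |σ.1 u| = 1 := by
          rw [hρσ] at hL₁sum
          simp only [Multiset.insert_eq_cons, Multiset.map_cons, Multiset.sum_cons,
            Multiset.map_singleton, Multiset.sum_singleton] at hL₁sum
          have h6 := abs_pos.2 hρu0
          have h7 := abs_pos.2 hσu0
          omega
        have hρusq : ρ.1 u * ρ.1 u = 1 := by
          rcases (abs_eq (by norm_num : (0:ℤ) ≤ 1)).1 habsρ.1 with h | h <;> simp [h]
        have hρusqR : (ρ.1 u : ℝ) * (ρ.1 u : ℝ) = 1 := by
          have : ((ρ.1 u * ρ.1 u : ℤ) : ℝ) = ((1 : ℤ) : ℝ) := by rw [hρusq]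
          push_cast at this
          linarith
        set c : ℤ := σ.1 u * ρ.1 u with hcdef
        have habsc : |c| = 1 := by rw [hcdef, abs_mul, habsρ.1, habsρ.2]; norm_num
        set τ : (V → ℤ) × ℤ := (fun v' => σ.1 v' - c * ρ.1 v', σ.2 - c * ρ.2) with hτdef
        have hτu : τ.1 u = 0 := by
          show σ.1 u - c * ρ.1 u = 0
          rw [hcdef]
          have : σ.1 u * ρ.1 u * ρ.1 u = σ.1 u * (ρ.1 u * ρ.1 u) := by ring
          rw [this, hρusq]
          ring
        have hσfromτ : ∀ v', σ.1 v' = τ.1 v' + c * ρ.1 v' := by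
          intro v'
          show σ.1 v' = (σ.1 v' - c * ρ.1 v') + c * ρ.1 v'
          ring
        have hprev : ∀ v' ∈ A.erase u, ∃ k : ℤ, w v' = (k : ℝ) := by
          apply ih (A.erase u) (τ ::ₘ L₀) w
          · rw [Finset.card_erase_of_mem huA]; omega
          · intro p hp v' hv'
            rcases Multiset.mem_cons.1 hp with hpτ | hp0
            · subst hpτ
              by_cases hvu : v' = u
              · rw [hvu]; exact hτu
              · have hvA : v' ∉ A := by
                  intro hvA
                  exact hv' (Finset.mem_erase.2 ⟨hvu, hvA⟩)
                show σ.1 v' - c * ρ.1 v' = 0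
                rw [hsupp σ hσL v' hvA, hsupp ρ hρL v' hvA]
                ring
            · by_cases hvu : v' = u
              · rw [hvu]; exact hL₀zero p hp0
              · have hvA : v' ∉ A := by
                  intro hvA
                  exact hv' (Finset.mem_erase.2 ⟨hvu, hvA⟩)
                exact hsupp p (Multiset.mem_of_le (Multiset.filter_le _ L) hp0) v' hvA
          · intro v' hv'
            have hvA : v' ∈ A := Finset.mem_of_mem_erase hv'
            have h2 := hocc v' hvA
            have h3 : cnt v' = (Multiset.map (fun p => |p.1 v'|) L).sum := rfl
            have h4 := hsplitsum v'
            have hL₁v : (Multiset.map (fun p => |p.1 v'|) L₁).sum = |ρ.1 v'| + |σ.1 v'| := by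
              rw [hρσ]
              simp [Multiset.insert_eq_cons]
            have hτbound : |τ.1 v'| ≤ |σ.1 v'| + |ρ.1 v'| := by
              show |σ.1 v' - c * ρ.1 v'| ≤ |σ.1 v'| + |ρ.1 v'|
              calc |σ.1 v' - c * ρ.1 v'| ≤ |σ.1 v'| + |c * ρ.1 v'| := abs_sub _ _
              _ = |σ.1 v'| + |ρ.1 v'| := by rw [abs_mul, habsc, one_mul]
            rw [Multiset.map_cons, Multiset.sum_cons]
            omega
          · intro p hp
            rcases Multiset.mem_cons.1 hp with hpτ | hp0
            · subst hpτ
              obtain ⟨k1, hk1⟩ := heven ρ hρL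
              obtain ⟨k2, hk2⟩ := heven σ hσL
              exact ⟨k2 - c * k1, by show σ.2 - c * ρ.2 = _; rw [hk1, hk2]; ring⟩
            · exact heven p (Multiset.mem_of_le (Multiset.filter_le _ L) hp0)
          · intro p hp
            rcases Multiset.mem_cons.1 hp with hpτ | hp0
            · subst hpτ
              show rs (fun v' => σ.1 v' - c * ρ.1 v') w = ((σ.2 - c * ρ.2 : ℤ) : ℝ)
              rw [rs_sub ρ.1 σ.1 c w, hsol ρ hρL, hsol σ hσL]
              push_cast
              ring
            · exact hsol p (Multiset.mem_of_le (Multiset.filter_le _ L) hp0)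
          · -- rigidity of the merged system
            intro d' hd'supp hd'rows
            have hd'u : d' u = 0 := hd'supp u (Finset.notMem_erase u A)
            set d : V → ℝ := fun v' => if v' = u then -(ρ.1 u : ℝ) * rs ρ.1 d' else d' v'
              with hddef
            have hdeq : ∀ v', v' ≠ u → d v' = d' v' := by
              intro v' hv'; simp [hddef, hv']
            have hdu : d u = -(ρ.1 u : ℝ) * rs ρ.1 d' := by simp [hddef]
            have hrsρ : rs ρ.1 d = 0 := by
              rw [rs_update ρ.1 d d' u hdeq, hdu, hd'u]
              linear_combination (-(rs ρ.1 d')) * hρusqR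
            have hrsτ : rs τ.1 d = 0 := by
              rw [rs_update τ.1 d d' u hdeq, hτu]
              have := hd'rows τ (Multiset.mem_cons_self τ L₀)
              rw [this]
              simp
            have hdall : ∀ v', d v' = 0 := by
              apply hrig d
              · intro v' hv'
                have hvu : v' ≠ u := fun h => hv' (h ▸ huA)
                rw [hdeq v' hvu]
                exact hd'supp v' (fun h => hv' (Finset.mem_of_mem_erase h))
              · intro p hp
                rw [← hLsplit] at hp
                rcases Multiset.mem_add.1 hp with hp1 | hp0
                · rw [hρσ] at hp1
                  simp only [Multiset.insert_eq_cons, Multiset.mem_cons,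
                    Multiset.mem_singleton] at hp1
                  rcases hp1 with hpρ | hpσ
                  · rw [hpρ]; exact hrsρ
                  · rw [hpσ]
                    have : rs σ.1 d = rs τ.1 d + (c:ℝ) * rs ρ.1 d := by
                      have h8 : rs (fun v' => σ.1 v' - c * ρ.1 v') d
                          = rs σ.1 d - (c:ℝ) * rs ρ.1 d := rs_sub ρ.1 σ.1 c d
                      have h9 : rs τ.1 d = rs σ.1 d - (c:ℝ) * rs ρ.1 d := h8
                      rw [h9]; ring
                    rw [this, hrsτ, hrsρ]
                    ring
                · rw [rs_update p.1 d d' u hdeq, hL₀zero p hp0, hd'rows p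
                    (Multiset.mem_cons_of_mem hp0)]
                  simp
            intro v'
            by_cases hvu : v' = u
            · rw [hvu]; exact hd'u
            · rw [← hdeq v' hvu]; exact hdall v'
        intro v hv
        by_cases hvu : v = u
        · rw [hvu]; exact key u ρ hρL habsρ.1 hprev
        · exact hprev v (Finset.mem_erase.2 ⟨hvu, hv⟩)
      · -- every active variable sits alone in a single row, with coefficient ±2
        push_neg at hB
        intro v hv
        -- the unique row containing v
        have hsingle : ∀ z ∈ A, ∃ ρ ∈ L, |ρ.1 z| = 2 ∧
            ∀ p ∈ L, p.1 z ≠ 0 → p = ρ := by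
          intro z hz
          set L₁ := L.filter (fun p => p.1 z ≠ 0) with hL₁def
          set L₀ := L.filter (fun p => ¬ p.1 z ≠ 0) with hL₀def
          have hLsplit : L₁ + L₀ = L := Multiset.filter_add_not _ L
          have hL₀zero : ∀ p ∈ L₀, p.1 z = 0 := fun p hp =>
            not_not.1 (Multiset.mem_filter.1 hp).2
          have hL₀sum : (Multiset.map (fun p => |p.1 z|) L₀).sum = 0 := by
            rw [Multiset.sum_eq_zero]
            intro x hx
            obtain ⟨p, hp, rfl⟩ := Multiset.mem_map.1 hx
            rw [hL₀zero p hp, abs_zero]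
          have hsplitsum : (Multiset.map (fun p => |p.1 z|) L₁).sum
              + (Multiset.map (fun p => |p.1 z|) L₀).sum = cnt z := by
            have : cnt z = (Multiset.map (fun p => |p.1 z|) (L₁ + L₀)).sum := by
              rw [hLsplit]
            rw [this, Multiset.map_add, Multiset.sum_add]
          have hL₁sum : (Multiset.map (fun p => |p.1 z|) L₁).sum = 2 := by
            have h5 := hcnt2 z hz
            omega
          have hcard_le : (L₁.card : ℤ) ≤ 2 := by
            calc (L₁.card : ℤ) = (L₁.map (fun _ => (1:ℤ))).sum := by simp
            _ ≤ (L₁.map (fun p => |p.1 z|)).sum := by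
                apply Multiset.sum_map_le_sum_map
                intro p hp
                have h5 : p.1 z ≠ 0 := (Multiset.mem_filter.1 hp).2
                have := abs_pos.2 h5
                omega
            _ = 2 := hL₁sum
          have hL₁ne : L₁ ≠ 0 := by
            intro h
            rw [h] at hL₁sum
            simp at hL₁sum
          have hne2 : L₁.card ≠ 2 := hB z hz
          have hcard1 : L₁.card = 1 := by
            have h2 := Multiset.card_pos.2 hL₁ne
            omega
          obtain ⟨ρ, hρ⟩ := Multiset.card_eq_one.1 hcard1
          have hρL₁ : ρ ∈ L₁ := by rw [hρ]; exact Multiset.mem_singleton_self ρ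
          refine ⟨ρ, Multiset.mem_of_le (Multiset.filter_le _ L) hρL₁, ?_, ?_⟩
          · rw [hρ] at hL₁sum
            simpa using hL₁sum
          · intro p hp hpz
            have : p ∈ L₁ := Multiset.mem_filter.2 ⟨hp, hpz⟩
            rw [hρ] at this
            exact Multiset.mem_singleton.1 this
        obtain ⟨ρ, hρL, hρ2, hρuniq⟩ := hsingle v hv
        have hρv0 : ρ.1 v ≠ 0 := by
          intro h
          rw [h] at hρ2
          simp at hρ2
        -- all other coefficients of ρ vanish
        have hrow0 : ∀ v', v' ≠ v → ρ.1 v' = 0 := by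
          intro v' hne
          by_contra hnz
          have hvA' : v' ∈ A := by
            by_contra hvA'
            exact hnz (hsupp ρ hρL v' hvA')
          obtain ⟨σ, hσL, hσ2, hσuniq⟩ := hsingle v' hvA'
          have hρσ : ρ = σ := hσuniq ρ hρL hnz
          have habs2 : |ρ.1 v'| = 2 := by rw [hρσ]; exact hσ2
          -- kernel vector supported on {v, v'}
          set d : V → ℝ := fun t => if t = v then (ρ.1 v' : ℝ)
            else if t = v' then -(ρ.1 v : ℝ) else 0 with hddef
          have hrows : ∀ p ∈ L, rs p.1 d = 0 := by
            intro p hp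
            have hpair : rs p.1 d = (p.1 v : ℝ) * (ρ.1 v' : ℝ)
                + (p.1 v' : ℝ) * (-(ρ.1 v : ℝ)) := by
              rw [hddef]
              exact rs_pair p.1 v v' (Ne.symm hne) _ _
            by_cases hpv : p.1 v ≠ 0
            · have : p = ρ := hρuniq p hp hpv
              subst this
              rw [hpair]; ring
            · push_neg at hpv
              by_cases hpv' : p.1 v' ≠ 0
              · have : p = σ := hσuniq p hp hpv'
                rw [← hρσ] at this
                subst this
                exact absurd hpv hρv0
              · push_neg at hpv'
                rw [hpair, hpv, hpv']
                simp
          have hd0 := hrig d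
            (by
              intro t ht
              have h1 : t ≠ v := fun h => ht (h ▸ hv)
              have h2 : t ≠ v' := fun h => ht (h ▸ hvA')
              simp [hddef, h1, h2])
            hrows v
          rw [hddef] at hd0
          simp at hd0
          exact hnz (by exact_mod_cast hd0)
        -- ρ reads  ρ.1 v * w v = ρ.2  with  ρ.1 v = ±2  and  ρ.2 even
        have hrs : (ρ.1 v : ℝ) * w v = (ρ.2 : ℝ) := by
          have := hsol ρ hρL
          rw [rs] at this
          rw [← this]
          rw [Finset.sum_eq_single v]
          · intro b _ hb
            rw [hrow0 b hb]
            simp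
          · intro h
            exact absurd (Finset.mem_univ v) h
        obtain ⟨k, hk⟩ := heven ρ hρL
        rcases (abs_eq (by norm_num : (0:ℤ) ≤ 2)).1 hρ2 with h | h
        · refine ⟨k, ?_⟩
          rw [h, hk] at hrs
          push_cast at hrs
          linarith
        · refine ⟨-k, ?_⟩
          rw [h, hk] at hrs
          push_cast at hrs ⊢
          linarith

end Master

namespace MainAux

open HalfIntAux

/-- Finitely many affine constraints that hold at `t = 0`, with zero slope whenever
tight, continue to hold on a small symmetric interval. -/
lemma eps_helper {ι : Type*} [Fintype ι] (α β : ι → ℝ) (h0 : ∀ i, 0 ≤ α i)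
    (hz : ∀ i, α i = 0 → β i = 0) :
    ∃ ε : ℝ, 0 < ε ∧ ∀ t : ℝ, |t| ≤ ε → ∀ i, 0 ≤ α i + t * β i := by
  classical
  set U := Finset.univ.filter (fun i => β i ≠ 0) with hU
  by_cases hUe : U = ∅
  · refine ⟨1, one_pos, ?_⟩
    intro t _ i
    have hβ : β i = 0 := by
      by_contra h
      have : i ∈ U := Finset.mem_filter.2 ⟨Finset.mem_univ i, h⟩
      rw [hUe] at this
      simp at this
    rw [hβ]
    simpa using h0 i
  · have hUne : U.Nonempty := Finset.nonempty_iff_ne_empty.2 hUe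
    refine ⟨U.inf' hUne (fun i => α i / |β i|), ?_, ?_⟩
    · rw [Finset.lt_inf'_iff]
      intro i hi
      have hβ : β i ≠ 0 := (Finset.mem_filter.1 hi).2
      have hα : 0 < α i := by
        rcases lt_or_eq_of_le (h0 i) with h | h
        · exact h
        · exact absurd (hz i h.symm) hβ
      exact div_pos hα (abs_pos.2 hβ)
    · intro t ht i
      by_cases hβ : β i = 0
      · rw [hβ]
        simpa using h0 i
      · have hi : i ∈ U := Finset.mem_filter.2 ⟨Finset.mem_univ i, hβ⟩
        have hεle := Finset.inf'_le (fun i => α i / |β i|) hi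
        have h2 : |t| * |β i| ≤ α i := by
          have h3 : |t| ≤ α i / |β i| := le_trans ht hεle
          calc |t| * |β i| ≤ (α i / |β i|) * |β i| :=
                mul_le_mul_of_nonneg_right h3 (abs_nonneg _)
          _ = α i := div_mul_cancel₀ _ (abs_ne_zero.2 hβ)
        have h4 : -(t * β i) ≤ |t * β i| := neg_le_abs _
        rw [abs_mul] at h4
        linarith
/-- Split a sum over a fintype according to three mutually exclusive predicates
outside of which the function vanishes. -/
lemma sum_split3 {ι : Type*} [Fintype ι] (P Q R : ι → Prop)
    [DecidablePred P] [DecidablePred Q] [DecidablePred R]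
    (hQP : ∀ i, Q i → ¬ P i) (hRP : ∀ i, R i → ¬ P i) (hRQ : ∀ i, R i → ¬ Q i)
    (F : ι → ℝ) (h0 : ∀ i, ¬ P i → ¬ Q i → ¬ R i → F i = 0) :
    ∑ i, F i = ∑ i ∈ Finset.univ.filter P, F i + ∑ i ∈ Finset.univ.filter Q, F i
      + ∑ i ∈ Finset.univ.filter R, F i := by
  have h1 := Finset.sum_filter_add_sum_filter_not Finset.univ P F
  have e2 : (Finset.univ.filter (fun i => ¬ P i)).filter Q = Finset.univ.filter Q := by
    ext i
    simp only [Finset.mem_filter, Finset.mem_univ, true_and]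
    exact ⟨fun h => h.2, fun h => ⟨hQP i h, h⟩⟩
  have h2 := Finset.sum_filter_add_sum_filter_not (Finset.univ.filter (fun i => ¬ P i)) Q F
  rw [e2] at h2
  have e3 : ((Finset.univ.filter (fun i => ¬ P i)).filter (fun i => ¬ Q i)).filter R
      = Finset.univ.filter R := by
    ext i
    simp only [Finset.mem_filter, Finset.mem_univ, true_and]
    exact ⟨fun h => h.2, fun h => ⟨⟨hRP i h, hRQ i h⟩, h⟩⟩
  have h3 := Finset.sum_filter_add_sum_filter_not
    ((Finset.univ.filter (fun i => ¬ P i)).filter (fun i => ¬ Q i)) R F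
  rw [e3] at h3
  have h4 : ∑ i ∈ ((Finset.univ.filter (fun i => ¬ P i)).filter (fun i => ¬ Q i)).filter
      (fun i => ¬ R i), F i = 0 := by
    apply Finset.sum_eq_zero
    intro i hi
    have m1 := Finset.mem_filter.1 hi
    have m2 := Finset.mem_filter.1 m1.1
    have m3 := Finset.mem_filter.1 m2.1
    exact h0 i m3.2 m2.2 m1.2
  rw [h4] at h3
  linarith

lemma ite_sum {ι : Type*} [Fintype ι] (P : ι → Prop) [DecidablePred P] (g : ι → ℝ) :
    ∑ i, (((if P i then (1:ℤ) else 0) : ℤ) : ℝ) * g i = ∑ i ∈ Finset.univ.filter P, g i := by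
  rw [Finset.sum_filter]
  apply Finset.sum_congr rfl
  intro i _
  split_ifs <;> simp

lemma sum_par {ι : Type*} [Fintype ι] (t : ℝ) (b c : ι → ℝ) :
    (∑ i, (b i + t * c i)^2) + (∑ i, (b i + -t * c i)^2)
      = 2*(∑ i, (b i)^2) + 2*(∑ i, (t * c i)^2) := by
  rw [← Finset.sum_add_distrib, Finset.mul_sum, Finset.mul_sum, ← Finset.sum_add_distrib]
  exact Finset.sum_congr rfl fun i _ => by ring

lemma sum_par2 {ι κ : Type*} [Fintype ι] [Fintype κ] (t : ℝ) (b c : ι → κ → ℝ) :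
    (∑ i, ∑ k, (b i k + t * c i k)^2) + (∑ i, ∑ k, (b i k + -t * c i k)^2)
      = 2*(∑ i, ∑ k, (b i k)^2) + 2*(∑ i, ∑ k, (t * c i k)^2) := by
  rw [← Finset.sum_add_distrib, Finset.mul_sum, Finset.mul_sum, ← Finset.sum_add_distrib]
  exact Finset.sum_congr rfl fun i _ => sum_par t _ _

end MainAux

set_option maxHeartbeats 1600000 in
open HalfIntAux MainAux in
theorem half_integral_main
    {J S : Type*} [Fintype J] [Fintype S]
    (T : J → Finset S) (len : J → ℕ) (hlen : ∀ j, 0 < len j)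
    (hex : ∃ (x : J → S → ℝ) (a : S → ℝ), IsFracSchedule 2 T len x a) :
    ∃ (x : J → S → ℝ) (a : S → ℝ), IsFracSchedule 2 T len x a ∧
      (∀ (x' : J → S → ℝ) (a' : S → ℝ), IsFracSchedule 2 T len x' a' →
        ∑ s, a s ≤ ∑ s, a' s) ∧
      (∀ j s, x j s = 0 ∨ x j s = 1 / 2 ∨ x j s = 1) ∧
      (∀ s, a s = 0 ∨ a s = 1 / 2 ∨ a s = 1) := by
  classical
  set F : Set ((J → S → ℝ) × (S → ℝ)) := {p | IsFracSchedule 2 T len p.1 p.2} with hFdef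
  have c_x : ∀ (j : J) (s : S), Continuous fun p : (J → S → ℝ) × (S → ℝ) => p.1 j s :=
    fun j s => (continuous_apply s).comp ((continuous_apply j).comp continuous_fst)
  have c_a : ∀ s : S, Continuous fun p : (J → S → ℝ) × (S → ℝ) => p.2 s :=
    fun s => (continuous_apply s).comp continuous_snd
  have c_sumJ : ∀ s : S, Continuous fun p : (J → S → ℝ) × (S → ℝ) => ∑ j, p.1 j s :=
    fun s => continuous_finset_sum _ (fun j _ => c_x j s)
  have c_sumS : ∀ j : J, Continuous fun p : (J → S → ℝ) × (S → ℝ) => ∑ s, p.1 j s :=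
    fun j => continuous_finset_sum _ (fun s _ => c_x j s)
  have c_asum : Continuous fun p : (J → S → ℝ) × (S → ℝ) => ∑ s, p.2 s :=
    continuous_finset_sum _ (fun s _ => c_a s)
  have hFclosed : IsClosed F := by
    have hFeq : F = (⋂ (j : J), ⋂ (s : S), {p : (J → S → ℝ) × (S → ℝ) | 0 ≤ p.1 j s})
        ∩ ((⋂ (s : S), {p : (J → S → ℝ) × (S → ℝ) | 0 ≤ p.2 s})
        ∩ ((⋂ (s : S), {p : (J → S → ℝ) × (S → ℝ) | p.2 s ≤ 1})
        ∩ ((⋂ (j : J), ⋂ (s : S), {p : (J → S → ℝ) × (S → ℝ) | s ∉ T j → p.1 j s = 0})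
        ∩ ((⋂ (j : J), {p : (J → S → ℝ) × (S → ℝ) | ∑ s, p.1 j s = (len j : ℝ)})
        ∩ ((⋂ (j : J), ⋂ (s : S), {p : (J → S → ℝ) × (S → ℝ) | p.1 j s ≤ p.2 s})
        ∩ (⋂ (s : S), {p : (J → S → ℝ) × (S → ℝ) |
            ∑ j, p.1 j s ≤ ((2:ℕ) : ℝ) * p.2 s})))))) := by
      ext p
      simp only [hFdef, Set.mem_setOf_eq, Set.mem_inter_iff, Set.mem_iInter,
        IsFracSchedule]
      constructor
      · rintro ⟨h1, h2, h3, h4, h5, h6⟩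
        exact ⟨h1, fun s => (h2 s).1, fun s => (h2 s).2, h3, h4, h5, h6⟩
      · rintro ⟨h1, h2a, h2b, h3, h4, h5, h6⟩
        exact ⟨h1, fun s => ⟨h2a s, h2b s⟩, h3, h4, h5, h6⟩
    rw [hFeq]
    refine (isClosed_iInter fun j => isClosed_iInter fun s =>
        isClosed_le continuous_const (c_x j s)).inter ?_
    refine (isClosed_iInter fun s => isClosed_le continuous_const (c_a s)).inter ?_
    refine (isClosed_iInter fun s => isClosed_le (c_a s) continuous_const).inter ?_
    refine (isClosed_iInter fun j => isClosed_iInter fun s => ?_).inter ?_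
    · by_cases h : s ∈ T j
      · have : {p : (J → S → ℝ) × (S → ℝ) | s ∉ T j → p.1 j s = 0} = Set.univ := by
          ext p
          simp [h]
        rw [this]
        exact isClosed_univ
      · have : {p : (J → S → ℝ) × (S → ℝ) | s ∉ T j → p.1 j s = 0}
            = {p | p.1 j s = 0} := by
          ext p
          simp [h]
        rw [this]
        exact isClosed_eq (c_x j s) continuous_const
    refine (isClosed_iInter fun j => isClosed_eq (c_sumS j) continuous_const).inter ?_
    refine (isClosed_iInter fun j => isClosed_iInter fun s =>
        isClosed_le (c_x j s) (c_a s)).inter ?_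
    exact isClosed_iInter fun s => isClosed_le (c_sumJ s) (continuous_const.mul (c_a s))
  have hFcompact : IsCompact F := by
    have hK : IsCompact ((Set.pi Set.univ fun _ : J => Set.pi Set.univ fun _ : S =>
        Set.Icc (0:ℝ) 1) ×ˢ (Set.pi Set.univ fun _ : S => Set.Icc (0:ℝ) 1)) :=
      (isCompact_univ_pi fun _ => isCompact_univ_pi fun _ => isCompact_Icc).prod
        (isCompact_univ_pi fun _ => isCompact_Icc)
    apply hK.of_isClosed_subset hFclosed
    rintro ⟨x, a⟩ hp
    obtain ⟨h1, h2, _, _, h5, _⟩ := hp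
    constructor
    · intro j _
      intro s _
      exact ⟨h1 j s, le_trans (h5 j s) (h2 s).2⟩
    · intro s _
      exact ⟨(h2 s).1, (h2 s).2⟩
  have hFne : F.Nonempty := by
    obtain ⟨x0, a0, h0⟩ := hex
    exact ⟨(x0, a0), h0⟩
  obtain ⟨z0, hz0F, hz0min⟩ := hFcompact.exists_isMinOn hFne c_asum.continuousOn
  set m : ℝ := ∑ s, z0.2 s with hmdef
  set P : Set ((J → S → ℝ) × (S → ℝ)) := F ∩ {p | ∑ s, p.2 s = m} with hPdef
  have hPcompact : IsCompact P := hFcompact.inter_right (isClosed_eq c_asum continuous_const)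
  have hPne : P.Nonempty := ⟨z0, hz0F, rfl⟩
  have hqcont : Continuous fun p : (J → S → ℝ) × (S → ℝ) =>
      (∑ j, ∑ s, (p.1 j s)^2) + ∑ s, (p.2 s)^2 :=
    ((continuous_finset_sum _ fun j _ => continuous_finset_sum _ fun s _ =>
      (c_x j s).pow 2)).add (continuous_finset_sum _ fun s _ => (c_a s).pow 2)
  obtain ⟨z, hzP, hzmax⟩ := hPcompact.exists_isMaxOn hPne hqcont.continuousOn
  obtain ⟨x, a⟩ := z
  have hzF : IsFracSchedule 2 T len x a := hzP.1
  have hm : ∑ s, a s = m := hzP.2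
  have hmin : ∀ (x' : J → S → ℝ) (a' : S → ℝ), IsFracSchedule 2 T len x' a' →
      m ≤ ∑ s, a' s := by
    intro x' a' h'
    exact isMinOn_iff.1 hz0min (x', a') h'
  have hmax : ∀ p ∈ P, (∑ j, ∑ s, (p.1 j s)^2) + ∑ s, (p.2 s)^2
      ≤ (∑ j, ∑ s, (x j s)^2) + ∑ s, (a s)^2 := by
    intro p hp
    exact isMaxOn_iff.1 hzmax p hp
  obtain ⟨hx0, ha01, hxT, hxsum, hxa, hload⟩ := id hzF
  have hload' : ∀ s, ∑ j, x j s ≤ 2 * a s := by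
    intro s
    have := hload s
    push_cast at this
    linarith
  -- rigidity of the chosen point: any direction preserving the tight constraints
  -- to first order must vanish
  have hrigid : ∀ (dx : J → S → ℝ) (da : S → ℝ),
      (∀ j s, x j s = 0 → dx j s = 0) →
      (∀ s, ¬(0 < a s ∧ a s < 1) → da s = 0) →
      (∀ j s, x j s = a s → dx j s = da s) →
      (∀ j, ∑ s, dx j s = 0) →
      (∀ s, ∑ j, x j s = 2 * a s → ∑ j, dx j s = 2 * da s) →
      (∀ j s, dx j s = 0) ∧ (∀ s, da s = 0) := by
    intro dx da hR1 hR2 hR3 hR4 hR5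
    obtain ⟨ε1, hε1, h1⟩ := eps_helper (fun e : J × S => x e.1 e.2)
      (fun e => dx e.1 e.2) (fun e => hx0 e.1 e.2) (fun e he => hR1 e.1 e.2 he)
    obtain ⟨ε2, hε2, h2⟩ := eps_helper (fun s : S => a s) (fun s => da s)
      (fun s => (ha01 s).1)
      (fun s hs => by
        have hs' : a s = 0 := hs
        exact hR2 s (by rw [hs']; rintro ⟨hlt, _⟩; exact lt_irrefl 0 hlt))
    obtain ⟨ε3, hε3, h3⟩ := eps_helper (fun s : S => 1 - a s) (fun s => -da s)
      (fun s => by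
        show (0:ℝ) ≤ 1 - a s
        linarith [(ha01 s).2])
      (fun s hs => by
        have hs' : (1:ℝ) - a s = 0 := hs
        have ha1 : a s = 1 := by linarith
        show -da s = 0
        rw [hR2 s (by rw [ha1]; rintro ⟨_, hlt⟩; exact lt_irrefl 1 hlt)]
        ring)
    obtain ⟨ε4, hε4, h4⟩ := eps_helper (fun e : J × S => a e.2 - x e.1 e.2)
      (fun e => da e.2 - dx e.1 e.2)
      (fun e => by
        show (0:ℝ) ≤ a e.2 - x e.1 e.2
        linarith [hxa e.1 e.2])
      (fun e he => by
        have he' : a e.2 - x e.1 e.2 = 0 := he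
        have : x e.1 e.2 = a e.2 := by linarith
        show da e.2 - dx e.1 e.2 = 0
        rw [hR3 e.1 e.2 this]
        ring)
    obtain ⟨ε5, hε5, h5⟩ := eps_helper (fun s : S => 2 * a s - ∑ j, x j s)
      (fun s => 2 * da s - ∑ j, dx j s)
      (fun s => by
        show (0:ℝ) ≤ 2 * a s - ∑ j, x j s
        linarith [hload' s])
      (fun s hs => by
        have hs' : 2 * a s - ∑ j, x j s = 0 := hs
        have : ∑ j, x j s = 2 * a s := by linarith
        show 2 * da s - ∑ j, dx j s = 0
        rw [hR5 s this]
        ring)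
    set ε : ℝ := min ε1 (min ε2 (min ε3 (min ε4 ε5))) with hεdef
    have hεpos : 0 < ε := by
      simp only [hεdef, lt_min_iff]
      exact ⟨hε1, hε2, hε3, hε4, hε5⟩
    have hεle1 : ε ≤ ε1 := min_le_left _ _
    have hεle2 : ε ≤ ε2 := le_trans (min_le_right _ _) (min_le_left _ _)
    have hεle3 : ε ≤ ε3 := le_trans (min_le_right _ _)
      (le_trans (min_le_right _ _) (min_le_left _ _))
    have hεle4 : ε ≤ ε4 := le_trans (min_le_right _ _)
      (le_trans (min_le_right _ _) (le_trans (min_le_right _ _) (min_le_left _ _)))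
    have hεle5 : ε ≤ ε5 := le_trans (min_le_right _ _)
      (le_trans (min_le_right _ _) (le_trans (min_le_right _ _) (min_le_right _ _)))
    -- membership of the perturbed points in F
    have hmem : ∀ t : ℝ, |t| ≤ ε →
        ((fun j s => x j s + t * dx j s, fun s => a s + t * da s) :
          (J → S → ℝ) × (S → ℝ)) ∈ F := by
      intro t ht
      refine ⟨?_, ?_, ?_, ?_, ?_, ?_⟩
      · intro j s
        exact h1 t (le_trans ht hεle1) (j, s)
      · intro s
        refine ⟨h2 t (le_trans ht hεle2) s, ?_⟩
        have h3' : (0:ℝ) ≤ 1 - a s + t * -da s := h3 t (le_trans ht hεle3) s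
        show a s + t * da s ≤ 1
        nlinarith [h3']
      · intro j s hs
        show x j s + t * dx j s = 0
        rw [hxT j s hs, hR1 j s (hxT j s hs)]
        ring
      · intro j
        show ∑ s, (x j s + t * dx j s) = (len j : ℝ)
        rw [Finset.sum_add_distrib, ← Finset.mul_sum, hxsum j, hR4 j]
        ring
      · intro j s
        have h4' : (0:ℝ) ≤ a s - x j s + t * (da s - dx j s) :=
          h4 t (le_trans ht hεle4) (j, s)
        show x j s + t * dx j s ≤ a s + t * da s
        nlinarith [h4']
      · intro s
        have h5' : (0:ℝ) ≤ 2 * a s - (∑ j, x j s) + t * (2 * da s - ∑ j, dx j s) :=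
          h5 t (le_trans ht hεle5) s
        show ∑ j, (x j s + t * dx j s) ≤ ((2:ℕ) : ℝ) * (a s + t * da s)
        rw [Finset.sum_add_distrib, ← Finset.mul_sum]
        push_cast
        nlinarith [h5']
    have habs : |ε| ≤ ε := by rw [abs_of_pos hεpos]
    have habs' : |(-ε)| ≤ ε := by rw [abs_neg, abs_of_pos hεpos]
    have hFp := hmem ε habs
    have hFm := hmem (-ε) habs'
    -- the total activity change vanishes, so both perturbed points are optimal
    have hsump : ∑ s, (a s + ε * da s) = m + ε * ∑ s, da s := by
      rw [Finset.sum_add_distrib, ← Finset.mul_sum, hm]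
    have hsumm : ∑ s, (a s + (-ε) * da s) = m + (-ε) * ∑ s, da s := by
      rw [Finset.sum_add_distrib, ← Finset.mul_sum, hm]
    have hda0 : ∑ s, da s = 0 := by
      have hp := hmin _ _ hFp
      have hm2 := hmin _ _ hFm
      rw [hsump] at hp
      rw [hsumm] at hm2
      by_contra hne
      rcases lt_or_gt_of_ne hne with h | h
      · nlinarith
      · nlinarith
    have hPp : ((fun j s => x j s + ε * dx j s, fun s => a s + ε * da s) :
        (J → S → ℝ) × (S → ℝ)) ∈ P := ⟨hFp, by simp only [Set.mem_setOf_eq]; rw [hsump, hda0]; ring⟩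
    have hPm : ((fun j s => x j s + (-ε) * dx j s, fun s => a s + (-ε) * da s) :
        (J → S → ℝ) × (S → ℝ)) ∈ P := ⟨hFm, by simp only [Set.mem_setOf_eq]; rw [hsumm, hda0]; ring⟩
    have hqp := hmax _ hPp
    have hqm := hmax _ hPm
    simp only at hqp hqm
    -- parallelogram identity
    have keyx := sum_par2 ε (fun j s => x j s) (fun j s => dx j s)
    have keya := sum_par ε a da
    have hE : (∑ j, ∑ s, (ε * dx j s)^2) + (∑ s, (ε * da s)^2) ≤ 0 := by nlinarith
    have hEx : ∑ j, ∑ s, (ε * dx j s)^2 = 0 := by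
      have h6 : (0:ℝ) ≤ ∑ j, ∑ s, (ε * dx j s)^2 :=
        Finset.sum_nonneg fun j _ => Finset.sum_nonneg fun s _ => sq_nonneg _
      have h7 : (0:ℝ) ≤ ∑ s, (ε * da s)^2 :=
        Finset.sum_nonneg fun s _ => sq_nonneg _
      linarith
    have hEa : ∑ s, (ε * da s)^2 = 0 := by
      have h6 : (0:ℝ) ≤ ∑ j, ∑ s, (ε * dx j s)^2 :=
        Finset.sum_nonneg fun j _ => Finset.sum_nonneg fun s _ => sq_nonneg _
      have h7 : (0:ℝ) ≤ ∑ s, (ε * da s)^2 :=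
        Finset.sum_nonneg fun s _ => sq_nonneg _
      linarith
    constructor
    · intro j s
      have h8 := (Finset.sum_eq_zero_iff_of_nonneg
        (fun j _ => Finset.sum_nonneg fun s _ => sq_nonneg (ε * dx j s))).1 hEx j
        (Finset.mem_univ j)
      have h9 := (Finset.sum_eq_zero_iff_of_nonneg
        (fun s _ => sq_nonneg (ε * dx j s))).1 h8 s (Finset.mem_univ s)
      have h10 : ε * dx j s = 0 := by
        have := sq_eq_zero_iff.1 h9
        exact this
      rcases mul_eq_zero.1 h10 with h | h
      · exact absurd h (ne_of_gt hεpos)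
      · exact h
    · intro s
      have h9 := (Finset.sum_eq_zero_iff_of_nonneg
        (fun s _ => sq_nonneg (ε * da s))).1 hEa s (Finset.mem_univ s)
      have h10 : ε * da s = 0 := sq_eq_zero_iff.1 h9
      rcases mul_eq_zero.1 h10 with h | h
      · exact absurd h (ne_of_gt hεpos)
      · exact h
  -- === the tight linear system at the chosen point ===
  set Fr : J × S → Prop := fun e => 0 < x e.1 e.2 ∧ x e.1 e.2 < a e.2 with hFrDef
  set SI : J × S → Prop := fun e => x e.1 e.2 = a e.2 ∧ 0 < a e.2 ∧ a e.2 < 1 with hSIDef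
  set SB : J × S → Prop := fun e => x e.1 e.2 = 1 ∧ a e.2 = 1 with hSBDef
  set Itr : S → Prop := fun s => 0 < a s ∧ a s < 1 with hItrDef
  set Tgt : S → Prop := fun s => ∑ j, x j s = 2 * a s with hTgtDef
  set ksat : S → ℕ := fun s => (univ.filter (fun j => SI (j, s))).card with hksatDef
  set kbS : S → ℕ := fun s => (univ.filter (fun j => SB (j, s))).card with hkbSDef
  set kbJ : J → ℕ := fun j => (univ.filter (fun s => SB (j, s))).card with hkbJDef
  set jc : J → ((J × S) ⊕ S → ℤ) := fun j v => Sum.elim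
    (fun e => if e.1 = j ∧ Fr e then 1 else 0)
    (fun s => if SI (j, s) then 1 else 0) v with hjcDef
  set jr : J → ℤ := fun j => 2 * (len j : ℤ) - 2 * (kbJ j : ℤ) with hjrDef
  set sc : S → ((J × S) ⊕ S → ℤ) := fun s v => Sum.elim
    (fun e => if e.2 = s ∧ Fr e then 1 else 0)
    (fun s' => if s' = s ∧ Itr s then -(2 - (ksat s : ℤ)) else 0) v with hscDef
  set sr : S → ℤ := fun s => if Itr s then 0
    else (if a s = 1 then 4 - 2 * (kbS s : ℤ) else 0) with hsrDef
  set Lsys : Multiset (((J × S) ⊕ S → ℤ) × ℤ) :=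
    (univ.val.map fun j : J => (jc j, jr j))
      + ((univ.filter Tgt).val.map fun s : S => (sc s, sr s)) with hLsysDef
  set Aset : Finset ((J × S) ⊕ S) :=
    univ.filter (fun v => Sum.elim (fun e => Fr e) (fun s => Itr s) v) with hAsetDef
  set wsol : (J × S) ⊕ S → ℝ :=
    Sum.elim (fun e => 2 * x e.1 e.2) (fun s => 2 * a s) with hwsolDef
  -- basic classification facts
  have exclIF : ∀ e : J × S, SI e → ¬ Fr e := by
    rintro e ⟨heq, _⟩ ⟨_, hlt⟩
    rw [heq] at hlt
    exact lt_irrefl _ hlt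
  have exclBF : ∀ e : J × S, SB e → ¬ Fr e := by
    rintro e ⟨hx1, ha1⟩ ⟨_, hlt⟩
    rw [hx1, ha1] at hlt
    exact lt_irrefl _ hlt
  have exclBI : ∀ e : J × S, SB e → ¬ SI e := by
    rintro e ⟨_, ha1⟩ ⟨_, _, hlt⟩
    rw [ha1] at hlt
    exact lt_irrefl _ hlt
  have hSIItr : ∀ e : J × S, SI e → Itr e.2 := fun e h => h.2
  have hclass : ∀ e : J × S, ¬ Fr e → ¬ SI e → ¬ SB e → x e.1 e.2 = 0 := by
    rintro ⟨j, s⟩ hf hi hb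
    by_contra hne
    have hpos : 0 < x j s := lt_of_le_of_ne (hx0 j s) (Ne.symm hne)
    rcases lt_or_eq_of_le (hxa j s) with hlt | heq
    · exact hf ⟨hpos, hlt⟩
    · rcases lt_or_eq_of_le (ha01 s).2 with hlt1 | heq1
      · exact hi ⟨heq, lt_of_lt_of_le hpos (le_of_eq heq), hlt1⟩
      · exact hb ⟨by rw [heq, heq1], heq1⟩
  have hksat2 : ∀ s, Itr s → (ksat s : ℤ) ≤ 2 := by
    intro s hs
    by_contra hgt
    push_neg at hgt
    have h3 : 2 < ksat s := by exact_mod_cast hgt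
    obtain ⟨j1, j2, j3, hj1, hj2, hj3, h12, h13, h23⟩ := Finset.two_lt_card_iff.1 h3
    have e1 : x j1 s = a s := (Finset.mem_filter.1 hj1).2.1
    have e2 : x j2 s = a s := (Finset.mem_filter.1 hj2).2.1
    have e3 : x j3 s = a s := (Finset.mem_filter.1 hj3).2.1
    have hsub : ({j1, j2, j3} : Finset J) ⊆ univ := Finset.subset_univ _
    have hsum3 : ∑ j ∈ ({j1, j2, j3} : Finset J), x j s = 3 * a s := by
      rw [Finset.sum_insert (by simp [h12, h13]), Finset.sum_insert (by simp [h23]),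
        Finset.sum_singleton, e1, e2, e3]
      ring
    have hle : ∑ j ∈ ({j1, j2, j3} : Finset J), x j s ≤ ∑ j, x j s :=
      Finset.sum_le_sum_of_subset_of_nonneg hsub (fun j _ _ => hx0 j s)
    have := hload' s
    rw [hsum3] at hle
    have : a s ≤ 0 := by linarith
    exact absurd hs.1 (not_lt.2 this)
  -- row sums of the two kinds of rows
  have rs_job : ∀ (j : J) (g : (J × S) ⊕ S → ℝ), rs (jc j) g
      = (∑ s ∈ univ.filter (fun s => Fr (j, s)), g (Sum.inl (j, s)))
        + ∑ s ∈ univ.filter (fun s => SI (j, s)), g (Sum.inr s) := by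
    intro j g
    rw [rs_def, Fintype.sum_sum_type]
    congr 1
    · rw [Fintype.sum_prod_type]
      rw [Finset.sum_eq_single j]
      · rw [← ite_sum (fun s => Fr (j, s)) (fun s => g (Sum.inl (j, s)))]
        apply Finset.sum_congr rfl
        intro s _
        simp only [hjcDef, Sum.elim_inl]
        congr 1
        simp
      · intro b _ hb
        apply Finset.sum_eq_zero
        intro s _
        simp only [hjcDef, Sum.elim_inl]
        rw [if_neg (by simp [hb])]
        simp
      · intro h
        exact absurd (Finset.mem_univ j) h
    · rw [← ite_sum (fun s => SI (j, s)) (fun s => g (Sum.inr s))]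
      apply Finset.sum_congr rfl
      intro s _
      simp only [hjcDef, Sum.elim_inr]
  have rs_slot : ∀ (s : S) (g : (J × S) ⊕ S → ℝ), rs (sc s) g
      = (∑ j ∈ univ.filter (fun j => Fr (j, s)), g (Sum.inl (j, s)))
        + (if Itr s then (-(2 - (ksat s : ℤ)) : ℝ) * g (Sum.inr s) else 0) := by
    intro s g
    rw [rs_def, Fintype.sum_sum_type]
    congr 1
    · rw [Fintype.sum_prod_type, Finset.sum_comm]
      rw [Finset.sum_eq_single s]
      · rw [← ite_sum (fun j => Fr (j, s)) (fun j => g (Sum.inl (j, s)))]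
        apply Finset.sum_congr rfl
        intro j _
        simp only [hscDef, Sum.elim_inl]
        congr 1
        simp
      · intro b _ hb
        apply Finset.sum_eq_zero
        intro j _
        simp only [hscDef, Sum.elim_inl]
        rw [if_neg (by simp [hb])]
        simp
      · intro h
        exact absurd (Finset.mem_univ s) h
    · rw [Finset.sum_eq_single s]
      · simp only [hscDef, Sum.elim_inr]
        by_cases h : Itr s
        · rw [if_pos ⟨trivial, h⟩, if_pos h]
          push_cast
          ring
        · rw [if_neg (fun hc => h hc.2), if_neg h]
          simp
      · intro b _ hb
        simp only [hscDef, Sum.elim_inr]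
        rw [if_neg (by intro hc; exact hb hc.1)]
        simp
      · intro h
        exact absurd (Finset.mem_univ s) h
  -- membership facts for rows
  have hjobmem : ∀ j : J, (jc j, jr j) ∈ Lsys := by
    intro j
    rw [hLsysDef]
    apply Multiset.mem_add.2
    left
    exact Multiset.mem_map_of_mem _ (Finset.mem_univ j)
  have hslotmem : ∀ s : S, Tgt s → (sc s, sr s) ∈ Lsys := by
    intro s hs
    rw [hLsysDef]
    apply Multiset.mem_add.2
    right
    exact Multiset.mem_map_of_mem _ (Finset.mem_filter.2 ⟨Finset.mem_univ s, hs⟩)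
  have hrowform : ∀ p ∈ Lsys, (∃ j, p = (jc j, jr j)) ∨ ∃ s, Tgt s ∧ p = (sc s, sr s) := by
    intro p hp
    rw [hLsysDef] at hp
    rcases Multiset.mem_add.1 hp with h | h
    · obtain ⟨j, _, hj⟩ := Multiset.mem_map.1 h
      exact Or.inl ⟨j, hj.symm⟩
    · obtain ⟨s, hsmem, hsp⟩ := Multiset.mem_map.1 h
      have : Tgt s := (Finset.mem_filter.1 hsmem).2
      exact Or.inr ⟨s, this, hsp.symm⟩
  -- the partition computations used for the solution property
  have hsplitJ : ∀ (j : J) (G : S → ℝ),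
      (∀ s, ¬ Fr (j, s) → ¬ SI (j, s) → ¬ SB (j, s) → G s = 0) →
      ∑ s, G s = ∑ s ∈ univ.filter (fun s => Fr (j, s)), G s
        + ∑ s ∈ univ.filter (fun s => SI (j, s)), G s
        + ∑ s ∈ univ.filter (fun s => SB (j, s)), G s := by
    intro j G h0
    exact sum_split3 _ _ _ (fun s => exclIF (j, s)) (fun s => exclBF (j, s))
      (fun s => exclBI (j, s)) G h0
  have hsplitS : ∀ (s : S) (G : J → ℝ),
      (∀ j, ¬ Fr (j, s) → ¬ SI (j, s) → ¬ SB (j, s) → G j = 0) →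
      ∑ j, G j = ∑ j ∈ univ.filter (fun j => Fr (j, s)), G j
        + ∑ j ∈ univ.filter (fun j => SI (j, s)), G j
        + ∑ j ∈ univ.filter (fun j => SB (j, s)), G j := by
    intro s G h0
    exact sum_split3 _ _ _ (fun j => exclIF (j, s)) (fun j => exclBF (j, s))
      (fun j => exclBI (j, s)) G h0
  -- master lemma hypotheses
  have hsupp : ∀ p ∈ Lsys, ∀ v, v ∉ Aset → p.1 v = 0 := by
    intro p hp v hv
    have hvA : ¬ Sum.elim (fun e => Fr e) (fun s => Itr s) v := by
      intro h
      exact hv (Finset.mem_filter.2 ⟨Finset.mem_univ v, h⟩)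
    rcases hrowform p hp with ⟨j, rfl⟩ | ⟨s, _, rfl⟩
    · cases v with
      | inl e =>
        simp only [Sum.elim_inl] at hvA
        simp only [hjcDef, Sum.elim_inl]
        rw [if_neg (by intro hc; exact hvA hc.2)]
      | inr s =>
        simp only [Sum.elim_inr] at hvA
        simp only [hjcDef, Sum.elim_inr]
        rw [if_neg (by intro hc; exact hvA (hSIItr _ hc))]
    · cases v with
      | inl e =>
        simp only [Sum.elim_inl] at hvA
        simp only [hscDef, Sum.elim_inl]
        rw [if_neg (by intro hc; exact hvA hc.2)]
      | inr s' =>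
        simp only [Sum.elim_inr] at hvA
        simp only [hscDef, Sum.elim_inr]
        by_cases hss : s' = s
        · subst hss
          rw [if_neg (by intro hc; exact hvA hc.2)]
        · rw [if_neg (by intro hc; exact hss hc.1)]
  have hcntsplit : ∀ v : (J × S) ⊕ S, (Lsys.map (fun p => |p.1 v|)).sum
      = (∑ j, |jc j v|) + ∑ s ∈ univ.filter Tgt, |sc s v| := by
    intro v
    rw [hLsysDef, Multiset.map_add, Multiset.sum_add]
    congr 1
    · rw [Multiset.map_map]
      rfl
    · rw [Multiset.map_map]
      rfl
  have hocc : ∀ v ∈ Aset, (Lsys.map (fun p => |p.1 v|)).sum ≤ 2 := by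
    intro v hv
    have hvP : Sum.elim (fun e => Fr e) (fun s => Itr s) v := (Finset.mem_filter.1 hv).2
    rw [hcntsplit v]
    cases v with
    | inl e =>
      simp only [Sum.elim_inl] at hvP
      have hjob : (∑ j, |jc j (Sum.inl e)|) = 1 := by
        rw [Finset.sum_eq_single e.1]
        · simp only [hjcDef, Sum.elim_inl]
          rw [if_pos ⟨by trivial, hvP⟩]
          simp
        · intro b _ hb
          simp only [hjcDef, Sum.elim_inl]
          rw [if_neg (fun hc => hb (hc.1.symm))]
          simp
        · intro h
          exact absurd (Finset.mem_univ _) h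
      have hslot : (∑ s' ∈ univ.filter Tgt, |sc s' (Sum.inl e)|) ≤ 1 := by
        calc ∑ s' ∈ univ.filter Tgt, |sc s' (Sum.inl e)| ≤ ∑ s' : S, |sc s' (Sum.inl e)| :=
            Finset.sum_le_sum_of_subset_of_nonneg (Finset.filter_subset _ _)
              (fun i _ _ => abs_nonneg _)
        _ = 1 := by
            rw [Finset.sum_eq_single e.2]
            · simp only [hscDef, Sum.elim_inl]
              rw [if_pos ⟨by trivial, hvP⟩]
              simp
            · intro b _ hb
              simp only [hscDef, Sum.elim_inl]
              rw [if_neg (fun hc => hb (hc.1.symm))]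
              simp
            · intro h
              exact absurd (Finset.mem_univ _) h
      omega
    | inr s =>
      simp only [Sum.elim_inr] at hvP
      have hjob : (∑ j, |jc j (Sum.inr s)|) = (ksat s : ℤ) := by
        have hterm : ∀ j, |jc j (Sum.inr s)| = if SI (j, s) then (1:ℤ) else 0 := by
          intro j
          simp only [hjcDef, Sum.elim_inr]
          split_ifs <;> simp
        rw [Finset.sum_congr rfl (fun j _ => hterm j), Finset.sum_boole]
      have hk2 := hksat2 s hvP
      have hslot : (∑ s' ∈ univ.filter Tgt, |sc s' (Sum.inr s)|) ≤ 2 - (ksat s : ℤ) := by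
        calc ∑ s' ∈ univ.filter Tgt, |sc s' (Sum.inr s)| ≤ ∑ s' : S, |sc s' (Sum.inr s)| :=
            Finset.sum_le_sum_of_subset_of_nonneg (Finset.filter_subset _ _)
              (fun i _ _ => abs_nonneg _)
        _ = 2 - (ksat s : ℤ) := by
            rw [Finset.sum_eq_single s]
            · simp only [hscDef, Sum.elim_inr]
              rw [if_pos ⟨by trivial, hvP⟩, abs_neg,
                abs_of_nonneg (by omega : (0:ℤ) ≤ 2 - (ksat s : ℤ))]
            · intro b _ hb
              simp only [hscDef, Sum.elim_inr]
              rw [if_neg (fun hc => hb hc.1.symm)]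
              simp
            · intro h
              exact absurd (Finset.mem_univ _) h
      omega
  have heven : ∀ p ∈ Lsys, ∃ k : ℤ, p.2 = 2 * k := by
    intro p hp
    rcases hrowform p hp with ⟨j, rfl⟩ | ⟨s, _, rfl⟩
    · exact ⟨(len j : ℤ) - (kbJ j : ℤ), by simp only [hjrDef]; ring⟩
    · simp only [hsrDef]
      split_ifs with h1 h2
      · exact ⟨0, by ring⟩
      · exact ⟨2 - (kbS s : ℤ), by ring⟩
      · exact ⟨0, by ring⟩
  have hsolL : ∀ p ∈ Lsys, rs p.1 wsol = (p.2 : ℝ) := by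
    intro p hp
    rcases hrowform p hp with ⟨j, rfl⟩ | ⟨s, hts, rfl⟩
    · show rs (jc j) wsol = ((jr j : ℤ) : ℝ)
      rw [rs_job j wsol]
      have hsplit := hsplitJ j (fun s => 2 * x j s)
        (fun s h1 h2 h3 => by
          have hc : x j s = 0 := hclass (j, s) h1 h2 h3
          show 2 * x j s = 0
          rw [hc]; ring)
      have hsum2x : ∑ s, 2 * x j s = 2 * (len j : ℝ) := by
        rw [← Finset.mul_sum, hxsum j]
      have hI : ∑ s ∈ univ.filter (fun s => SI (j, s)), 2 * x j s
          = ∑ s ∈ univ.filter (fun s => SI (j, s)), 2 * a s :=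
        Finset.sum_congr rfl (fun s hs => by
          have he : x j s = a s := (Finset.mem_filter.1 hs).2.1
          rw [he])
      have hB : ∑ s ∈ univ.filter (fun s => SB (j, s)), 2 * x j s = 2 * (kbJ j : ℝ) := by
        have hcg : ∀ s ∈ univ.filter (fun s => SB (j, s)), 2 * x j s = (2:ℝ) := by
          intro s hs
          have he : x j s = 1 := (Finset.mem_filter.1 hs).2.1
          rw [he]
          ring
        rw [Finset.sum_congr rfl hcg, Finset.sum_const, nsmul_eq_mul, hkbJDef]
        ring
      simp only [hwsolDef, Sum.elim_inl, Sum.elim_inr, hjrDef]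
      push_cast
      linarith [hsplit, hsum2x, hI, hB]
    · show rs (sc s) wsol = ((sr s : ℤ) : ℝ)
      rw [rs_slot s wsol]
      have hsplit := hsplitS s (fun j => 2 * x j s)
        (fun j h1 h2 h3 => by
          have hc : x j s = 0 := hclass (j, s) h1 h2 h3
          show 2 * x j s = 0
          rw [hc]; ring)
      have htot : ∑ j, 2 * x j s = 4 * a s := by
        rw [← Finset.mul_sum, hts]
        ring
      have hI : ∑ j ∈ univ.filter (fun j => SI (j, s)), 2 * x j s
          = (ksat s : ℝ) * (2 * a s) := by
        have hcg : ∀ j ∈ univ.filter (fun j => SI (j, s)), 2 * x j s = 2 * a s := by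
          intro j hj
          have he : x j s = a s := (Finset.mem_filter.1 hj).2.1
          rw [he]
        rw [Finset.sum_congr rfl hcg, Finset.sum_const, nsmul_eq_mul, hksatDef]
      have hB : ∑ j ∈ univ.filter (fun j => SB (j, s)), 2 * x j s = 2 * (kbS s : ℝ) := by
        have hcg : ∀ j ∈ univ.filter (fun j => SB (j, s)), 2 * x j s = (2:ℝ) := by
          intro j hj
          have he : x j s = 1 := (Finset.mem_filter.1 hj).2.1
          rw [he]
          ring
        rw [Finset.sum_congr rfl hcg, Finset.sum_const, nsmul_eq_mul, hkbSDef]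
        ring
      simp only [hwsolDef, Sum.elim_inl, Sum.elim_inr, hsrDef]
      by_cases hitr : Itr s
      · have hkb0 : kbS s = 0 := by
          rw [hkbSDef]
          rw [Finset.card_eq_zero, Finset.filter_eq_empty_iff]
          intro j _
          intro hSB
          exact absurd hitr.2 (not_lt.2 (le_of_eq hSB.2.symm))
        rw [if_pos hitr, if_pos hitr]
        rw [hkb0] at hB
        push_cast at hB ⊢
        linarith [hsplit, htot, hI, hB, mul_comm ((ksat s : ℝ)) (2 * a s)]
      · rw [if_neg hitr, if_neg hitr]
        by_cases ha1 : a s = 1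
        · have hks0 : ksat s = 0 := by
            rw [hksatDef]
            rw [Finset.card_eq_zero, Finset.filter_eq_empty_iff]
            intro j _
            intro hSI
            exact absurd hSI.2.2 (not_lt.2 (le_of_eq ha1.symm))
          rw [if_pos ha1]
          rw [hks0] at hI
          push_cast at hI ⊢
          rw [ha1] at htot
          linarith [hsplit, htot, hI, hB]
        · have ha0 : a s = 0 := by
            rcases lt_or_eq_of_le (ha01 s).1 with h | h
            · rcases lt_or_eq_of_le (ha01 s).2 with h2 | h2
              · exact absurd ⟨h, h2⟩ hitr
              · exact absurd h2 ha1
            · exact h.symm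
          have hFr0 : ∑ j ∈ univ.filter (fun j => Fr (j, s)), 2 * x j s = 0 := by
            apply Finset.sum_eq_zero
            intro j hj
            have hfr := (Finset.mem_filter.1 hj).2
            exact absurd (lt_of_le_of_lt (hx0 j s) hfr.2)
              (by rw [ha0]; exact lt_irrefl 0)
          rw [if_neg ha1, hFr0]
          simp
  have hrigA : ∀ d : ((J × S) ⊕ S) → ℝ, (∀ v, v ∉ Aset → d v = 0) →
      (∀ p ∈ Lsys, rs p.1 d = 0) → ∀ v, d v = 0 := by
    intro d hdsupp hdrows
    set dx : J → S → ℝ := fun j s => if Fr (j, s) then d (Sum.inl (j, s)) / 2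
      else if SI (j, s) then d (Sum.inr s) / 2 else 0 with hdxDef
    set da : S → ℝ := fun s => if Itr s then d (Sum.inr s) / 2 else 0 with hdaDef
    have R1 : ∀ j s, x j s = 0 → dx j s = 0 := by
      intro j s h
      simp only [hdxDef]
      rw [if_neg (by rintro ⟨hpos, _⟩; rw [h] at hpos; exact lt_irrefl 0 hpos),
        if_neg (by rintro ⟨heq, hpos, _⟩; rw [h] at heq; rw [← heq] at hpos; exact lt_irrefl 0 hpos)]
    have R2 : ∀ s, ¬(0 < a s ∧ a s < 1) → da s = 0 := by
      intro s h
      simp only [hdaDef]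
      rw [if_neg (fun hc => h hc)]
    have R3 : ∀ j s, x j s = a s → dx j s = da s := by
      intro j s h
      by_cases hitr : Itr s
      · simp only [hdxDef, hdaDef]
        rw [if_neg (by rintro ⟨_, hlt⟩; rw [h] at hlt; exact lt_irrefl _ hlt),
          if_pos ⟨h, hitr⟩, if_pos hitr]
      · simp only [hdxDef, hdaDef]
        rw [if_neg (by rintro ⟨_, hlt⟩; rw [h] at hlt; exact lt_irrefl _ hlt),
          if_neg (fun hc => hitr hc.2), if_neg hitr]
    have R4 : ∀ j, ∑ s, dx j s = 0 := by
      intro j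
      have hrow := hdrows _ (hjobmem j)
      rw [rs_job j d] at hrow
      have hsplit := hsplitJ j (fun s => dx j s)
        (fun s h1 h2 _ => by simp only [hdxDef]; rw [if_neg h1, if_neg h2])
      have h1 : ∑ s ∈ univ.filter (fun s => Fr (j, s)), dx j s
          = (∑ s ∈ univ.filter (fun s => Fr (j, s)), d (Sum.inl (j, s))) / 2 := by
        rw [Finset.sum_div]
        exact Finset.sum_congr rfl (fun s hs => by
          simp only [hdxDef]
          rw [if_pos (Finset.mem_filter.1 hs).2])
      have h2 : ∑ s ∈ univ.filter (fun s => SI (j, s)), dx j s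
          = (∑ s ∈ univ.filter (fun s => SI (j, s)), d (Sum.inr s)) / 2 := by
        rw [Finset.sum_div]
        exact Finset.sum_congr rfl (fun s hs => by
          have hsi := (Finset.mem_filter.1 hs).2
          simp only [hdxDef]
          rw [if_neg (exclIF _ hsi), if_pos hsi])
      have h3 : ∑ s ∈ univ.filter (fun s => SB (j, s)), dx j s = 0 := by
        apply Finset.sum_eq_zero
        intro s hs
        have hsb := (Finset.mem_filter.1 hs).2
        simp only [hdxDef]
        rw [if_neg (exclBF _ hsb), if_neg (exclBI _ hsb)]
      rw [hsplit, h1, h2, h3]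
      linarith [hrow]
    have R5 : ∀ s, ∑ j, x j s = 2 * a s → ∑ j, dx j s = 2 * da s := by
      intro s hts
      have hrow := hdrows _ (hslotmem s hts)
      rw [rs_slot s d] at hrow
      have hsplit := hsplitS s (fun j => dx j s)
        (fun j h1 h2 _ => by simp only [hdxDef]; rw [if_neg h1, if_neg h2])
      have h1 : ∑ j ∈ univ.filter (fun j => Fr (j, s)), dx j s
          = (∑ j ∈ univ.filter (fun j => Fr (j, s)), d (Sum.inl (j, s))) / 2 := by
        rw [Finset.sum_div]
        exact Finset.sum_congr rfl (fun j hj => by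
          simp only [hdxDef]
          rw [if_pos (Finset.mem_filter.1 hj).2])
      have h3 : ∑ j ∈ univ.filter (fun j => SB (j, s)), dx j s = 0 := by
        apply Finset.sum_eq_zero
        intro j hj
        have hsb := (Finset.mem_filter.1 hj).2
        simp only [hdxDef]
        rw [if_neg (exclBF _ hsb), if_neg (exclBI _ hsb)]
      by_cases hitr : Itr s
      · have h2 : ∑ j ∈ univ.filter (fun j => SI (j, s)), dx j s
            = (ksat s : ℝ) * (d (Sum.inr s) / 2) := by
          rw [Finset.sum_congr rfl (fun j hj => by
            have hsi := (Finset.mem_filter.1 hj).2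
            simp only [hdxDef]
            rw [if_neg (exclIF _ hsi), if_pos hsi] :
              ∀ j ∈ univ.filter (fun j => SI (j, s)), dx j s = d (Sum.inr s) / 2)]
          rw [Finset.sum_const, nsmul_eq_mul, hksatDef]
        rw [if_pos hitr] at hrow
        simp only [hdaDef]
        rw [if_pos hitr]
        rw [hsplit, h1, h2, h3]
        push_cast at hrow ⊢
        nlinarith [hrow]
      · have hdz : d (Sum.inr s) = 0 := by
          apply hdsupp
          intro hmem
          exact hitr (Finset.mem_filter.1 hmem).2
        have h2 : ∑ j ∈ univ.filter (fun j => SI (j, s)), dx j s = 0 := by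
          apply Finset.sum_eq_zero
          intro j hj
          exact absurd (Finset.mem_filter.1 hj).2.2 hitr
        rw [if_neg hitr] at hrow
        simp only [hdaDef]
        rw [if_neg hitr]
        rw [hsplit, h1, h2, h3]
        linarith [hrow]
    obtain ⟨hdx0, hda0⟩ := hrigid dx da R1 R2 R3 R4 R5
    intro v
    by_cases hvA : v ∈ Aset
    · have hvP := (Finset.mem_filter.1 hvA).2
      cases v with
      | inl e =>
        obtain ⟨j, s⟩ := e
        simp only [Sum.elim_inl] at hvP
        have hz := hdx0 j s
        simp only [hdxDef] at hz
        rw [if_pos hvP] at hz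
        linarith [hz]
      | inr s =>
        simp only [Sum.elim_inr] at hvP
        have hz := hda0 s
        simp only [hdaDef] at hz
        rw [if_pos hvP] at hz
        linarith [hz]
    · exact hdsupp v hvA
  have hintegral := Master.master (V := (J × S) ⊕ S) Aset.card Aset Lsys wsol le_rfl
    hsupp hocc heven hsolL hrigA
  have hhalfa : ∀ s, a s = 0 ∨ a s = 1/2 ∨ a s = 1 := by
    intro s
    by_cases h0 : a s = 0
    · exact Or.inl h0
    by_cases h1 : a s = 1
    · exact Or.inr (Or.inr h1)
    have hitr : Itr s :=
      ⟨lt_of_le_of_ne (ha01 s).1 (Ne.symm h0), lt_of_le_of_ne (ha01 s).2 h1⟩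
    have hmem : (Sum.inr s : (J × S) ⊕ S) ∈ Aset :=
      Finset.mem_filter.2 ⟨Finset.mem_univ _, hitr⟩
    obtain ⟨k, hk⟩ := hintegral (Sum.inr s) hmem
    have hk' : 2 * a s = (k : ℝ) := hk
    have hkpos : (0:ℝ) < (k:ℝ) := by rw [← hk']; linarith [hitr.1]
    have hklt : (k:ℝ) < 2 := by rw [← hk']; linarith [hitr.2]
    have hk1 : k = 1 := by
      have b1 : (0:ℤ) < k := by exact_mod_cast hkpos
      have b2 : k < 2 := by exact_mod_cast hklt
      omega
    right
    left
    rw [hk1] at hk'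
    push_cast at hk'
    linarith
  have hhalfx : ∀ j s, x j s = 0 ∨ x j s = 1/2 ∨ x j s = 1 := by
    intro j s
    by_cases h0 : x j s = 0
    · exact Or.inl h0
    have hpos : 0 < x j s := lt_of_le_of_ne (hx0 j s) (Ne.symm h0)
    rcases lt_or_eq_of_le (hxa j s) with hlt | heq
    · have hfr : Fr (j, s) := ⟨hpos, hlt⟩
      have hmem : (Sum.inl (j, s) : (J × S) ⊕ S) ∈ Aset :=
        Finset.mem_filter.2 ⟨Finset.mem_univ _, hfr⟩
      obtain ⟨k, hk⟩ := hintegral (Sum.inl (j, s)) hmem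
      have hk' : 2 * x j s = (k : ℝ) := hk
      have hkpos : (0:ℝ) < (k:ℝ) := by rw [← hk']; linarith
      have hklt : (k:ℝ) < 2 := by
        rw [← hk']
        have := (ha01 s).2
        linarith
      have hk1 : k = 1 := by
        have b1 : (0:ℤ) < k := by exact_mod_cast hkpos
        have b2 : k < 2 := by exact_mod_cast hklt
        omega
      right
      left
      rw [hk1] at hk'
      push_cast at hk'
      linarith
    · rcases hhalfa s with h | h | h
      · rw [heq, h] at hpos
        exact absurd hpos (lt_irrefl 0)
      · exact Or.inr (Or.inl (by rw [heq, h]))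
      · exact Or.inr (Or.inr (by rw [heq, h]))
  exact ⟨x, a, hzF, fun x' a' h' => by rw [hm]; exact hmin x' a' h', hhalfx, hhalfa⟩


/-- For `B = 2`, if some fractional schedule exists, then there is a fractional
schedule attaining the minimum fractional active time in which every `x j s` and
every `a s` lies in `{0, 1/2, 1}`. -/
theorem half_integral_optimal_frac_schedule_B2
    {J S : Type*} [Fintype J] [Fintype S]
    (T : J → Finset S) (len : J → ℕ) (hlen : ∀ j, 0 < len j)
    (hex : ∃ (x : J → S → ℝ) (a : S → ℝ), IsFracSchedule 2 T len x a) :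
    ∃ (x : J → S → ℝ) (a : S → ℝ), IsFracSchedule 2 T len x a ∧
      (∀ (x' : J → S → ℝ) (a' : S → ℝ), IsFracSchedule 2 T len x' a' →
        ∑ s, a s ≤ ∑ s, a' s) ∧
      (∀ j s, x j s = 0 ∨ x j s = 1 / 2 ∨ x j s = 1) ∧
      (∀ s, a s = 0 ∨ a s = 1 / 2 ∨ a s = 1) := by
  exact half_integral_main T len hlen hex
end

section
/- Let B = 2 and consider a unit-job multi-slot instance. Let ι* be the maximum cardinality of a schedulable subset of J. Then for any two schedulable subsets S₁, S₂ ⊆ J with |S₁| = |S₂| = ι*, the minimum active time over all schedules of S₁ equals the minimum active time over all schedules of S₂. In other words, the minimum number of active slots needed to schedule ι* jobs can be achieved using any set of ι* jobs that can be scheduled. -/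
open Finset

/-- A schedule of the subset `J'` of unit jobs: each job of `J'` is assigned one of
its feasible slots, with at most `B` jobs of `J'` per slot. -/
def IsPartialSchedule {J S : Type*} [DecidableEq S]
    (B : ℕ) (T : J → Finset S) (J' : Finset J) (σ : J → S) : Prop :=
  (∀ j ∈ J', σ j ∈ T j) ∧ ∀ s : S, (J'.filter (fun j => σ j = s)).card ≤ B

/-- A subset of jobs is schedulable if some schedule of it exists. -/
def Schedulable {J S : Type*} [DecidableEq S]
    (B : ℕ) (T : J → Finset S) (J' : Finset J) : Prop :=
  ∃ σ : J → S, IsPartialSchedule B T J' σ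

section Aux
variable {J S : Type*} [DecidableEq J] [DecidableEq S] {T : J → Finset S}

/-- Replacing job `q` (scheduled at slot `s0`) by job `p` placed at `s0`
preserves all slot loads. -/
lemma swap_loads (σ : J → S) (A : Finset J) (p q : J) (s0 : S)
    (hq : q ∈ A) (hp : p ∉ A) (hqs : σ q = s0) (s : S) :
    ((insert p (A.erase q)).filter (fun j => (Function.update σ p s0) j = s)).card
      = (A.filter (fun j => σ j = s)).card := by
  have h1 : (A.erase q).filter (fun j => (Function.update σ p s0) j = s)
      = (A.erase q).filter (fun j => σ j = s) := by
    refine filter_congr fun j hj => ?_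
    have hjp : j ≠ p := fun h => hp (h ▸ mem_of_mem_erase hj)
    rw [Function.update_of_ne hjp]
  have hfc : (A.erase q).filter (fun j => (Function.update σ p s0) j = s)
      = (A.filter (fun j => σ j = s)).erase q := by
    rw [h1, filter_erase]
  rw [filter_insert, hfc]
  by_cases hs : s0 = s
  · rw [if_pos (by rw [Function.update_self]; exact hs)]
    have hqmem : q ∈ A.filter (fun j => σ j = s) := mem_filter.2 ⟨hq, hqs.trans hs⟩
    have hpnot : p ∉ (A.filter (fun j => σ j = s)).erase q :=
      fun h => hp (mem_of_mem_filter _ (mem_of_mem_erase h))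
    rw [card_insert_of_notMem hpnot, card_erase_of_mem hqmem]
    have := card_pos.2 ⟨q, hqmem⟩
    omega
  · rw [if_neg (by rw [Function.update_self]; exact hs)]
    have hnq : q ∉ A.filter (fun j => σ j = s) :=
      fun h => hs (hqs.symm.trans (mem_filter.1 h).2)
    rw [erase_eq_of_notMem hnq]

end Aux

section Aux2
variable {J S : Type*} [DecidableEq J] [DecidableEq S] {T : J → Finset S}

lemma swap_sched {σ : J → S} {A : Finset J} {p q : J} {s0 : S}
    (hσ : IsPartialSchedule 2 T A σ) (hq : q ∈ A) (hp : p ∉ A) (hqs : σ q = s0)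
    (hps : s0 ∈ T p) :
    IsPartialSchedule 2 T (insert p (A.erase q)) (Function.update σ p s0) := by
  constructor
  · intro j hj
    rcases mem_insert.1 hj with rfl | hjq
    · rw [Function.update_self]; exact hps
    · have hjp : j ≠ p := by rintro rfl; exact hp (mem_of_mem_erase hjq)
      rw [Function.update_of_ne hjp]
      exact hσ.1 _ (mem_of_mem_erase hjq)
  · intro s
    rw [swap_loads σ A p q s0 hq hp hqs s]
    exact hσ.2 s

/-- Key exchange lemma: given a schedule `σ` of `A`, a schedule `τ` of `A'`, and a
job `p ∈ A' \ A`, either `A ∪ {p}` is schedulable, or some `q ∈ A \ A'` can be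
traded for `p` without changing any slot load. -/
lemma key_exchange (A' : Finset J) (τ : J → S) (hτ : IsPartialSchedule 2 T A' τ) :
    ∀ n (A : Finset J) (σ : J → S) (p : J),
      ((A ∩ A').filter (fun j => σ j ≠ τ j)).card = n →
      IsPartialSchedule 2 T A σ → p ∈ A' → p ∉ A →
      (∃ ρ, IsPartialSchedule 2 T (insert p A) ρ) ∨
      (∃ q, q ∈ A ∧ q ∉ A' ∧ ∃ ρ, IsPartialSchedule 2 T (insert p (A.erase q)) ρ ∧
        ∀ s, ((insert p (A.erase q)).filter (fun j => ρ j = s)).card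
            = (A.filter (fun j => σ j = s)).card) := by
  intro n
  induction n using Nat.strong_induction_on with
  | _ n ih =>
  intro A σ p hn hσ hpA' hpA
  by_cases hload : (A.filter (fun j => σ j = τ p)).card ≤ 1
  · -- place p directly at τ p
    left
    refine ⟨Function.update σ p (τ p), ?_, ?_⟩
    · intro j hj
      rcases mem_insert.1 hj with rfl | hjA
      · rw [Function.update_self]; exact hτ.1 _ hpA'
      · have hjp : j ≠ p := by rintro rfl; exact hpA hjA
        rw [Function.update_of_ne hjp]; exact hσ.1 _ hjA
    · intro s
      have hAf : A.filter (fun j => Function.update σ p (τ p) j = s)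
          = A.filter (fun j => σ j = s) :=
        filter_congr fun j hjA => by
          have hjp : j ≠ p := by rintro rfl; exact hpA hjA
          rw [Function.update_of_ne hjp]
      rw [filter_insert]
      by_cases hcase : Function.update σ p (τ p) p = s
      · rw [if_pos hcase, card_insert_of_notMem (fun h => hpA (mem_of_mem_filter _ h)), hAf]
        have hs : τ p = s := by rwa [Function.update_self] at hcase
        rw [← hs]
        omega
      · rw [if_neg hcase, hAf]; exact hσ.2 s
  · -- slot τ p is full under σ
    have hload2 : (A.filter (fun j => σ j = τ p)).card = 2 :=
      le_antisymm (hσ.2 (τ p)) (by omega)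
    have hex : ∃ q ∈ A.filter (fun j => σ j = τ p), q ∉ A' ∨ (q ∈ A' ∧ τ q ≠ τ p) := by
      by_contra hno
      push_neg at hno
      have hsub : A.filter (fun j => σ j = τ p)
          ⊆ (A'.filter (fun j => τ j = τ p)).erase p := by
        intro q hqmem
        obtain ⟨hqA', hq2⟩ := hno q hqmem
        refine mem_erase.2 ⟨fun h => hpA (h ▸ (mem_filter.1 hqmem).1), ?_⟩
        exact mem_filter.2 ⟨hqA', hq2 hqA'⟩
      have hpmem : p ∈ A'.filter (fun j => τ j = τ p) := mem_filter.2 ⟨hpA', rfl⟩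
      have h2 : (A'.filter (fun j => τ j = τ p)).card ≤ 2 := hτ.2 (τ p)
      have h3 := card_le_card hsub
      rw [card_erase_of_mem hpmem] at h3
      omega
    obtain ⟨q, hqmem, hqalt⟩ := hex
    obtain ⟨hqA, hqs⟩ := mem_filter.1 hqmem
    have hps0 : τ p ∈ T p := hτ.1 p hpA'
    have hsched : IsPartialSchedule 2 T (insert p (A.erase q)) (Function.update σ p (τ p)) :=
      swap_sched hσ hqA hpA hqs hps0
    have hloads := swap_loads σ A p q (τ p) hqA hpA hqs
    rcases hqalt with hqA' | ⟨hqA', hqτ⟩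
    · right; exact ⟨q, hqA, hqA', _, hsched, hloads⟩
    · -- recurse with pending job q
      have hqp : q ≠ p := fun h => hpA (h ▸ hqA)
      have hqB : q ∉ insert p (A.erase q) := by
        intro h
        rcases mem_insert.1 h with h | h
        · exact hpA (h ▸ hqA)
        · exact absurd h (notMem_erase q A)
      have hmeas : (((insert p (A.erase q)) ∩ A').filter
          (fun j => Function.update σ p (τ p) j ≠ τ j)).card < n := by
        have hBe : (insert p (A.erase q)) ∩ A' = insert p ((A ∩ A').erase q) := by
          rw [insert_inter_of_mem hpA', erase_inter]
        rw [hBe, filter_insert, if_neg (by simp [Function.update_self])]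
        have heq1 : ((A ∩ A').erase q).filter (fun j => Function.update σ p (τ p) j ≠ τ j)
            = ((A ∩ A').erase q).filter (fun j => σ j ≠ τ j) := by
          refine filter_congr fun j hj => ?_
          have hjp : j ≠ p := by
            rintro rfl
            exact hpA (mem_inter.1 (mem_of_mem_erase hj)).1
          rw [Function.update_of_ne hjp]
        have heq : ((A ∩ A').erase q).filter (fun j => Function.update σ p (τ p) j ≠ τ j)
            = ((A ∩ A').filter (fun j => σ j ≠ τ j)).erase q := by
          rw [heq1, filter_erase]
        rw [heq]
        have hqf : q ∈ (A ∩ A').filter (fun j => σ j ≠ τ j) := by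
          refine mem_filter.2 ⟨mem_inter.2 ⟨hqA, hqA'⟩, fun h => hqτ (h ▸ hqs)⟩
        rw [card_erase_of_mem hqf, hn]
        have := card_pos.2 ⟨q, hqf⟩
        omega
      rcases ih _ hmeas (insert p (A.erase q)) (Function.update σ p (τ p)) q rfl
          hsched hqA' hqB with ⟨ρ, hρ⟩ | ⟨q', hq'B, hq'A', ρ, hρ, hρl⟩
      · left
        have hBq : insert q (insert p (A.erase q)) = insert p A := by
          rw [Finset.insert_comm, insert_erase hqA]
        exact ⟨ρ, hBq ▸ hρ⟩
      · right
        have hq'p : q' ≠ p := fun h => hq'A' (h ▸ hpA')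
        have hq'e : q' ∈ A.erase q := by
          rcases mem_insert.1 hq'B with h | h
          · exact absurd h hq'p
          · exact h
        have hq'A : q' ∈ A := mem_of_mem_erase hq'e
        have hq'q : q' ≠ q := ne_of_mem_erase hq'e
        have hset : insert q ((insert p (A.erase q)).erase q') = insert p (A.erase q') := by
          rw [erase_insert_of_ne hq'p.symm, Finset.insert_comm, erase_right_comm,
            insert_erase (mem_erase.2 ⟨hq'q.symm, hqA⟩)]
        refine ⟨q', hq'A, hq'A', ρ, hset ▸ hρ, fun s => ?_⟩
        have h5 := hρl s
        rw [hset] at h5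
        rw [h5, hloads s]

end Aux2

section Main
variable {J S : Type*} [DecidableEq J] [DecidableEq S] {T : J → Finset S}

lemma sched_set_nonempty {A : Finset J} (h : Schedulable 2 T A) :
    {n : ℕ | ∃ σ : J → S, IsPartialSchedule 2 T A σ ∧ (A.image σ).card = n}.Nonempty := by
  obtain ⟨σ, hσ⟩ := h
  exact ⟨(A.image σ).card, σ, hσ, rfl⟩

lemma main_le (T : J → Finset S) (c : ℕ)
    (hmax : ∀ J' : Finset J, Schedulable 2 T J' → J'.card ≤ c) :
    ∀ d (A A' : Finset J), (A' \ A).card = d →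
      Schedulable 2 T A → Schedulable 2 T A' → A.card = c → A'.card = c →
      sInf {n : ℕ | ∃ σ : J → S, IsPartialSchedule 2 T A' σ ∧ (A'.image σ).card = n}
        ≤ sInf {n : ℕ | ∃ σ : J → S, IsPartialSchedule 2 T A σ ∧ (A.image σ).card = n} := by
  intro d
  induction d using Nat.strong_induction_on with
  | _ d ih =>
  intro A A' hd hA hA' hcA hcA'
  rcases eq_or_ne d 0 with rfl | hdne
  · have hsub : A' ⊆ A := by
      rw [← sdiff_eq_empty_iff_subset]
      exact card_eq_zero.1 hd
    have : A' = A := eq_of_subset_of_card_le hsub (by omega)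
    rw [this]
  · obtain ⟨j₁, hj₁⟩ : (A' \ A).Nonempty := by
      rw [← card_pos, hd]; omega
    have hj₁A' : j₁ ∈ A' := (mem_sdiff.1 hj₁).1
    have hj₁A : j₁ ∉ A := (mem_sdiff.1 hj₁).2
    obtain ⟨τ, hτ⟩ := hA'
    -- optimal schedule of A
    have hne := sched_set_nonempty (T := T) (A := A) hA
    obtain ⟨σ, hσ, hσcard⟩ := Nat.sInf_mem hne
    rcases key_exchange A' τ hτ _ A σ j₁ rfl hσ hj₁A' hj₁A with
      ⟨ρ, hρ⟩ | ⟨q, hqA, hqA', ρ, hρ, hρl⟩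
    · -- contradiction with maximality
      have h1 : (insert j₁ A).card ≤ c := hmax _ ⟨ρ, hρ⟩
      rw [card_insert_of_notMem hj₁A] at h1
      omega
    · set B := insert j₁ (A.erase q) with hB
      have hj₁B : j₁ ∉ A.erase q := fun h => hj₁A (mem_of_mem_erase h)
      have hcB : B.card = c := by
        rw [hB, card_insert_of_notMem hj₁B, card_erase_of_mem hqA]
        have := card_pos.2 ⟨q, hqA⟩
        omega
      have hBsched : Schedulable 2 T B := ⟨ρ, hρ⟩
      have himg : B.image ρ = A.image σ := by
        ext s
        rw [mem_image, ← filter_nonempty_iff, ← card_pos, hρl s, card_pos,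
          filter_nonempty_iff, ← mem_image]
      have hmem : sInf {n : ℕ | ∃ σ : J → S, IsPartialSchedule 2 T A σ ∧ (A.image σ).card = n}
          ∈ {n : ℕ | ∃ σ' : J → S, IsPartialSchedule 2 T B σ' ∧ (B.image σ').card = n} :=
        ⟨ρ, hρ, by rw [himg, hσcard]⟩
      have hstep : sInf {n : ℕ | ∃ σ' : J → S, IsPartialSchedule 2 T B σ' ∧ (B.image σ').card = n}
          ≤ sInf {n : ℕ | ∃ σ : J → S, IsPartialSchedule 2 T A σ ∧ (A.image σ).card = n} :=
        Nat.sInf_le hmem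
      have hdiff : A' \ B = (A' \ A).erase j₁ := by
        ext j
        constructor
        · intro hj
          obtain ⟨hjA', hjB⟩ := mem_sdiff.1 hj
          have hjne : j ≠ j₁ := by rintro rfl; exact hjB (mem_insert_self _ _)
          have hjq : j ≠ q := by rintro rfl; exact hqA' hjA'
          have hjA : j ∉ A := fun h => hjB (mem_insert_of_mem (mem_erase.2 ⟨hjq, h⟩))
          exact mem_erase.2 ⟨hjne, mem_sdiff.2 ⟨hjA', hjA⟩⟩
        · intro hj
          obtain ⟨hjne, hjd⟩ := mem_erase.1 hj
          obtain ⟨hjA', hjA⟩ := mem_sdiff.1 hjd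
          refine mem_sdiff.2 ⟨hjA', fun h => ?_⟩
          rcases mem_insert.1 h with h | h
          · exact hjne h
          · exact hjA (mem_of_mem_erase h)
      have hdlt : (A' \ B).card < d := by
        rw [hdiff, card_erase_of_mem hj₁]
        have := card_pos.2 ⟨j₁, hj₁⟩
        omega
      exact le_trans (ih _ hdlt B A' rfl hBsched ⟨τ, hτ⟩ hcB hcA') hstep

end Main

/-- For `B = 2`: if `S₁` and `S₂` are two schedulable subsets of jobs, both of the
maximum cardinality `ι* = S₁.card = S₂.card`, then the minimum active time over all
schedules of `S₁` equals the minimum active time over all schedules of `S₂`. -/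
theorem min_active_time_independent_of_max_schedulable_set
    {J S : Type*} [Fintype J] [Fintype S] [DecidableEq J] [DecidableEq S]
    (T : J → Finset S) (hT : ∀ j, (T j).Nonempty)
    (S₁ S₂ : Finset J)
    (h1 : Schedulable 2 T S₁) (h2 : Schedulable 2 T S₂)
    (hcard : S₁.card = S₂.card)
    (hmax : ∀ J' : Finset J, Schedulable 2 T J' → J'.card ≤ S₁.card) :
    sInf {n : ℕ | ∃ σ : J → S, IsPartialSchedule 2 T S₁ σ ∧ (S₁.image σ).card = n} =
      sInf {n : ℕ | ∃ σ : J → S, IsPartialSchedule 2 T S₂ σ ∧ (S₂.image σ).card = n} := by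
  have hle1 := main_le T S₁.card hmax _ S₁ S₂ rfl h1 h2 rfl hcard.symm
  have hle2 := main_le T S₁.card hmax _ S₂ S₁ rfl h2 h1 hcard.symm rfl
  exact le_antisymm hle2 hle1
end

section
/- Let B = 2 and consider a unit-job multi-slot instance with at least one schedulable job. Let ι* be the maximum cardinality of a schedulable subset of J, and let A* be the minimum active time over all schedules of subsets of cardinality ι*. Then for every natural number α, the maximum cardinality of a subset J' ⊆ J that admits a schedule with at most α active slots equals min(ι*, ι* − A* + α, 2α). -/
open Finset

section Aux
variable {J S : Type*} [DecidableEq J] [DecidableEq S] {T : J → Finset S}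

lemma sched_subset {B : ℕ} {J' K : Finset J} {σ : J → S}
    (h : IsPartialSchedule B T J' σ) (hK : K ⊆ J') : IsPartialSchedule B T K σ := by
  refine ⟨fun j hj => h.1 j (hK hj), fun s => le_trans (card_le_card ?_) (h.2 s)⟩
  exact filter_subset_filter _ hK

lemma card_le_two_mul_image {J' : Finset J} {σ : J → S}
    (h : IsPartialSchedule 2 T J' σ) : J'.card ≤ 2 * (J'.image σ).card := by
  rw [card_eq_sum_card_image σ J']
  calc ∑ s ∈ J'.image σ, (J'.filter (fun j => σ j = s)).card
      ≤ ∑ _s ∈ J'.image σ, 2 := sum_le_sum (fun s _ => h.2 s)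
    _ = 2 * (J'.image σ).card := by rw [sum_const, smul_eq_mul, mul_comm]

/-- Key augmentation lemma: if `σ` schedules `I` and `τ` schedules a strictly larger
set `K`, then some set of size `|I| + 1` has a schedule with at most one more active slot. -/
lemma augment : ∀ (μ : ℕ) (I K : Finset J) (σ τ : J → S),
    (I.filter (fun i => i ∉ K ∨ σ i ≠ τ i)).card ≤ μ →
    IsPartialSchedule 2 T I σ → IsPartialSchedule 2 T K τ → I.card < K.card →
    ∃ (M : Finset J) (ρ : J → S), M.card = I.card + 1 ∧
      IsPartialSchedule 2 T M ρ ∧ (M.image ρ).card ≤ (I.image σ).card + 1 := by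
  intro μ
  induction μ using Nat.strong_induction_on with
  | _ μ ih =>
  intro I K σ τ hμ hσ hτ hlt
  -- pick j ∈ K \ I
  obtain ⟨j, hjK, hjI⟩ : ∃ j ∈ K, j ∉ I := by
    by_contra h
    push_neg at h
    exact absurd (card_le_card h) (not_le_of_gt hlt)
  set s := τ j with hs
  by_cases hload : (I.filter (fun i => σ i = s)).card ≤ 1
  · -- direct insertion
    refine ⟨insert j I, Function.update σ j s, ?_, ⟨?_, ?_⟩, ?_⟩
    · rw [card_insert_of_notMem hjI]
    · intro i hi
      rcases mem_insert.mp hi with rfl | hiI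
      · rw [Function.update_self]; exact hτ.1 i hjK
      · rw [Function.update_of_ne (by rintro rfl; exact hjI hiI)]
        exact hσ.1 i hiI
    · intro u
      have hsub : (insert j I).filter (fun i => Function.update σ j s i = u) ⊆
          insert j (I.filter (fun i => σ i = u)) := by
        intro i hi
        rw [mem_filter, mem_insert] at hi
        rcases hi.1 with rfl | hiI
        · exact mem_insert_self _ _
        · refine mem_insert_of_mem (mem_filter.mpr ⟨hiI, ?_⟩)
          have h2 := hi.2
          rwa [Function.update_of_ne (by rintro rfl; exact hjI hiI)] at h2
      by_cases hus : u = s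
      · subst hus
        calc _ ≤ (insert j (I.filter (fun i => σ i = s))).card := card_le_card hsub
          _ ≤ (I.filter (fun i => σ i = s)).card + 1 := card_insert_le _ _
          _ ≤ 2 := by omega
      · have : (insert j I).filter (fun i => Function.update σ j s i = u) ⊆
            I.filter (fun i => σ i = u) := by
          intro i hi
          rw [mem_filter, mem_insert] at hi
          rcases hi.1 with rfl | hiI
          · exact absurd hi.2 (by rw [Function.update_self]; exact fun h => hus h.symm)
          · refine mem_filter.mpr ⟨hiI, ?_⟩
            have h2 := hi.2
            rwa [Function.update_of_ne (by rintro rfl; exact hjI hiI)] at h2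
        exact le_trans (card_le_card this) (hσ.2 u)
    · have himg : (insert j I).image (Function.update σ j s) =
          insert s (I.image σ) := by
        rw [image_insert, Function.update_self]
        congr 1
        apply image_congr
        intro i hi
        exact Function.update_of_ne (by rintro rfl; exact hjI hi) _ _
      rw [himg]
      exact le_trans (card_insert_le _ _) (by omega)
  · -- eviction case
    push_neg at hload
    have hload2 : (I.filter (fun i => σ i = s)).card = 2 :=
      le_antisymm (hσ.2 s) hload
    -- find j' ∈ I with σ j' = s and (j' ∉ K ∨ τ j' ≠ s)
    obtain ⟨j', hj'⟩ : ∃ j' ∈ I.filter (fun i => σ i = s), j' ∉ K ∨ τ j' ≠ s := by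
      by_contra h
      push_neg at h
      have hsub : insert j (I.filter (fun i => σ i = s)) ⊆
          K.filter (fun i => τ i = s) := by
        intro i hi
        rcases mem_insert.mp hi with rfl | hiF
        · exact mem_filter.mpr ⟨hjK, rfl⟩
        · obtain ⟨h1, h2⟩ := h i hiF
          exact mem_filter.mpr ⟨h1, h2⟩
      have : 3 ≤ (K.filter (fun i => τ i = s)).card := by
        have := card_le_card hsub
        rwa [card_insert_of_notMem (fun hj => hjI (mem_filter.mp hj).1), hload2] at this
      have := hτ.2 s
      omega
    obtain ⟨hj'F, hj'P⟩ := hj'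
    have hj'I : j' ∈ I := (mem_filter.mp hj'F).1
    have hj's : σ j' = s := (mem_filter.mp hj'F).2
    have hjj' : j ≠ j' := by rintro rfl; exact hjI hj'I
    set I₁ := insert j (I.erase j') with hI₁
    set σ₁ := Function.update σ j s with hσ₁
    have hjI₁ : j ∉ I.erase j' := fun h => hjI (mem_of_mem_erase h)
    have hσ₁eq : ∀ i ∈ I.erase j', σ₁ i = σ i := fun i hi =>
      Function.update_of_ne (by rintro rfl; exact hjI₁ hi) _ _
    have hcard₁ : I₁.card = I.card := by
      rw [hI₁, card_insert_of_notMem hjI₁, card_erase_of_mem hj'I]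
      have : 1 ≤ I.card := card_pos.mpr ⟨j', hj'I⟩
      omega
    -- σ₁ schedules I₁
    have hsched₁ : IsPartialSchedule 2 T I₁ σ₁ := by
      constructor
      · intro i hi
        rcases mem_insert.mp hi with rfl | hiI
        · rw [hσ₁, Function.update_self]; exact hτ.1 i hjK
        · rw [hσ₁eq i hiI]; exact hσ.1 i (mem_of_mem_erase hiI)
      · intro u
        by_cases hus : u = s
        · subst hus
          have hss : I₁.filter (fun i => σ₁ i = s) ⊆
              insert j ((I.filter (fun i => σ i = s)).erase j') := by
            intro i hi
            rw [mem_filter] at hi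
            rcases mem_insert.mp hi.1 with rfl | hiI
            · exact mem_insert_self _ _
            · exact mem_insert_of_mem (mem_erase.mpr ⟨(mem_erase.mp hiI).1, mem_filter.mpr
                ⟨mem_of_mem_erase hiI, by rw [← hσ₁eq i hiI]; exact hi.2⟩⟩)
          calc _ ≤ _ := card_le_card hss
            _ ≤ ((I.filter (fun i => σ i = s)).erase j').card + 1 := card_insert_le _ _
            _ ≤ 2 := by
                rw [card_erase_of_mem (mem_filter.mpr ⟨hj'I, hj's⟩), hload2]
        · have : I₁.filter (fun i => σ₁ i = u) ⊆ I.filter (fun i => σ i = u) := by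
            intro i hi
            rw [mem_filter] at hi
            rcases mem_insert.mp hi.1 with rfl | hiI
            · exact absurd hi.2 (by rw [hσ₁, Function.update_self]; exact fun h => hus h.symm)
            · exact mem_filter.mpr ⟨mem_of_mem_erase hiI, by rw [← hσ₁eq i hiI]; exact hi.2⟩
          exact le_trans (card_le_card this) (hσ.2 u)
    -- image shrinks
    have himg₁ : I₁.image σ₁ ⊆ I.image σ := by
      intro u hu
      rw [mem_image] at hu
      obtain ⟨i, hi, hiu⟩ := hu
      rcases mem_insert.mp hi with rfl | hiI
      · rw [hσ₁, Function.update_self] at hiu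
        exact hiu ▸ mem_image.mpr ⟨j', hj'I, hj's⟩
      · rw [hσ₁eq i hiI] at hiu
        exact mem_image.mpr ⟨i, mem_of_mem_erase hiI, hiu⟩
    -- measure decreases
    have hj'meas : j' ∈ I.filter (fun i => i ∉ K ∨ σ i ≠ τ i) := by
      refine mem_filter.mpr ⟨hj'I, ?_⟩
      rcases hj'P with h | h
      · exact Or.inl h
      · exact Or.inr (by rw [hj's]; exact fun he => h he.symm)
    have hmeas : (I₁.filter (fun i => i ∉ K ∨ σ₁ i ≠ τ i)).card ≤
        (I.filter (fun i => i ∉ K ∨ σ i ≠ τ i)).card - 1 := by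
      have hsub : I₁.filter (fun i => i ∉ K ∨ σ₁ i ≠ τ i) ⊆
          (I.filter (fun i => i ∉ K ∨ σ i ≠ τ i)).erase j' := by
        intro i hi
        rw [mem_filter] at hi
        rcases mem_insert.mp hi.1 with rfl | hiI
        · exfalso
          rcases hi.2 with h | h
          · exact h hjK
          · exact h (by rw [hσ₁, Function.update_self])
        · refine mem_erase.mpr ⟨(mem_erase.mp hiI).1, mem_filter.mpr
            ⟨mem_of_mem_erase hiI, ?_⟩⟩
          rcases hi.2 with h | h
          · exact Or.inl h
          · exact Or.inr (by rw [← hσ₁eq i hiI]; exact h)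
      calc _ ≤ _ := card_le_card hsub
        _ = _ := card_erase_of_mem hj'meas
    have hμpos : 1 ≤ μ := by
      have : 1 ≤ (I.filter (fun i => i ∉ K ∨ σ i ≠ τ i)).card :=
        card_pos.mpr ⟨j', hj'meas⟩
      omega
    obtain ⟨M, ρ, hM1, hM2, hM3⟩ := ih (μ - 1) (by omega) I₁ K σ₁ τ
      (by omega) hsched₁ hτ (by rw [hcard₁]; exact hlt)
    exact ⟨M, ρ, by rw [hM1, hcard₁], hM2,
      le_trans hM3 (by have := card_le_card himg₁; omega)⟩

/-- Iterated augmentation. -/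
lemma augment_iter (k : ℕ) : ∀ (I K : Finset J) (σ τ : J → S),
    IsPartialSchedule 2 T I σ → IsPartialSchedule 2 T K τ → I.card + k ≤ K.card →
    ∃ (M : Finset J) (ρ : J → S), M.card = I.card + k ∧
      IsPartialSchedule 2 T M ρ ∧ (M.image ρ).card ≤ (I.image σ).card + k := by
  induction k with
  | zero => exact fun I K σ τ hσ hτ _ => ⟨I, σ, rfl, hσ, le_refl _⟩
  | succ k ih =>
    intro I K σ τ hσ hτ hle
    obtain ⟨M, ρ, h1, h2, h3⟩ := augment ((I.filter (fun i => i ∉ K ∨ σ i ≠ τ i)).card)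
      I K σ τ (le_refl _) hσ hτ (by omega)
    obtain ⟨M', ρ', h1', h2', h3'⟩ := ih M K ρ τ h2 hτ (by omega)
    exact ⟨M', ρ', by omega, h2', by omega⟩

end Aux

/-- For `B = 2`: let `ι` be the maximum cardinality of a schedulable subset, and
`A` the minimum active time over all schedules of subsets of cardinality `ι`.
Then for every `α`, the maximum cardinality of a subset admitting a schedule with
at most `α` active slots is `min(ι, ι - A + α, 2α)`. -/
theorem max_jobs_with_bounded_active_time
    {J S : Type*} [Fintype J] [Fintype S] [DecidableEq J] [DecidableEq S] [Nonempty J]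
    (T : J → Finset S) (hT : ∀ j, (T j).Nonempty)
    (ι A : ℕ)
    (hι : IsGreatest {n : ℕ | ∃ J' : Finset J, Schedulable 2 T J' ∧ J'.card = n} ι)
    (hA : IsLeast {m : ℕ | ∃ (J' : Finset J) (σ : J → S),
        J'.card = ι ∧ IsPartialSchedule 2 T J' σ ∧ (J'.image σ).card = m} A)
    (α : ℕ) :
    IsGreatest {n : ℕ | ∃ (J' : Finset J) (σ : J → S),
        IsPartialSchedule 2 T J' σ ∧ (J'.image σ).card ≤ α ∧ J'.card = n}
      (min ι (min (ι - A + α) (2 * α))) := by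
  obtain ⟨Jst, σst, hJcard, hJsched, hJimg⟩ := hA.1
  set X := Jst.image σst with hX
  have hAX : X.card = A := hJimg
  have hAle : A ≤ ι := by rw [← hAX, ← hJcard]; exact card_image_le
  set D := X.filter (fun s => (Jst.filter (fun j => σst j = s)).card = 2) with hD
  set k := D.card with hk
  have hkA : k ≤ A := by rw [← hAX]; exact card_le_card (filter_subset _ _)
  have hload1 : ∀ s ∈ X, ¬ ((Jst.filter (fun j => σst j = s)).card = 2) →
      (Jst.filter (fun j => σst j = s)).card = 1 := by
    intro s hs hns
    have h1 : 1 ≤ (Jst.filter (fun j => σst j = s)).card := by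
      obtain ⟨j, hj, hjs⟩ := mem_image.mp hs
      exact card_pos.mpr ⟨j, mem_filter.mpr ⟨hj, hjs⟩⟩
    have h2 := hJsched.2 s
    omega
  have hιAk : ι = A + k := by
    have hsum : ι = ∑ s ∈ X, (Jst.filter (fun j => σst j = s)).card := by
      rw [← hJcard]; exact card_eq_sum_card_image σst Jst
    rw [← sum_filter_add_sum_filter_not X
      (fun s => (Jst.filter (fun j => σst j = s)).card = 2)] at hsum
    have hsD : ∑ s ∈ D, (Jst.filter (fun j => σst j = s)).card = 2 * k := by
      rw [sum_congr rfl (fun s hs => (mem_filter.mp hs).2), sum_const, smul_eq_mul, mul_comm]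
    have hsND : ∑ s ∈ X.filter (fun s => ¬ (Jst.filter (fun j => σst j = s)).card = 2),
        (Jst.filter (fun j => σst j = s)).card = A - k := by
      rw [sum_congr rfl (fun s hs => hload1 s (mem_filter.mp hs).1 (mem_filter.mp hs).2),
        sum_const, smul_eq_mul, mul_one, filter_not, card_sdiff_of_subset (filter_subset _ _), hAX]
    rw [hsD, hsND] at hsum
    omega
  -- fiber counting for subsets of slots
  have hfiber : ∀ Y : Finset S, Y ⊆ X →
      (Jst.filter (fun j => σst j ∈ Y)).card =
        ∑ s ∈ Y, (Jst.filter (fun j => σst j = s)).card := by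
    intro Y hY
    rw [card_eq_sum_card_fiberwise (f := σst) (s := Jst.filter (fun j => σst j ∈ Y)) (t := Y)
      (fun j hj => (mem_filter.mp hj).2)]
    refine sum_congr rfl (fun s hs => ?_)
    congr 1
    ext j
    simp only [mem_filter]
    constructor
    · rintro ⟨⟨h1, _⟩, h3⟩; exact ⟨h1, h3⟩
    · rintro ⟨h1, h2⟩; exact ⟨⟨h1, h2 ▸ hs⟩, h2⟩
  constructor
  · -- membership
    by_cases hαA : A ≤ α
    · refine ⟨Jst, σst, hJsched, by rw [hJimg]; exact hαA, ?_⟩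
      rw [hJcard]; omega
    · push_neg at hαA
      by_cases hαk : α ≤ k
      · obtain ⟨Y, hYD, hYcard⟩ := exists_subset_card_eq (s := D) hαk
        have hYX : Y ⊆ X := hYD.trans (filter_subset _ _)
        refine ⟨Jst.filter (fun j => σst j ∈ Y), σst,
          sched_subset hJsched (filter_subset _ _), ?_, ?_⟩
        · refine le_trans (card_le_card ?_) (le_of_eq hYcard)
          intro s hs
          obtain ⟨j, hj, hjs⟩ := mem_image.mp hs
          exact hjs ▸ (mem_filter.mp hj).2
        · rw [hfiber Y hYX,
            sum_congr rfl (fun s hs => (mem_filter.mp (hYD hs)).2),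
            sum_const, smul_eq_mul, hYcard]
          omega
      · push_neg at hαk
        have hcardXD : (X \ D).card = A - k := by
          rw [card_sdiff_of_subset (filter_subset _ _), hAX]
        obtain ⟨E, hE, hEcard⟩ := exists_subset_card_eq (s := X \ D) (n := α - k)
          (by omega)
        have hdisj : Disjoint D E := by
          refine disjoint_left.mpr (fun s hsD hsE => ?_)
          exact (mem_sdiff.mp (hE hsE)).2 hsD
        set Y := D ∪ E with hY
        have hYX : Y ⊆ X := union_subset (filter_subset _ _)
          (hE.trans (sdiff_subset))
        have hYcard : Y.card = α := by
          rw [hY, card_union_of_disjoint hdisj, hEcard]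
          omega
        refine ⟨Jst.filter (fun j => σst j ∈ Y), σst,
          sched_subset hJsched (filter_subset _ _), ?_, ?_⟩
        · refine le_trans (card_le_card ?_) (le_of_eq hYcard)
          intro s hs
          obtain ⟨j, hj, hjs⟩ := mem_image.mp hs
          exact hjs ▸ (mem_filter.mp hj).2
        · rw [hfiber Y hYX, hY, sum_union hdisj,
            sum_congr rfl (fun s hs => (mem_filter.mp hs).2),
            sum_congr rfl (fun s hs => hload1 s (mem_sdiff.mp (hE hs)).1
              (fun h2 => (mem_sdiff.mp (hE hs)).2
                (mem_filter.mpr ⟨(mem_sdiff.mp (hE hs)).1, h2⟩))),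
            sum_const, sum_const, smul_eq_mul, smul_eq_mul, hEcard, ← hD, ← hk]
          omega
  · -- upper bound
    rintro n ⟨J', σ', hsched, himg, rfl⟩
    have h1 : J'.card ≤ ι := hι.2 ⟨J', ⟨σ', hsched⟩, rfl⟩
    have h2 : J'.card ≤ 2 * α :=
      le_trans (card_le_two_mul_image hsched) (by omega)
    have h3 : A ≤ α + (ι - J'.card) := by
      obtain ⟨M, ρ, hM1, hM2, hM3⟩ := augment_iter (ι - J'.card) J' Jst σ' σst
        hsched hJsched (by omega)
      have := hA.2 ⟨M, ρ, by omega, hM2, rfl⟩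
      omega
    omega
end

section
/- Let B = 2 and consider a unit-job multi-slot instance. Let ι* be the maximum cardinality of a schedulable subset of J, and let A* be the minimum active time over all schedules of subsets of cardinality ι*. Then the maximum, over all subsets J' ⊆ J and schedules σ of J', of the quantity |J'| + |S \ range(σ)| (number of scheduled jobs plus number of slots not used by σ) equals ι* + |S| − A*. -/
open Finset

private lemma exists_mem_notMem' {α : Type*} {s t : Finset α} (h : s.card < t.card) :
    ∃ e ∈ t, e ∉ s := by
  by_contra hc
  push_neg at hc
  exact absurd (Finset.card_le_card fun e he => hc e he) (not_le.mpr h)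

/-- Augmenting-path lemma: given a schedule `ρ` of `K`, a schedule `σ` of a smaller
set `J'`, and a job `j ∈ K \ J'`, we can find a schedule of a set of size `|J'| + 1`
whose active slots are contained in those of `σ` plus at most one extra slot. -/
lemma aug_step {J S : Type*} [Fintype J] [DecidableEq J] [DecidableEq S]
    {B : ℕ} {T : J → Finset S} {K : Finset J} {ρ : J → S}
    (hρ : IsPartialSchedule B T K ρ) :
    ∀ N (J' : Finset J) (σ : J → S) (j : J),
      IsPartialSchedule B T J' σ → j ∈ K → j ∉ J' → J'.card < K.card →
      (Fintype.card J + 1) * ((J' \ K).card)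
        + ((J' ∩ K).filter (fun m => σ m ≠ ρ m)).card < N →
      ∃ (J'' : Finset J) (σ'' : J → S) (t : S),
        J''.card = J'.card + 1 ∧ IsPartialSchedule B T J'' σ'' ∧
        J''.image σ'' ⊆ insert t (J'.image σ) := by
  intro N
  induction N with
  | zero => intro _ _ _ _ _ _ _ h; omega
  | succ N ih =>
    intro J' σ j hσ hjK hjJ' hcardlt hΦ
    set s := ρ j with hs
    have hsT : s ∈ T j := hρ.1 j hjK
    by_cases hload : (J'.filter (fun m => σ m = s)).card < B
    · -- there is room in slot `s`: just insert `j` there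
      refine ⟨insert j J', Function.update σ j s, s,
        Finset.card_insert_of_notMem hjJ', ⟨?_, ?_⟩, ?_⟩
      · intro m hm
        rcases Finset.mem_insert.mp hm with rfl | hm
        · simpa using hsT
        · have hmj : m ≠ j := fun h => hjJ' (h ▸ hm)
          simpa [Function.update_of_ne hmj] using hσ.1 m hm
      · intro s'
        by_cases hss : s' = s
        · subst hss
          have hfe : (insert j J').filter (fun m => Function.update σ j s m = s)
              = insert j (J'.filter (fun m => σ m = s)) := by
            ext m
            by_cases hmj : m = j
            · subst hmj; simp [hjJ']
            · simp [Function.update_of_ne hmj, hmj]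
          rw [hfe]
          calc (insert j (J'.filter (fun m => σ m = s))).card
              ≤ (J'.filter (fun m => σ m = s)).card + 1 := Finset.card_insert_le _ _
            _ ≤ B := hload
        · have hfe : (insert j J').filter (fun m => Function.update σ j s m = s')
              = J'.filter (fun m => σ m = s') := by
            ext m
            by_cases hmj : m = j
            · subst hmj
              simp only [Finset.mem_filter, Finset.mem_insert, Function.update_self]
              constructor
              · rintro ⟨_, h⟩; exact absurd h.symm hss
              · rintro ⟨h, _⟩; exact absurd h hjJ'
            · simp [Function.update_of_ne hmj, hmj]
          rw [hfe]; exact hσ.2 s'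
      · intro x hx
        obtain ⟨m, hm, rfl⟩ := Finset.mem_image.mp hx
        rcases Finset.mem_insert.mp hm with rfl | hm
        · rw [Function.update_self]; exact Finset.mem_insert_self _ _
        · have hmj : m ≠ j := fun h => hjJ' (h ▸ hm)
          rw [Function.update_of_ne hmj]
          exact Finset.mem_insert_of_mem (Finset.mem_image.mpr ⟨m, hm, rfl⟩)
    · -- slot `s` is full under `σ`: swap out a suitable job `k`
      have hB : (J'.filter (fun m => σ m = s)).card = B :=
        le_antisymm (hσ.2 s) (not_lt.mp hload)
      have hjfil : j ∈ K.filter (fun m => ρ m = s) := Finset.mem_filter.mpr ⟨hjK, rfl⟩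
      have hρload : ((K.filter (fun m => ρ m = s)).erase j).card
          < (J'.filter (fun m => σ m = s)).card := by
        rw [hB]
        exact lt_of_lt_of_le (Finset.card_erase_lt_of_mem hjfil) (hρ.2 s)
      obtain ⟨k, hk1, hk2⟩ := exists_mem_notMem' hρload
      obtain ⟨hkJ', hkσ⟩ := Finset.mem_filter.mp hk1
      have hkj : k ≠ j := fun h => hjJ' (h ▸ hkJ')
      have hknot : ¬(k ∈ K ∧ ρ k = s) := by
        intro ⟨h1, h2⟩
        exact hk2 (Finset.mem_erase.mpr ⟨hkj, Finset.mem_filter.mpr ⟨h1, h2⟩⟩)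
      set J₂ : Finset J := insert j (J'.erase k) with hJ₂
      set σ₂ : J → S := Function.update σ j s with hσ₂def
      have hjek : j ∉ J'.erase k := fun h => hjJ' (Finset.mem_of_mem_erase h)
      have hkJ₂ : k ∉ J₂ := by
        simp only [hJ₂, Finset.mem_insert, Finset.mem_erase]
        rintro (rfl | ⟨h, _⟩)
        · exact hjJ' hkJ'
        · exact h rfl
      have hJ'pos : 1 ≤ J'.card := Finset.card_pos.mpr ⟨k, hkJ'⟩
      have hcard₂ : J₂.card = J'.card := by
        rw [hJ₂, Finset.card_insert_of_notMem hjek, Finset.card_erase_of_mem hkJ']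
        omega
      have hσ₂ : IsPartialSchedule B T J₂ σ₂ := by
        constructor
        · intro m hm
          rcases Finset.mem_insert.mp hm with rfl | hm
          · simpa [hσ₂def] using hsT
          · have hmj : m ≠ j := fun h => hjek (h ▸ hm)
            simpa [hσ₂def, Function.update_of_ne hmj] using
              hσ.1 m (Finset.mem_of_mem_erase hm)
        · intro s'
          by_cases hss : s' = s
          · subst hss
            have hfe : J₂.filter (fun m => σ₂ m = s)
                = insert j ((J'.filter (fun m => σ m = s)).erase k) := by
              ext m
              by_cases hmj : m = j
              · subst hmj; simp [hJ₂, hσ₂def, hkj.symm]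
              · simp only [hJ₂, hσ₂def, Finset.mem_filter, Finset.mem_insert,
                  Finset.mem_erase, Function.update_of_ne hmj]
                tauto
            rw [hfe]
            have : ((J'.filter (fun m => σ m = s)).erase k).card = B - 1 := by
              rw [Finset.card_erase_of_mem hk1, hB]
            have hB1 : 1 ≤ B := by
              have := Finset.card_pos.mpr ⟨k, hk1⟩
              omega
            calc (insert j ((J'.filter (fun m => σ m = s)).erase k)).card
                ≤ ((J'.filter (fun m => σ m = s)).erase k).card + 1 :=
                  Finset.card_insert_le _ _
              _ ≤ B := by omega
          · have hfe : J₂.filter (fun m => σ₂ m = s')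
                ⊆ J'.filter (fun m => σ m = s') := by
              intro m hm
              obtain ⟨hm1, hm2⟩ := Finset.mem_filter.mp hm
              rcases Finset.mem_insert.mp hm1 with rfl | hm1
              · rw [hσ₂def] at hm2; simp at hm2; exact absurd hm2.symm hss
              · have hmj : m ≠ j := fun h => hjek (h ▸ hm1)
                rw [hσ₂def, Function.update_of_ne hmj] at hm2
                exact Finset.mem_filter.mpr ⟨Finset.mem_of_mem_erase hm1, hm2⟩
            exact le_trans (Finset.card_le_card hfe) (hσ.2 s')
      have himg₂ : J₂.image σ₂ ⊆ J'.image σ := by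
        intro x hx
        obtain ⟨m, hm, rfl⟩ := Finset.mem_image.mp hx
        rcases Finset.mem_insert.mp hm with rfl | hm
        · rw [hσ₂def]; simp only [Function.update_self]
          exact Finset.mem_image.mpr ⟨k, hkJ', hkσ⟩
        · have hmj : m ≠ j := fun h => hjek (h ▸ hm)
          rw [hσ₂def, Function.update_of_ne hmj]
          exact Finset.mem_image.mpr ⟨m, Finset.mem_of_mem_erase hm, rfl⟩
      by_cases hkK : k ∈ K
      · -- continue the augmenting path with job `k`
        have hρk : ρ k ≠ s := fun h => hknot ⟨hkK, h⟩
        have hsd : J₂ \ K = J' \ K := by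
          ext m
          simp only [hJ₂, Finset.mem_sdiff, Finset.mem_insert, Finset.mem_erase]
          constructor
          · rintro ⟨rfl | ⟨hmk, hmJ⟩, hmK⟩
            · exact absurd hjK hmK
            · exact ⟨hmJ, hmK⟩
          · rintro ⟨hmJ, hmK⟩
            exact ⟨Or.inr ⟨fun h => hmK (h ▸ hkK), hmJ⟩, hmK⟩
        have hfil : (J₂ ∩ K).filter (fun m => σ₂ m ≠ ρ m)
            = ((J' ∩ K).filter (fun m => σ m ≠ ρ m)).erase k := by
          ext m
          by_cases hmj : m = j
          · subst hmj
            simp only [hJ₂, hσ₂def, Finset.mem_filter, Finset.mem_inter,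
              Finset.mem_insert, Finset.mem_erase, Function.update_self]
            constructor
            · rintro ⟨_, h⟩; exact absurd rfl h
            · rintro ⟨_, ⟨h, _⟩, _⟩; exact absurd h hjJ'
          · simp only [hJ₂, hσ₂def, Finset.mem_filter, Finset.mem_inter,
              Finset.mem_insert, Finset.mem_erase, Function.update_of_ne hmj, hmj,
              false_or]
            tauto
        have hkfil : k ∈ (J' ∩ K).filter (fun m => σ m ≠ ρ m) :=
          Finset.mem_filter.mpr ⟨Finset.mem_inter.mpr ⟨hkJ', hkK⟩,
            by rw [hkσ]; exact fun h => hρk h.symm⟩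
        obtain ⟨fc, hfc⟩ : ∃ fc, ((J' ∩ K).filter (fun m => σ m ≠ ρ m)).card = fc + 1 :=
          ⟨_, (Nat.succ_pred_eq_of_pos (Finset.card_pos.mpr ⟨k, hkfil⟩)).symm⟩
        obtain ⟨J₃, σ₃, t, h1, h2, h3⟩ :=
          ih J₂ σ₂ k hσ₂ hkK hkJ₂ (hcard₂ ▸ hcardlt) (by
            rw [hsd, hfil, Finset.card_erase_of_mem hkfil, hfc]
            rw [hfc] at hΦ
            simp only [Nat.add_sub_cancel]
            linarith)
        exact ⟨J₃, σ₃, t, by rw [h1, hcard₂], h2,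
          h3.trans (Finset.insert_subset_insert t himg₂)⟩
      · -- `k` leaves the picture entirely: restart with any job of `K \ J₂`
        have hksd : k ∈ J' \ K := Finset.mem_sdiff.mpr ⟨hkJ', hkK⟩
        have hsd₂ : J₂ \ K = (J' \ K).erase k := by
          ext m
          by_cases hmj : m = j
          · subst hmj
            simp only [hJ₂, Finset.mem_sdiff, Finset.mem_insert, Finset.mem_erase]
            constructor
            · rintro ⟨_, hmK⟩; exact absurd hjK hmK
            · rintro ⟨_, _, hmK⟩; exact absurd hjK hmK
          · simp only [hJ₂, Finset.mem_sdiff, Finset.mem_insert, Finset.mem_erase, hmj,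
              false_or]
            tauto
        obtain ⟨d, hd⟩ : ∃ d, (J' \ K).card = d + 1 :=
          ⟨_, (Nat.succ_pred_eq_of_pos (Finset.card_pos.mpr ⟨k, hksd⟩)).symm⟩
        obtain ⟨j₂, hj₂K, hj₂J₂⟩ := exists_mem_notMem' (hcard₂ ▸ hcardlt)
        have hf₂ : ((J₂ ∩ K).filter (fun m => σ₂ m ≠ ρ m)).card ≤ Fintype.card J :=
          le_trans (Finset.card_le_card (le_trans (Finset.filter_subset _ _)
            (Finset.inter_subset_left))) (Finset.card_le_univ _)
        obtain ⟨J₃, σ₃, t, h1, h2, h3⟩ :=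
          ih J₂ σ₂ j₂ hσ₂ hj₂K hj₂J₂ (hcard₂ ▸ hcardlt) (by
            rw [hsd₂, Finset.card_erase_of_mem hksd, hd]
            rw [hd, Nat.mul_add, Nat.mul_one] at hΦ
            simp only [Nat.add_sub_cancel]
            linarith)
        exact ⟨J₃, σ₃, t, by rw [h1, hcard₂], h2,
          h3.trans (Finset.insert_subset_insert t himg₂)⟩

/-- Iterating the augmenting step: `A ≤ |im σ| + (ι - |J'|)` for any schedule. -/
lemma key_bound {J S : Type*} [Fintype J] [Fintype S] [DecidableEq J] [DecidableEq S]
    (T : J → Finset S) (ι A : ℕ)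
    (hι : IsGreatest {n : ℕ | ∃ J' : Finset J, Schedulable 2 T J' ∧ J'.card = n} ι)
    (hA : IsLeast {m : ℕ | ∃ (J' : Finset J) (σ : J → S),
        J'.card = ι ∧ IsPartialSchedule 2 T J' σ ∧ (J'.image σ).card = m} A) :
    ∀ (d : ℕ) (J' : Finset J) (σ : J → S), IsPartialSchedule 2 T J' σ →
      J'.card + d = ι → A ≤ (J'.image σ).card + d := by
  intro d
  induction d with
  | zero => intro J' σ hσ hc; exact hA.2 ⟨J', σ, by simpa using hc, hσ, rfl⟩
  | succ d ih =>
    intro J' σ hσ hc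
    obtain ⟨K, ⟨ρ, hρ⟩, hK⟩ := hι.1
    have hlt : J'.card < K.card := by omega
    obtain ⟨j, hjK, hjJ'⟩ := exists_mem_notMem' hlt
    obtain ⟨J'', σ'', t, h1, h2, h3⟩ :=
      aug_step hρ _ J' σ j hσ hjK hjJ' hlt (Nat.lt_succ_self _)
    have hrec := ih J'' σ'' h2 (by omega)
    have himc : (J''.image σ'').card ≤ (J'.image σ).card + 1 :=
      le_trans (Finset.card_le_card h3) (Finset.card_insert_le _ _)
    omega

/-- For `B = 2`: let `ι` be the maximum cardinality of a schedulable subset, and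
`A` the minimum active time over all schedules of subsets of cardinality `ι`.
Then the maximum over all subsets `J'` and schedules `σ` of `J'` of
`|J'| + |S \ range σ|` equals `ι + |S| - A`. -/
theorem max_jobs_plus_unused_slots
    {J S : Type*} [Fintype J] [Fintype S] [DecidableEq J] [DecidableEq S]
    (T : J → Finset S) (hT : ∀ j, (T j).Nonempty)
    (ι A : ℕ)
    (hι : IsGreatest {n : ℕ | ∃ J' : Finset J, Schedulable 2 T J' ∧ J'.card = n} ι)
    (hA : IsLeast {m : ℕ | ∃ (J' : Finset J) (σ : J → S),
        J'.card = ι ∧ IsPartialSchedule 2 T J' σ ∧ (J'.image σ).card = m} A) :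
    IsGreatest {n : ℕ | ∃ (J' : Finset J) (σ : J → S),
        IsPartialSchedule 2 T J' σ ∧ J'.card + (Finset.univ \ J'.image σ).card = n}
      (ι + Fintype.card S - A) := by
  constructor
  · obtain ⟨J₀, σ₀, hc₀, hσ₀, hA₀⟩ := hA.1
    refine ⟨J₀, σ₀, hσ₀, ?_⟩
    have hsub : J₀.image σ₀ ⊆ Finset.univ := Finset.subset_univ _
    have hAS : A ≤ Fintype.card S := by
      rw [← hA₀, ← Finset.card_univ]; exact Finset.card_le_card hsub
    rw [Finset.card_sdiff_of_subset hsub, hA₀, hc₀, Finset.card_univ]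
    omega
  · rintro n ⟨J', σ, hσ, rfl⟩
    have hJι : J'.card ≤ ι := hι.2 ⟨J', ⟨σ, hσ⟩, rfl⟩
    have hkey : A ≤ (J'.image σ).card + (ι - J'.card) :=
      key_bound T ι A hι hA (ι - J'.card) J' σ hσ (by omega)
    have him : (J'.image σ).card ≤ Fintype.card S := by
      rw [← Finset.card_univ]; exact Finset.card_le_card (Finset.subset_univ _)
    rw [Finset.card_sdiff_of_subset (Finset.subset_univ _), Finset.card_univ]
    omega
end

section
/- Let B ≥ 1 and consider a feasible unit-job interval instance in which, for every integer t, at most B jobs j have deadline d_j = t. Then there exists a schedule of minimum active time all of whose active slots belong to the set of deadlines {d_j : j ∈ J}. -/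
open Finset

/-- A schedule of a unit-job interval instance: each job `j` is assigned an integer
slot in `[r j, d j]`, with at most `B` jobs per slot. -/
def IsIntSchedule {J : Type*} [Fintype J] (B : ℕ) (r d : J → ℤ) (σ : J → ℤ) : Prop :=
  (∀ j, r j ≤ σ j ∧ σ j ≤ d j) ∧
    ∀ t : ℤ, (Finset.univ.filter (fun j => σ j = t)).card ≤ B

lemma cascade {J : Type*} [Fintype J] [DecidableEq J]
    (B : ℕ) (hB : 1 ≤ B) (r d : J → ℤ)
    (hdl : ∀ t : ℤ, (Finset.univ.filter (fun j => d j = t)).card ≤ B) :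
    ∀ n : ℕ, ∀ (σ : J → ℤ) (S : Finset J) (p : ℤ),
      (∀ j ∉ S, r j ≤ σ j ∧ σ j ≤ d j) →
      (∀ j ∈ S, r j ≤ p ∧ p ≤ d j) →
      (∀ s : ℤ, (univ.filter (fun j => j ∉ S ∧ σ j = s)).card ≤ B) →
      (∀ s : ℤ, p ≤ s → s < p + n → (univ.filter (fun j => j ∉ S ∧ σ j = s)).card = B) →
      ((univ.filter (fun j => j ∉ S ∧ σ j = p + n)).card + S.card ≤ B) →
      ∃ τ : J → ℤ, (∀ j, r j ≤ τ j ∧ τ j ≤ d j) ∧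
        (∀ s : ℤ, (univ.filter (fun j => τ j = s)).card ≤ B) ∧
        (∀ j ∉ S, σ j ≤ τ j) ∧ (∀ j ∈ S, p ≤ τ j) ∧
        (∀ j, (∃ j', j' ∉ S ∧ τ j = σ j') ∨ τ j = p + n) := by
  intro n
  induction n with
  | zero =>
    intro σ S p h1 h3 hcap hfull hc
    simp only [Nat.cast_zero, add_zero] at hc
    refine ⟨fun j => if j ∈ S then p else σ j, ?_, ?_, ?_, ?_, ?_⟩
    · intro j
      by_cases hj : j ∈ S
      · simpa [hj] using h3 j hj
      · simpa [hj] using h1 j hj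
    · intro s
      by_cases hs : s = p
      · subst hs
        have hsub : (univ.filter fun j => (if j ∈ S then s else σ j) = s) ⊆
            S ∪ (univ.filter fun j => j ∉ S ∧ σ j = s) := by
          intro j hj
          simp only [mem_filter, mem_univ, true_and] at hj
          by_cases h : j ∈ S
          · exact mem_union_left _ h
          · simp only [h, if_false] at hj
            exact mem_union_right _ (by simp [h, hj])
        calc (univ.filter fun j => (if j ∈ S then s else σ j) = s).card
            ≤ (S ∪ (univ.filter fun j => j ∉ S ∧ σ j = s)).card := card_le_card hsub
          _ ≤ S.card + (univ.filter fun j => j ∉ S ∧ σ j = s).card := card_union_le _ _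
          _ ≤ B := by omega
      · have heq : (univ.filter fun j => (if j ∈ S then p else σ j) = s)
            = univ.filter fun j => j ∉ S ∧ σ j = s := by
          ext j
          simp only [mem_filter, mem_univ, true_and]
          by_cases h : j ∈ S <;> simp [h, hs, Ne.symm hs]
        rw [heq]; exact hcap s
    · intro j hj; simp [hj]
    · intro j hj; simp [hj]
    · intro j
      by_cases hj : j ∈ S
      · right; simp [hj]
      · left; exact ⟨j, hj, by simp [hj]⟩
  | succ n ih =>
    intro σ S p h1 h3 hcap hfull hc
    have hfp : (univ.filter fun j => j ∉ S ∧ σ j = p).card = B :=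
      hfull p le_rfl (by push_cast; omega)
    set pool := S ∪ univ.filter (fun j => j ∉ S ∧ σ j = p) with hpool
    have hdisj : Disjoint S (univ.filter fun j => j ∉ S ∧ σ j = p) := by
      rw [Finset.disjoint_left]
      intro a ha ha'
      simp only [mem_filter] at ha'
      exact ha'.2.1 ha
    have hpoolcard : pool.card = S.card + B := by
      rw [hpool, card_union_of_disjoint hdisj, hfp]
    have hpoolmem : ∀ j ∈ pool, (r j ≤ p ∧ p ≤ d j) := by
      intro j hj
      rw [hpool, mem_union] at hj
      rcases hj with hj | hj
      · exact h3 j hj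
      · simp only [mem_filter, mem_univ, true_and] at hj
        obtain ⟨hjS, hjp⟩ := hj
        have := h1 j hjS
        constructor <;> omega
    have hgood : S.card ≤ (pool.filter fun j => p + 1 ≤ d j).card := by
      have hsplit := card_filter_add_card_filter_not
        (s := pool) (p := fun j => p + 1 ≤ d j)
      have hsub2 : (pool.filter fun j => ¬ (p + 1 ≤ d j)) ⊆ univ.filter fun j => d j = p := by
        intro j hj
        rw [mem_filter] at hj
        have := hpoolmem j hj.1
        simp only [mem_filter, mem_univ, true_and]
        omega
      have h2 := card_le_card hsub2
      have h3' := hdl p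
      omega
    obtain ⟨S', hS'sub, hS'card⟩ := exists_subset_card_eq hgood
    have hS'pool : S' ⊆ pool := hS'sub.trans (filter_subset _ _)
    have hS'd : ∀ j ∈ S', p + 1 ≤ d j := by
      intro j hj
      exact (mem_filter.mp (hS'sub hj)).2
    set σ' := fun j => if j ∈ S then p else σ j with hσ'
    have hσ'pool : ∀ j ∈ pool, σ' j = p := by
      intro j hj
      rw [hpool, mem_union] at hj
      rcases hj with hj | hj
      · simp [hσ', hj]
      · simp only [mem_filter, mem_univ, true_and] at hj
        simp [hσ', hj.1, hj.2]
    have hE1 : ∀ s : ℤ, s ≠ p →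
        (univ.filter fun j => j ∉ S' ∧ σ' j = s) = (univ.filter fun j => j ∉ S ∧ σ j = s) := by
      intro s hs
      ext j
      simp only [mem_filter, mem_univ, true_and]
      constructor
      · rintro ⟨hjS', hjv⟩
        by_cases hj : j ∈ S
        · simp [hσ', hj] at hjv; exact absurd hjv.symm hs
        · simp only [hσ', hj, if_false] at hjv
          exact ⟨hj, hjv⟩
      · rintro ⟨hjS, hjv⟩
        refine ⟨fun hjS' => ?_, by simp [hσ', hjS, hjv]⟩
        have hjp := hσ'pool j (hS'pool hjS')
        simp only [hσ', hjS, if_false] at hjp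
        exact hs (hjv ▸ hjp ▸ rfl)
    have hE2 : (univ.filter fun j => j ∉ S' ∧ σ' j = p) = pool \ S' := by
      ext j
      simp only [mem_filter, mem_univ, true_and, mem_sdiff]
      constructor
      · rintro ⟨hjS', hjv⟩
        refine ⟨?_, hjS'⟩
        by_cases hj : j ∈ S
        · exact mem_union_left _ hj
        · simp only [hσ', hj, if_false] at hjv
          exact mem_union_right _ (by simp [hj, hjv])
      · rintro ⟨hjpool, hjS'⟩
        exact ⟨hjS', hσ'pool j hjpool⟩
    have hE2card : (univ.filter fun j => j ∉ S' ∧ σ' j = p).card = B := by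
      rw [hE2, card_sdiff_of_subset hS'pool, hpoolcard, hS'card]
      omega
    -- apply IH
    have hcast : (p : ℤ) + (n + 1 : ℕ) = (p + 1) + (n : ℕ) := by push_cast; ring
    obtain ⟨τ, hf1, hf2, hf3, hf4, hf5⟩ := ih σ' S' (p + 1)
      (by
        intro j hj
        by_cases h : j ∈ S
        · have := h3 j h
          simp only [hσ', h, if_true]
          exact ⟨this.1, this.2⟩
        · simpa [hσ', h] using h1 j h)
      (by
        intro j hj
        refine ⟨?_, hS'd j hj⟩
        have := hpoolmem j (hS'pool hj)
        omega)
      (by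
        intro s
        by_cases hs : s = p
        · subst hs; omega
        · rw [hE1 s hs]; exact hcap s)
      (by
        intro s hs1 hs2
        have hs : s ≠ p := by omega
        rw [hE1 s hs]
        exact hfull s (by omega) (by push_cast at hs2 ⊢; omega))
      (by
        have hne : (p + 1 : ℤ) + (n : ℕ) ≠ p := by push_cast; omega
        rw [hE1 _ hne, hS'card]
        rw [← hcast] at *
        convert hc using 3 <;> push_cast <;> ring_nf
        )
    -- build conclusion
    have hwit : ∃ j'', j'' ∉ S ∧ σ j'' = p := by
      have : (univ.filter fun j => j ∉ S ∧ σ j = p).Nonempty := by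
        rw [← card_pos, hfp]; omega
      obtain ⟨j'', hj''⟩ := this
      simp only [mem_filter, mem_univ, true_and] at hj''
      exact ⟨j'', hj''.1, hj''.2⟩
    refine ⟨τ, hf1, hf2, ?_, ?_, ?_⟩
    · intro j hj
      by_cases hjS' : j ∈ S'
      · have hjp : σ j = p := by
          have := hσ'pool j (hS'pool hjS')
          simpa [hσ', hj] using this
        have := hf4 j hjS'
        omega
      · have := hf3 j hjS'
        simpa [hσ', hj] using this
    · intro j hj
      by_cases hjS' : j ∈ S'
      · have := hf4 j hjS'; omega
      · have := hf3 j hjS'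
        simp only [hσ', hj, if_true] at this
        omega
    · intro j
      rcases hf5 j with ⟨j', hj'S', hj'v⟩ | hv
      · by_cases hj' : j' ∈ S
        · obtain ⟨j'', hj''S, hj''v⟩ := hwit
          left
          exact ⟨j'', hj''S, by simp [hσ', hj'] at hj'v; rw [hj'v, hj''v]⟩
        · left
          exact ⟨j', hj', by simpa [hσ', hj'] using hj'v⟩
      · right
        rw [hv]
        push_cast
        ring

lemma improve {J : Type*} [Fintype J] [DecidableEq J]
    (B : ℕ) (hB : 1 ≤ B) (r d : J → ℤ)
    (hdl : ∀ t : ℤ, (Finset.univ.filter (fun j => d j = t)).card ≤ B)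
    (σ : J → ℤ) (hσ : IsIntSchedule B r d σ) (t : ℤ)
    (ht : t ∈ univ.image σ) (hbad : ∀ j, d j ≠ t) :
    ∃ τ : J → ℤ, IsIntSchedule B r d τ ∧ (∀ j, σ j ≤ τ j) ∧ (∃ j, σ j < τ j) ∧
      (univ.image τ).card ≤ (univ.image σ).card := by
  classical
  set occ : ℤ → ℕ := fun s => (univ.filter fun j => σ j = s).card with hocc
  have hoccB : ∀ s, occ s ≤ B := hσ.2
  -- find the first non-full slot after t
  have himg : ∀ j, σ j ∈ univ.image σ := fun j => mem_image_of_mem σ (mem_univ j)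
  have hne : (univ.image σ).Nonempty := ⟨t, ht⟩
  set Tmax := (univ.image σ).max' hne with hTmax
  have htle : t ≤ Tmax := le_max' _ t ht
  have hwit : ∃ n : ℕ, occ (t + 1 + n) < B := by
    refine ⟨(Tmax - t).toNat, ?_⟩
    have hv : t + 1 + ((Tmax - t).toNat : ℤ) = Tmax + 1 := by omega
    rw [hv]
    have : occ (Tmax + 1) = 0 := by
      rw [hocc]
      simp only [card_eq_zero]
      rw [filter_eq_empty_iff]
      intro j _
      have := le_max' _ (σ j) (himg j)
      omega
    omega
  set n0 := Nat.find hwit with hn0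
  set c := t + 1 + (n0 : ℤ) with hcdef
  have hcfree : occ c < B := Nat.find_spec hwit
  have hfull : ∀ s : ℤ, t + 1 ≤ s → s < c → occ s = B := by
    intro s hs1 hs2
    have hm : s = t + 1 + ((s - t - 1).toNat : ℤ) := by omega
    have hmlt : (s - t - 1).toNat < n0 := by omega
    have := Nat.find_min hwit hmlt
    rw [← hm] at this
    have := hoccB s
    omega
  have hkpos : 1 ≤ occ t := by
    rw [mem_image] at ht
    obtain ⟨j, _, hj⟩ := ht
    rw [hocc]
    have : j ∈ univ.filter fun j => σ j = t := by simp [hj]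
    exact card_pos.mpr ⟨j, this⟩
  have hocct : occ t = (univ.filter fun j => σ j = t).card := rfl
  have hoccc : occ c = (univ.filter fun j => σ j = c).card := rfl
  have hcfree2 : (univ.filter fun j => σ j = c).card < B := hcfree
  set k₀ := min (occ t) (B - occ c) with hk₀
  have hk₀l : k₀ ≤ occ t := min_le_left _ _
  have hk₀r : k₀ ≤ B - occ c := min_le_right _ _
  have hk₀pos : 1 ≤ k₀ := by omega
  have hk₀le : k₀ ≤ (univ.filter fun j => σ j = t).card := by
    rw [hocc] at hk₀; omega
  obtain ⟨S₀, hS₀sub, hS₀card⟩ := exists_subset_card_eq hk₀le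
  have hS₀t : ∀ j ∈ S₀, σ j = t := by
    intro j hj
    exact (mem_filter.mp (hS₀sub hj)).2
  have hErase : ∀ s : ℤ, t < s →
      (univ.filter fun j => j ∉ S₀ ∧ σ j = s) = (univ.filter fun j => σ j = s) := by
    intro s hs
    ext j
    simp only [mem_filter, mem_univ, true_and]
    constructor
    · exact fun h => h.2
    · intro h
      refine ⟨fun hj => ?_, h⟩
      have := hS₀t j hj
      omega
  obtain ⟨τ, hf1, hf2, hf3, hf4, hf5⟩ := cascade B hB r d hdl n0 σ S₀ (t + 1)
    (fun j _ => hσ.1 j)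
    (by
      intro j hj
      have hjt := hS₀t j hj
      have h1 := (hσ.1 j).1
      have h2 := (hσ.1 j).2
      have h3 := hbad j
      constructor <;> omega)
    (by
      intro s
      calc (univ.filter fun j => j ∉ S₀ ∧ σ j = s).card
          ≤ (univ.filter fun j => σ j = s).card :=
            card_le_card (fun j hj => by
              simp only [mem_filter, mem_univ, true_and] at hj ⊢
              exact hj.2)
        _ ≤ B := hσ.2 s
    )
    (by
      intro s hs1 hs2
      rw [hErase s (by omega)]
      exact hfull s hs1 (by rw [hcdef]; push_cast; omega))
    (by
      have hc' : (t + 1 : ℤ) + (n0 : ℤ) = c := by rw [hcdef]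
      rw [hErase _ (by omega), hS₀card, hc']
      omega)
  have hτt : ∀ j ∈ S₀, t < τ j := by
    intro j hj
    have := hf4 j hj
    have := hS₀t j hj
    omega
  have hmono : ∀ j, σ j ≤ τ j := by
    intro j
    by_cases hj : j ∈ S₀
    · have := hτt j hj; have := hS₀t j hj; omega
    · exact hf3 j hj
  have hS₀ne : S₀.Nonempty := by rw [← card_pos, hS₀card]; omega
  obtain ⟨j₁, hj₁⟩ := hS₀ne
  refine ⟨τ, ⟨hf1, hf2⟩, hmono, ⟨j₁, by
    have := hτt j₁ hj₁; have := hS₀t j₁ hj₁; omega⟩, ?_⟩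
  have hcimg : (t + 1 : ℤ) + (n0 : ℤ) = c := by rw [hcdef]
  by_cases hc0 : occ c = 0
  · -- c inactive: S₀ is all jobs at t; image τ ⊆ insert c (erase image t)
    have hk₀k : k₀ = occ t := by have := hoccB t; omega
    have hS₀eq : S₀ = univ.filter fun j => σ j = t := by
      apply eq_of_subset_of_card_le hS₀sub
      rw [hS₀card, hk₀k, hocc]
    have hsub : univ.image τ ⊆ insert c ((univ.image σ).erase t) := by
      intro x hx
      rw [mem_image] at hx
      obtain ⟨j, _, hj⟩ := hx
      rcases hf5 j with ⟨j', hj'S, hj'v⟩ | hv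
      · have hj't : σ j' ≠ t := by
          intro h
          exact hj'S (by rw [hS₀eq]; simp [h])
        rw [← hj, hj'v]
        exact mem_insert_of_mem (mem_erase.mpr ⟨hj't, himg j'⟩)
      · rw [← hj, hv, hcimg]
        exact mem_insert_self _ _
    calc (univ.image τ).card ≤ (insert c ((univ.image σ).erase t)).card := card_le_card hsub
      _ ≤ ((univ.image σ).erase t).card + 1 := card_insert_le _ _
      _ = (univ.image σ).card := by
          rw [card_erase_of_mem ht]
          have := card_pos.mpr hne
          omega
  · -- c active
    have hcmem : c ∈ univ.image σ := by
      have : (univ.filter fun j => σ j = c).Nonempty := by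
        rw [← card_pos, ← hoccc]
        omega
      obtain ⟨j, hj⟩ := this
      rw [mem_filter] at hj
      rw [mem_image]
      exact ⟨j, hj.1, hj.2⟩
    apply card_le_card
    intro x hx
    rw [mem_image] at hx
    obtain ⟨j, _, hj⟩ := hx
    rcases hf5 j with ⟨j', _, hj'v⟩ | hv
    · rw [← hj, hj'v]; exact himg j'
    · rw [← hj, hv, hcimg]; exact hcmem

/-- If at most `B` jobs share any deadline and the instance is feasible, then some
schedule of minimum active time has all of its active slots among the deadlines. -/
theorem min_active_schedule_on_deadlines
    {J : Type*} [Fintype J] [DecidableEq J]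
    (B : ℕ) (hB : 1 ≤ B) (r d : J → ℤ) (hrd : ∀ j, r j ≤ d j)
    (hdl : ∀ t : ℤ, (Finset.univ.filter (fun j => d j = t)).card ≤ B)
    (hfeas : ∃ σ : J → ℤ, IsIntSchedule B r d σ) :
    ∃ σ : J → ℤ, IsIntSchedule B r d σ ∧
      (∀ σ' : J → ℤ, IsIntSchedule B r d σ' →
        (Finset.univ.image σ).card ≤ (Finset.univ.image σ').card) ∧
      ∀ j : J, ∃ j' : J, σ j = d j' := by
  classical
  obtain ⟨σ₀, hσ₀⟩ := hfeas
  set M := ∑ j : J, (d j - r j).toNat with hM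
  set meas : (J → ℤ) → ℕ :=
    fun σ => (univ.image σ).card * (M + 1) + ∑ j : J, (d j - σ j).toNat with hmeas
  have hdef : ∀ σ : J → ℤ, IsIntSchedule B r d σ → (∑ j : J, (d j - σ j).toNat) ≤ M := by
    intro σ hσ
    apply Finset.sum_le_sum
    intro j _
    have := (hσ.1 j).1
    omega
  set Sset : Set ℕ := {n | ∃ σ : J → ℤ, IsIntSchedule B r d σ ∧ meas σ = n} with hSset
  have hSne : Sset.Nonempty := ⟨meas σ₀, σ₀, hσ₀, rfl⟩
  obtain ⟨σ, hσ, hσm⟩ := Nat.sInf_mem hSne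
  have hmin : ∀ τ : J → ℤ, IsIntSchedule B r d τ → meas σ ≤ meas τ := by
    intro τ hτ
    rw [hσm]
    exact Nat.sInf_le ⟨τ, hτ, rfl⟩
  refine ⟨σ, hσ, ?_, ?_⟩
  · intro σ' hσ'
    by_contra h
    push_neg at h
    have h1 := hmin σ' hσ'
    have h2 := hdef σ' hσ'
    have h3 : ((univ.image σ').card + 1) * (M + 1) ≤ (univ.image σ).card * (M + 1) :=
      Nat.mul_le_mul_right _ (by omega)
    rw [Nat.succ_mul] at h3
    simp only [hmeas] at h1
    omega
  · intro j₀
    by_contra h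
    push_neg at h
    have hbad : ∀ j', d j' ≠ σ j₀ := fun j' => fun he => h j' he.symm
    have ht : σ j₀ ∈ univ.image σ := mem_image_of_mem σ (mem_univ j₀)
    obtain ⟨τ, hτ, hτmono, ⟨j₁, hj₁⟩, hτcard⟩ :=
      improve B hB r d hdl σ hσ (σ j₀) ht hbad
    have h1 := hmin τ hτ
    have hsumlt : (∑ j : J, (d j - τ j).toNat) < ∑ j : J, (d j - σ j).toNat := by
      apply Finset.sum_lt_sum
      · intro j _
        have := hτmono j
        have := (hτ.1 j).2
        omega
      · refine ⟨j₁, mem_univ _, ?_⟩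
        have := (hτ.1 j₁).2
        omega
    have h3 : (univ.image τ).card * (M + 1) ≤ (univ.image σ).card * (M + 1) :=
      Nat.mul_le_mul_right _ hτcard
    simp only [hmeas] at h1
    omega
end

section
/- Let B ≥ 1 and consider a unit-job interval instance I. Suppose job x satisfies r_x < d_x and there exist B jobs j₁, …, j_B, pairwise distinct and distinct from x, with d_{j_i} = d_x and r_{j_i} ≥ r_x for all i. Let I' be the instance obtained from I by replacing the deadline of x by d_x − 1 (all other jobs unchanged). Then I is feasible if and only if I' is feasible, and when they are feasible, the minimum active time over schedules of I equals the minimum active time over schedules of I'. -/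
open Finset

lemma isIntSchedule_comp_equiv {J : Type*} [Fintype J] (B : ℕ) (r d : J → ℤ)
    (σ : J → ℤ) (e : Equiv.Perm J) (h2 : ∀ t : ℤ,
      (Finset.univ.filter (fun j => σ j = t)).card ≤ B) :
    ∀ t : ℤ, (Finset.univ.filter (fun j => σ (e j) = t)).card ≤ B := by
  classical
  intro t
  refine le_trans (le_of_eq ?_) (h2 t)
  apply Finset.card_bij' (fun a _ => e a) (fun a _ => e.symm a) <;> simp

lemma image_comp_equiv {J : Type*} [Fintype J] [DecidableEq J] (σ : J → ℤ)
    (e : Equiv.Perm J) :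
    (Finset.univ.image (fun j => σ (e j))) = Finset.univ.image σ := by
  ext t
  simp only [Finset.mem_image, Finset.mem_univ, true_and]
  constructor
  · rintro ⟨a, rfl⟩; exact ⟨e a, rfl⟩
  · rintro ⟨a, rfl⟩; exact ⟨e.symm a, by simp⟩

/-- key transformation -/
lemma exists_schedule_update {J : Type*} [Fintype J] [DecidableEq J]
    (B : ℕ) (r d : J → ℤ)
    (x : J) (hx : r x < d x)
    (F : Finset J) (hFcard : F.card = B) (hxF : x ∉ F)
    (hFd : ∀ j ∈ F, d j = d x) (hFr : ∀ j ∈ F, r x ≤ r j)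
    (σ : J → ℤ) (hσ : IsIntSchedule B r d σ) :
    ∃ σ' : J → ℤ, IsIntSchedule B r (Function.update d x (d x - 1)) σ' ∧
      Finset.univ.image σ' = Finset.univ.image σ := by
  classical
  obtain ⟨h1, h2⟩ := hσ
  by_cases hσx : σ x ≤ d x - 1
  · refine ⟨σ, ⟨⟨fun j => ?_, h2⟩, rfl⟩⟩
    rcases eq_or_ne j x with rfl | hj
    · simpa [Function.update_self] using ⟨(h1 j).1, (by omega : σ j < d j)⟩
    · simpa [Function.update_of_ne hj] using h1 j
  · -- σ x = d x
    have hσxd : σ x = d x := le_antisymm (h1 x).2 (by omega)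
    -- find y ∈ F with σ y ≠ d x
    have hy : ∃ y ∈ F, σ y ≠ d x := by
      by_contra hcon
      push_neg at hcon
      have hsub : insert x F ⊆ Finset.univ.filter (fun j => σ j = d x) := by
        intro j hj
        simp only [Finset.mem_insert] at hj
        rcases hj with rfl | hj
        · simp [hσxd]
        · simp [hcon j hj]
      have := Finset.card_le_card hsub
      rw [Finset.card_insert_of_notMem hxF, hFcard] at this
      exact absurd (le_trans this (h2 (d x))) (by omega)
    obtain ⟨y, hyF, hyne⟩ := hy
    have hyd : σ y ≤ d x - 1 := by
      have := (h1 y).2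
      rw [hFd y hyF] at this
      omega
    have hxy : x ≠ y := fun h => hxF (h ▸ hyF)
    refine ⟨fun j => σ (Equiv.swap x y j), ⟨⟨fun j => ?_,
      isIntSchedule_comp_equiv B r d σ _ h2⟩, image_comp_equiv σ _⟩⟩
    rcases eq_or_ne j x with rfl | hjx
    · simp only [Equiv.swap_apply_left, Function.update_self]
      exact ⟨le_trans (hFr y hyF) (h1 y).1, hyd⟩
    · simp only [Function.update_of_ne hjx]
      rcases eq_or_ne j y with rfl | hjy
      · simp only [Equiv.swap_apply_right]
        constructor
        · rw [hσxd, ← hFd j hyF]; exact le_trans (h1 j).1 (h1 j).2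
        · rw [hσxd, hFd j hyF]
      · simp only [Equiv.swap_apply_of_ne_of_ne hjx hjy]
        exact h1 j

lemma schedule_of_update {J : Type*} [Fintype J] [DecidableEq J]
    (B : ℕ) (r d : J → ℤ) (x : J) (σ : J → ℤ)
    (hσ : IsIntSchedule B r (Function.update d x (d x - 1)) σ) :
    IsIntSchedule B r d σ := by
  obtain ⟨h1, h2⟩ := hσ
  refine ⟨fun j => ⟨(h1 j).1, ?_⟩, h2⟩
  rcases eq_or_ne j x with rfl | hj
  · have := (h1 j).2; rw [Function.update_self] at this; omega
  · have := (h1 j).2; rwa [Function.update_of_ne hj] at this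

/-- Decrementing the deadline of a job `x` that has `B` other jobs with the same
deadline and no earlier release times preserves feasibility and the minimum
active time. -/
theorem deadline_decrement_preserves_feasibility_and_min_active_time
    {J : Type*} [Fintype J] [DecidableEq J]
    (B : ℕ) (hB : 1 ≤ B) (r d : J → ℤ) (hrd : ∀ j, r j ≤ d j)
    (x : J) (hx : r x < d x)
    (F : Finset J) (hFcard : F.card = B) (hxF : x ∉ F)
    (hFd : ∀ j ∈ F, d j = d x) (hFr : ∀ j ∈ F, r x ≤ r j) :
    ((∃ σ : J → ℤ, IsIntSchedule B r d σ) ↔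
      (∃ σ : J → ℤ, IsIntSchedule B r (Function.update d x (d x - 1)) σ)) ∧
    ((∃ σ : J → ℤ, IsIntSchedule B r d σ) →
      sInf {n : ℕ | ∃ σ : J → ℤ, IsIntSchedule B r d σ ∧ (Finset.univ.image σ).card = n} =
        sInf {n : ℕ | ∃ σ : J → ℤ,
          IsIntSchedule B r (Function.update d x (d x - 1)) σ ∧
          (Finset.univ.image σ).card = n}) := by
  classical
  constructor
  · constructor
    · rintro ⟨σ, hσ⟩
      obtain ⟨σ', hσ', _⟩ := exists_schedule_update B r d x hx F hFcard hxF hFd hFr σ hσ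
      exact ⟨σ', hσ'⟩
    · rintro ⟨σ, hσ⟩
      exact ⟨σ, schedule_of_update B r d x σ hσ⟩
  · rintro ⟨σ₀, hσ₀⟩
    set S := {n : ℕ | ∃ σ : J → ℤ, IsIntSchedule B r d σ ∧ (Finset.univ.image σ).card = n}
    set S' := {n : ℕ | ∃ σ : J → ℤ,
      IsIntSchedule B r (Function.update d x (d x - 1)) σ ∧ (Finset.univ.image σ).card = n}
    have hSne : S.Nonempty := ⟨_, σ₀, hσ₀, rfl⟩
    obtain ⟨σ₀', hσ₀', _⟩ := exists_schedule_update B r d x hx F hFcard hxF hFd hFr σ₀ hσ₀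
    have hS'ne : S'.Nonempty := ⟨_, σ₀', hσ₀', rfl⟩
    apply le_antisymm
    · obtain ⟨σ', hσ', hc⟩ := Nat.sInf_mem hS'ne
      exact Nat.sInf_le ⟨σ', schedule_of_update B r d x σ' hσ', hc⟩
    · obtain ⟨σ, hσ, hc⟩ := Nat.sInf_mem hSne
      obtain ⟨σ', hσ', him⟩ := exists_schedule_update B r d x hx F hFcard hxF hFd hFr σ hσ
      exact Nat.sInf_le ⟨σ', hσ', him ▸ hc⟩
end

section
/- Let B ≥ 1 and consider a feasible unit-job interval instance in which, for every integer t, at most B jobs have deadline t. Let D = min_j d_j be the earliest deadline, let J* = {j : d_j = D} (so |J*| ≤ B), and let F_avail = {j ∉ J* : r_j ≤ D} be the other jobs feasible at slot D. Then there exists a schedule σ of minimum active time and a set F ⊆ F_avail with |F| = min(B − |J*|, |F_avail|) such that σ⁻¹(D) = J* ∪ F and for every f ∈ F and every g ∈ F_avail \ F one has d_f ≤ d_g (i.e., the fillers F are chosen among the available jobs with earliest deadlines). -/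
open Finset

/-- Choose a `k`-element "bottom" subset of `s` w.r.t. the values of `dl`. -/
lemma exists_bottom_subset {J : Type*} [DecidableEq J] (dl : J → ℤ) :
    ∀ (k : ℕ) (s : Finset J), k ≤ s.card →
      ∃ F, F ⊆ s ∧ F.card = k ∧ ∀ f ∈ F, ∀ g ∈ s \ F, dl f ≤ dl g := by
  intro k
  induction k with
  | zero => intro s _; exact ⟨∅, empty_subset _, rfl, by simp⟩
  | succ k ih =>
    intro s hk
    obtain ⟨F, hFs, hFc, hFp⟩ := ih s (Nat.le_of_succ_le hk)
    have hne : (s \ F).Nonempty := by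
      rw [← card_pos, card_sdiff_of_subset hFs]
      omega
    obtain ⟨m, hm, hmin⟩ := Finset.exists_min_image (s \ F) dl hne
    refine ⟨insert m F, ?_, ?_, ?_⟩
    · exact insert_subset (mem_sdiff.mp hm).1 hFs
    · rw [card_insert_of_notMem (mem_sdiff.mp hm).2, hFc]
    · intro f hf g hg
      have hg' : g ∈ s \ F := by
        rw [mem_sdiff] at hg ⊢
        exact ⟨hg.1, fun h => hg.2 (mem_insert_of_mem h)⟩
      rcases mem_insert.mp hf with rfl | hf
      · exact hmin g hg'
      · exact hFp f hf g hg'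

/-- Counting bound: if every element of `s` maps into `A` and the fibers of `σ`
(globally) have size at most `B`, then `s.card ≤ B * A.card`. -/
lemma card_le_B_mul {J : Type*} [Fintype J] [DecidableEq J] (B : ℕ) (σ : J → ℤ)
    (s : Finset J) (A : Finset ℤ)
    (h1 : ∀ j ∈ s, σ j ∈ A)
    (h2 : ∀ t : ℤ, (univ.filter (fun j => σ j = t)).card ≤ B) :
    s.card ≤ B * A.card := by
  have hsub : s ⊆ A.biUnion (fun t => univ.filter (fun j => σ j = t)) := by
    intro j hj
    exact mem_biUnion.mpr ⟨σ j, h1 j hj, mem_filter.mpr ⟨mem_univ j, rfl⟩⟩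
  calc s.card ≤ (A.biUnion (fun t => univ.filter (fun j => σ j = t))).card :=
        card_le_card hsub
    _ ≤ ∑ t ∈ A, (univ.filter (fun j => σ j = t)).card := card_biUnion_le
    _ ≤ ∑ _t ∈ A, B := Finset.sum_le_sum (fun t _ => h2 t)
    _ = B * A.card := by rw [Finset.sum_const, smul_eq_mul, mul_comm]

/-- If an interval-counting Hall condition holds (for sets of jobs whose windows all
fit in a common interval `[p,q]`), then the capacitated Hall condition holds for
arbitrary unions of windows. Proof by splitting off the top connected component. -/
lemma interval_union_bound {J : Type*} [DecidableEq J] (B : ℕ) (a dl : J → ℤ)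
    (V : Finset ℤ) (N : Finset J) (ha : ∀ i ∈ N, a i ≤ dl i)
    (H : ∀ p q : ℤ, ∀ s ⊆ N, (∀ i ∈ s, p ≤ a i ∧ dl i ≤ q) →
      s.card ≤ B * ((V ∩ Icc p q).card)) :
    ∀ s ⊆ N, s.card ≤ B * (s.biUnion (fun i => V ∩ Icc (a i) (dl i))).card := by
  intro s
  induction s using Finset.strongInduction with
  | _ s ihs =>
    intro hsN
    rcases s.eq_empty_or_nonempty with rfl | hne
    · simp
    obtain ⟨i₀, hi₀, hmax⟩ := Finset.exists_max_image s dl hne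
    set q := dl i₀ with hq
    set X : Finset ℤ := s.biUnion (fun i => Icc (a i) (dl i)) with hX
    have hqX : q ∈ X := mem_biUnion.mpr ⟨i₀, hi₀, mem_Icc.mpr ⟨ha i₀ (hsN hi₀), le_refl _⟩⟩
    set K : Finset ℤ := X.filter (fun t => ∀ u ∈ Icc t q, u ∈ X) with hK
    have hqK : q ∈ K := by
      rw [hK, mem_filter]
      refine ⟨hqX, fun u hu => ?_⟩
      rw [mem_Icc] at hu
      have : u = q := le_antisymm hu.2 hu.1
      rwa [this]
    have hKne : K.Nonempty := ⟨q, hqK⟩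
    set p₀ := K.min' hKne with hp₀
    have hp₀K : p₀ ∈ K := K.min'_mem hKne
    have hp₀X : p₀ ∈ X := (mem_filter.mp hp₀K).1
    have hIccX : ∀ u ∈ Icc p₀ q, u ∈ X := (mem_filter.mp hp₀K).2
    have hp₀q : p₀ ≤ q := by
      have := mem_biUnion.mp hp₀X
      obtain ⟨i, hi, hui⟩ := this
      rw [mem_Icc] at hui
      exact le_trans hui.2 (hmax i hi)
    set s₁ : Finset J := s.filter (fun i => p₀ ≤ a i) with hs₁
    -- jobs of s outside s₁ have deadline ≤ p₀ - 2
    have hlow : ∀ i ∈ s, i ∉ s₁ → dl i ≤ p₀ - 2 := by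
      intro i hi hns₁
      have hai : a i < p₀ := by
        by_contra h
        exact hns₁ (mem_filter.mpr ⟨hi, by omega⟩)
      by_contra hdi
      push_neg at hdi
      -- then a i ∈ K, contradicting minimality
      have haiK : a i ∈ K := by
        rw [hK, mem_filter]
        constructor
        · exact mem_biUnion.mpr ⟨i, hi, mem_Icc.mpr ⟨le_refl _, ha i (hsN hi)⟩⟩
        · intro u hu
          rw [mem_Icc] at hu
          by_cases hud : u ≤ dl i
          · exact mem_biUnion.mpr ⟨i, hi, mem_Icc.mpr ⟨hu.1, hud⟩⟩
          · exact hIccX u (mem_Icc.mpr ⟨by omega, hu.2⟩)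
      have := K.min'_le _ haiK
      omega
    have hi₀s₁ : i₀ ∈ s₁ := by
      by_contra h
      have := hlow i₀ hi₀ h
      omega
    -- the top component is exactly covered by s₁'s windows
    have hcover : s₁.biUnion (fun i => V ∩ Icc (a i) (dl i)) = V ∩ Icc p₀ q := by
      apply Finset.Subset.antisymm
      · intro u hu
        obtain ⟨i, hi, hui⟩ := mem_biUnion.mp hu
        rw [mem_inter, mem_Icc] at hui
        have his := (mem_filter.mp hi).1
        have hpa := (mem_filter.mp hi).2
        exact mem_inter.mpr ⟨hui.1, mem_Icc.mpr ⟨by omega, le_trans hui.2.2 (hmax i his)⟩⟩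
      · intro u hu
        rw [mem_inter] at hu
        have huX : u ∈ X := hIccX u hu.2
        obtain ⟨i, hi, hui⟩ := mem_biUnion.mp huX
        rw [mem_Icc] at hui
        have hi1 : i ∈ s₁ := by
          by_contra h
          have := hlow i hi h
          have := (mem_Icc.mp hu.2).1
          omega
        exact mem_biUnion.mpr ⟨i, hi1, mem_inter.mpr ⟨hu.1, mem_Icc.mpr hui⟩⟩
    have hcard1 : s₁.card ≤ B * ((V ∩ Icc p₀ q).card) := by
      apply H p₀ q s₁ (fun i hi => hsN ((mem_filter.mp hi).1))
      intro i hi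
      exact ⟨(mem_filter.mp hi).2, le_trans (le_refl _) (hmax i (mem_filter.mp hi).1)⟩
    have hssub : s \ s₁ ⊂ s := by
      refine Finset.ssubset_iff_of_subset (sdiff_subset) |>.mpr ⟨i₀, hi₀, by simp [hi₀s₁]⟩
    have hcard2 : (s \ s₁).card ≤ B * ((s \ s₁).biUnion (fun i => V ∩ Icc (a i) (dl i))).card :=
      ihs (s \ s₁) hssub (le_trans (sdiff_subset) hsN |>.trans (le_refl _)) 
    -- disjointness of the two unions
    have hdisj : Disjoint (s₁.biUnion (fun i => V ∩ Icc (a i) (dl i)))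
        ((s \ s₁).biUnion (fun i => V ∩ Icc (a i) (dl i))) := by
      rw [Finset.disjoint_left]
      intro u hu1 hu2
      rw [hcover, mem_inter, mem_Icc] at hu1
      obtain ⟨i, hi, hui⟩ := mem_biUnion.mp hu2
      rw [mem_inter, mem_Icc] at hui
      have his : i ∈ s := (mem_sdiff.mp hi).1
      have := hlow i his (mem_sdiff.mp hi).2
      omega
    have hsplit : s.biUnion (fun i => V ∩ Icc (a i) (dl i)) =
        s₁.biUnion (fun i => V ∩ Icc (a i) (dl i)) ∪
          (s \ s₁).biUnion (fun i => V ∩ Icc (a i) (dl i)) := by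
      ext u
      simp only [mem_biUnion, mem_union, mem_sdiff]
      constructor
      · rintro ⟨i, hi, hui⟩
        by_cases h : i ∈ s₁
        · exact Or.inl ⟨i, h, hui⟩
        · exact Or.inr ⟨i, ⟨hi, h⟩, hui⟩
      · rintro (⟨i, hi, hui⟩ | ⟨i, hi, hui⟩)
        · exact ⟨i, (mem_filter.mp hi).1, hui⟩
        · exact ⟨i, hi.1, hui⟩
    have hs₁sub : s₁ ⊆ s := filter_subset _ _
    have hcards : s.card = s₁.card + (s \ s₁).card := by
      have h2 := card_sdiff_of_subset hs₁sub
      have h3 := card_le_card hs₁sub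
      omega
    rw [hsplit, card_union_of_disjoint hdisj, Nat.mul_add, hcards]
    exact Nat.add_le_add (hcover ▸ hcard1) hcard2

/-- For a feasible instance with at most `B` jobs per deadline: with `D` the
earliest deadline, `J* = {j : d j = D}` and `Favail = {j ∉ J* : r j ≤ D}`, there is
a minimum active time schedule `σ` and a set `F ⊆ Favail` of
`min (B - |J*|) |Favail|` "filler" jobs, chosen with earliest deadlines, such that
the jobs scheduled at slot `D` are exactly `J* ∪ F`. -/
theorem lazy_activation_first_slot
    {J : Type*} [Fintype J] [DecidableEq J]
    (B : ℕ) (hB : 1 ≤ B) (r d : J → ℤ) (hrd : ∀ j, r j ≤ d j)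
    (hdl : ∀ t : ℤ, (Finset.univ.filter (fun j => d j = t)).card ≤ B)
    (hfeas : ∃ σ : J → ℤ, IsIntSchedule B r d σ)
    (D : ℤ) (hD : IsLeast (Set.range d) D) :
    ∃ (σ : J → ℤ) (F : Finset J),
      IsIntSchedule B r d σ ∧
      (∀ σ' : J → ℤ, IsIntSchedule B r d σ' →
        (Finset.univ.image σ).card ≤ (Finset.univ.image σ').card) ∧
      F ⊆ Finset.univ.filter (fun j => d j ≠ D ∧ r j ≤ D) ∧
      F.card = min (B - (Finset.univ.filter (fun j => d j = D)).card)
        ((Finset.univ.filter (fun j => d j ≠ D ∧ r j ≤ D)).card) ∧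
      Finset.univ.filter (fun j => σ j = D) =
        (Finset.univ.filter (fun j => d j = D)) ∪ F ∧
      ∀ f ∈ F, ∀ g ∈ (Finset.univ.filter (fun j => d j ≠ D ∧ r j ≤ D)) \ F,
        d f ≤ d g := by
  classical
  -- basic data
  have hrange : ∀ j, D ≤ d j := fun j => hD.2 ⟨j, rfl⟩
  obtain ⟨j₀, hj₀⟩ := hD.1
  set Js : Finset J := univ.filter (fun j => d j = D) with hJs
  set Fav : Finset J := univ.filter (fun j => d j ≠ D ∧ r j ≤ D) with hFav
  have hJsB : Js.card ≤ B := hdl D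
  set k : ℕ := min (B - Js.card) Fav.card with hk
  obtain ⟨F, hFsub, hFcard, hFbot⟩ :=
    exists_bottom_subset d k Fav (min_le_right _ _)
  set W : Finset J := Js ∪ F with hW
  have hJsF : Disjoint Js F := by
    rw [Finset.disjoint_left]
    intro x hx hxF
    have h1 := (mem_filter.mp hx).2
    have h2 := (mem_filter.mp (hFsub hxF)).2
    exact h2.1 h1
  have hWcard : W.card ≤ B := by
    rw [hW, card_union_of_disjoint hJsF, hFcard]
    omega
  have hWD : ∀ w ∈ W, r w ≤ D ∧ D ≤ d w := by
    intro w hw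
    rcases mem_union.mp hw with h | h
    · have := (mem_filter.mp h).2
      exact ⟨this ▸ hrd w, hrange w⟩
    · exact ⟨(mem_filter.mp (hFsub h)).2.2, hrange w⟩
  have hdW : ∀ j, j ∉ W → D + 1 ≤ d j := by
    intro j hj
    have : d j ≠ D := by
      intro h
      exact hj (mem_union_left _ (mem_filter.mpr ⟨mem_univ j, h⟩))
    have := hrange j
    omega
  -- an optimal schedule σ
  have hSne : {n : ℕ | ∃ τ : J → ℤ, IsIntSchedule B r d τ ∧ (univ.image τ).card = n}.Nonempty := by
    obtain ⟨τ, hτ⟩ := hfeas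
    exact ⟨_, τ, hτ, rfl⟩
  obtain ⟨σ, hσ, hσcard⟩ := Nat.sInf_mem hSne
  have hopt : ∀ τ : J → ℤ, IsIntSchedule B r d τ →
      sInf {n : ℕ | ∃ τ : J → ℤ, IsIntSchedule B r d τ ∧ (univ.image τ).card = n}
        ≤ (univ.image τ).card :=
    fun τ hτ => Nat.sInf_le ⟨τ, hτ, rfl⟩
  set U : Finset ℤ := univ.image σ with hU
  set m : ℕ := U.card with hm
  set Uup : Finset ℤ := U.filter (fun u => ¬ u ≤ D) with hUup
  set p : ℕ := (U.filter (fun u => u ≤ D)).card with hp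
  have hpm : p + Uup.card = m := card_filter_add_card_filter_not (fun u => u ≤ D)
  have hp1 : 1 ≤ p := by
    rw [hp]
    apply card_pos.mpr
    refine ⟨σ j₀, mem_filter.mpr ⟨mem_image_of_mem σ (mem_univ j₀), ?_⟩⟩
    have := (hσ.1 j₀).2
    omega
  -- fresh slots right of D
  set C : Finset ℤ := (Icc (D+1) (D + (m+p : ℤ))) \ Uup with hC
  have hCcard : p - 1 ≤ C.card := by
    have h1 : (Icc (D+1) (D + (m+p : ℤ))).card = m + p := by
      rw [Int.card_Icc]
      omega
    have h2 : (Icc (D+1) (D + (m+p : ℤ))).card - Uup.card ≤ C.card := by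
      rw [hC]
      exact Finset.le_card_sdiff Uup _
    have h3 : Uup.card ≤ m := by omega
    omega
  obtain ⟨G, hGsub, hGcard, hGbot⟩ := exists_bottom_subset (fun x => x) (p-1) C hCcard
  set V : Finset ℤ := Uup ∪ G with hV
  have hVup : ∀ v ∈ V, D < v := by
    intro v hv
    rcases mem_union.mp hv with h | h
    · have := (mem_filter.mp h).2; omega
    · have := (mem_Icc.mp (mem_sdiff.mp (hGsub h)).1).1; omega
  have hDV : D ∉ V := fun h => absurd (hVup D h) (lt_irrefl D)
  have hGUup : Disjoint G Uup := by
    rw [Finset.disjoint_left]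
    intro x hx hx'
    exact (mem_sdiff.mp (hGsub hx)).2 hx'
  have hVcard : V.card + 1 ≤ m := by
    have h1 : V.card ≤ Uup.card + G.card := by
      rw [hV]
      exact card_union_le _ _
    omega
  -- effective release times
  set a : J → ℤ := fun j => max (r j) (D+1) with ha
  set N : Finset J := univ.filter (fun j => j ∉ W) with hN
  have haN : ∀ i ∈ N, a i ≤ d i := by
    intro i hi
    have h1 := hdW i (mem_filter.mp hi).2
    exact max_le (hrd i) h1
  -- the interval Hall condition
  have H : ∀ p' q' : ℤ, ∀ s ⊆ N, (∀ i ∈ s, p' ≤ a i ∧ d i ≤ q') →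
      s.card ≤ B * ((V ∩ Icc p' q').card) := by
    intro p' q' s hsN hs
    rcases s.eq_empty_or_nonempty with rfl | hne
    · simp
    have hsW : ∀ j ∈ s, j ∉ W := fun j hj => (mem_filter.mp (hsN hj)).2
    by_cases hex : ∃ g ∈ s, r g ≤ D
    · obtain ⟨g₁, hg₁s, hg₁r⟩ := hex
      have hp'le : p' ≤ D + 1 := by
        have h1 := (hs g₁ hg₁s).1
        have h2 : a g₁ ≤ D + 1 := max_le (by omega) le_rfl
        omega
      have hq' : D + 1 ≤ q' := le_trans (hdW g₁ (hsW g₁ hg₁s)) (hs g₁ hg₁s).2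
      have hIccsub : Icc (D+1) q' ⊆ Icc p' q' := Icc_subset_Icc hp'le le_rfl
      by_cases hfull : ∀ u ∈ Icc (D+1) q', u ∈ V
      · -- all slots in (D, q'] available
        have h1 : s.card ≤ B * (Icc (D+1) q').card := by
          apply card_le_B_mul B d s _ _ hdl
          intro j hj
          exact mem_Icc.mpr ⟨hdW j (hsW j hj), (hs j hj).2⟩
        refine le_trans h1 (Nat.mul_le_mul_left B (card_le_card ?_))
        intro u hu
        exact mem_inter.mpr ⟨hfull u hu, hIccsub hu⟩
      · -- some slot in (D, q'] missing from V : use G ∪ Uup capacity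
        push_neg at hfull
        obtain ⟨s₀, hs₀Icc, hs₀V⟩ := hfull
        have hs₀Icc' := mem_Icc.mp hs₀Icc
        have hGq : G ⊆ V ∩ Icc p' q' := by
          intro x hx
          have hxC := hGsub hx
          have hxI := mem_Icc.mp (mem_sdiff.mp hxC).1
          refine mem_inter.mpr ⟨mem_union_right _ hx, mem_Icc.mpr ⟨by omega, ?_⟩⟩
          by_cases hs₀C : s₀ ∈ C
          · have hs₀G : s₀ ∉ G := fun h => hs₀V (mem_union_right _ h)
            have := hGbot x hx s₀ (mem_sdiff.mpr ⟨hs₀C, hs₀G⟩)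
            omega
          · -- s₀ beyond the fresh range, so q' is large
            have hs₀Uup : s₀ ∉ Uup := fun h => hs₀V (mem_union_left _ h)
            have : s₀ ∉ Icc (D+1) (D + (m+p : ℤ)) := by
              intro h
              exact hs₀C (mem_sdiff.mpr ⟨h, hs₀Uup⟩)
            rw [mem_Icc] at this
            push_neg at this
            have := this (by omega)
            omega
        have hUq : Uup ∩ Icc (D+1) q' ⊆ V ∩ Icc p' q' := by
          intro u hu
          rw [mem_inter] at hu
          exact mem_inter.mpr ⟨mem_union_left _ hu.1, hIccsub hu.2⟩
        have hdisj : Disjoint G (Uup ∩ Icc (D+1) q') :=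
          hGUup.mono_right (inter_subset_left)
        have hcap : (p - 1) + (Uup ∩ Icc (D+1) q').card ≤ (V ∩ Icc p' q').card := by
          rw [← hGcard, ← card_union_of_disjoint hdisj]
          exact card_le_card (union_subset hGq hUq)
        set u : ℕ := (Uup ∩ Icc (D+1) q').card with hu
        by_cases hex2 : ∃ g ∈ s, d g ≠ D ∧ r g ≤ D
        · -- a filler candidate outside F occurs in s: W is full and has small deadlines
          obtain ⟨g₂, hg₂s, hg₂⟩ := hex2
          have hg₂Fav : g₂ ∈ Fav := mem_filter.mpr ⟨mem_univ g₂, hg₂⟩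
          have hg₂F : g₂ ∉ F := fun h => hsW g₂ hg₂s (mem_union_right _ h)
          have hFlt : F.card < Fav.card := by
            apply card_lt_card
            exact ⟨hFsub, fun h => hg₂F (h hg₂Fav)⟩
          have hkval : k = B - Js.card := by
            rcases min_cases (B - Js.card) Fav.card with ⟨h1, _⟩ | ⟨h1, _⟩
            · rw [hk, h1]
            · rw [hFcard, hk] at hFlt
              omega
          have hWB : W.card = B := by
            rw [hW, card_union_of_disjoint hJsF, hFcard, hkval]
            omega
          have hWq : ∀ w ∈ W, d w ≤ q' := by
            intro w hw
            rcases mem_union.mp hw with h | h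
            · have := (mem_filter.mp h).2
              omega
            · have h1 := hFbot w h g₂ (mem_sdiff.mpr ⟨hg₂Fav, hg₂F⟩)
              exact le_trans h1 (hs g₂ hg₂s).2
          have hsWd : Disjoint s W := by
            rw [Finset.disjoint_left]
            exact fun x hx hx' => hsW x hx hx'
          have hbig : (s ∪ W).card ≤ B * (U.filter (fun x => x ≤ q')).card := by
            apply card_le_B_mul B σ _ _ _ hσ.2
            intro j hj
            have hdj : d j ≤ q' := by
              rcases mem_union.mp hj with h | h
              · exact (hs j h).2
              · exact hWq j h
            refine mem_filter.mpr ⟨mem_image_of_mem σ (mem_univ j), ?_⟩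
            exact le_trans (hσ.1 j).2 hdj
          have hUsplit : (U.filter (fun x => x ≤ q')).card = p + u := by
            have : U.filter (fun x => x ≤ q') = (U.filter (fun x => x ≤ D)) ∪ (Uup ∩ Icc (D+1) q') := by
              ext x
              simp only [mem_inter, mem_filter, mem_union, mem_Icc, hUup]
              constructor
              · rintro ⟨hxU, hxq⟩
                by_cases hxD : x ≤ D
                · exact Or.inl ⟨hxU, hxD⟩
                · exact Or.inr ⟨⟨hxU, hxD⟩, by omega, hxq⟩
              · rintro (⟨hxU, hxD⟩ | ⟨⟨hxU, _⟩, _, hxq⟩)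
                · exact ⟨hxU, by omega⟩
                · exact ⟨hxU, hxq⟩
            rw [this, card_union_of_disjoint]
            rw [Finset.disjoint_left]
            intro x hx hx'
            have h1 := (mem_filter.mp hx).2
            have h2 := (mem_Icc.mp (mem_inter.mp hx').2).1
            omega
          have hcards : (s ∪ W).card = s.card + B := by
            rw [card_union_of_disjoint hsWd, hWB]
          have e1 : B * (p + u) = B * ((p-1) + u) + B := by
            have : p + u = (p-1) + u + 1 := by omega
            rw [this, Nat.mul_add, Nat.mul_one]
          have h2 : s.card ≤ B * ((p-1) + u) := by
            rw [hUsplit] at hbig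
            omega
          exact le_trans h2 (Nat.mul_le_mul_left B hcap)
        · -- every job of s is released after D
          push_neg at hex2
          have h1 : s.card ≤ B * (Uup ∩ Icc (D+1) q').card := by
            apply card_le_B_mul B σ _ _ _ hσ.2
            intro j hj
            have hrj : D + 1 ≤ r j := by
              have hdj : d j ≠ D := by
                have := hdW j (hsW j hj); omega
              have := hex2 j hj hdj
              omega
            have hσj := hσ.1 j
            refine mem_inter.mpr ⟨mem_filter.mpr ⟨mem_image_of_mem σ (mem_univ j), by omega⟩,
              mem_Icc.mpr ⟨by omega, le_trans hσj.2 (hs j hj).2⟩⟩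
          refine le_trans h1 (Nat.mul_le_mul_left B (card_le_card hUq))
    · -- no job of s is released by D
      push_neg at hex
      apply card_le_B_mul B σ s _ _ hσ.2
      intro j hj
      have hrj := hex j hj
      have hσj := hσ.1 j
      have haj := (hs j hj).1
      have hamax : a j = max (r j) (D+1) := rfl
      refine mem_inter.mpr ⟨mem_union_left _ (mem_filter.mpr
        ⟨mem_image_of_mem σ (mem_univ j), by omega⟩), mem_Icc.mpr ⟨?_, le_trans hσj.2 (hs j hj).2⟩⟩
      have : a j ≤ σ j := by
        apply max_le
        · exact hσj.1
        · omega
      omega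
  -- capacitated Hall condition for jobs outside W
  have HallN := interval_union_bound B a d V N haN H
  -- set up Hall's theorem
  set t : J → Finset (ℤ × Fin B) :=
    fun j => (if j ∈ W then {D} else V ∩ Icc (a j) (d j)) ×ˢ (univ : Finset (Fin B)) with ht
  have hHall : ∀ s : Finset J, s.card ≤ (s.biUnion t).card := by
    intro s
    set s₂ : Finset J := s.filter (fun j => j ∉ W) with hs₂
    have hs₂N : s₂ ⊆ N := by
      intro j hj
      exact mem_filter.mpr ⟨mem_univ j, (mem_filter.mp hj).2⟩
    have h2 := HallN s₂ hs₂N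
    set A₂ : Finset ℤ := s₂.biUnion (fun i => V ∩ Icc (a i) (d i)) with hA₂
    have hA₂V : A₂ ⊆ V := by
      intro x hx
      obtain ⟨i, _, hxi⟩ := mem_biUnion.mp hx
      exact (mem_inter.mp hxi).1
    have hsubA : A₂ ×ˢ (univ : Finset (Fin B)) ⊆ s.biUnion t := by
      rintro ⟨v, b⟩ hvb
      rw [mem_product] at hvb
      obtain ⟨i, hi, hvi⟩ := mem_biUnion.mp hvb.1
      refine mem_biUnion.mpr ⟨i, (mem_filter.mp hi).1, ?_⟩
      rw [ht]
      simp only [if_neg (mem_filter.mp hi).2]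
      exact mem_product.mpr ⟨hvi, mem_univ b⟩
    have hcardA : (A₂ ×ˢ (univ : Finset (Fin B))).card = A₂.card * B := by
      rw [card_product, card_univ, Fintype.card_fin]
    have hsplit : s.card = (s.filter (fun j => j ∈ W)).card + s₂.card :=
      (card_filter_add_card_filter_not (fun j => j ∈ W)).symm
    by_cases hsWne : (s.filter (fun j => j ∈ W)).Nonempty
    · obtain ⟨w, hw⟩ := hsWne
      have hwt : ({D} ×ˢ (univ : Finset (Fin B))) ⊆ s.biUnion t := by
        rintro ⟨v, b⟩ hvb
        refine mem_biUnion.mpr ⟨w, (mem_filter.mp hw).1, ?_⟩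
        rw [ht]
        simp only [if_pos (mem_filter.mp hw).2]
        exact hvb
      have hdisj : Disjoint ({D} ×ˢ (univ : Finset (Fin B))) (A₂ ×ˢ (univ : Finset (Fin B))) := by
        rw [Finset.disjoint_left]
        rintro ⟨v, b⟩ hvb hvb'
        rw [mem_product, mem_singleton] at hvb
        rw [mem_product] at hvb'
        exact hDV (hvb.1 ▸ hA₂V hvb'.1)
      have hsub : ({D} ×ˢ (univ : Finset (Fin B))) ∪ (A₂ ×ˢ (univ : Finset (Fin B)))
          ⊆ s.biUnion t := union_subset hwt hsubA
      have hc1 : B + B * A₂.card ≤ (s.biUnion t).card := by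
        have := card_le_card hsub
        rw [card_union_of_disjoint hdisj, card_product, card_singleton, card_univ,
          Fintype.card_fin, one_mul, hcardA, mul_comm A₂.card B] at this
        omega
      have hcW : (s.filter (fun j => j ∈ W)).card ≤ B :=
        le_trans (card_le_card (fun x hx => (mem_filter.mp hx).2)) hWcard
      have : s.card ≤ B + B * A₂.card := by
        rw [hsplit]
        omega
      omega
    · rw [not_nonempty_iff_eq_empty] at hsWne
      have : s.card = s₂.card := by
        rw [hsplit, hsWne, card_empty, zero_add]
      rw [this]
      calc s₂.card ≤ B * A₂.card := h2
        _ = (A₂ ×ˢ (univ : Finset (Fin B))).card := by rw [hcardA, mul_comm]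
        _ ≤ (s.biUnion t).card := card_le_card hsubA
  obtain ⟨f, hfinj, hft⟩ := (Finset.all_card_le_biUnion_card_iff_exists_injective t).mp hHall
  set σ' : J → ℤ := fun j => (f j).1 with hσ'
  -- properties of σ'
  have hσ'W : ∀ j ∈ W, σ' j = D := by
    intro j hj
    have := hft j
    rw [ht] at this
    simp only [if_pos hj] at this
    exact mem_singleton.mp (mem_product.mp this).1
  have hσ'nW : ∀ j, j ∉ W → (f j).1 ∈ V ∩ Icc (a j) (d j) := by
    intro j hj
    have := hft j
    rw [ht] at this
    simp only [if_neg hj] at this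
    exact (mem_product.mp this).1
  have hsched : IsIntSchedule B r d σ' := by
    refine ⟨?_, ?_⟩
    · intro j
      by_cases hj : j ∈ W
      · rw [hσ'W j hj]
        exact hWD j hj
      · have h1 := mem_Icc.mp (mem_inter.mp (hσ'nW j hj)).2
        constructor
        · exact le_trans (le_max_left _ _) h1.1
        · exact h1.2
    · intro t'
      have : (univ.filter (fun j => σ' j = t')).card ≤ (univ : Finset (Fin B)).card := by
        apply Finset.card_le_card_of_injOn (fun j => (f j).2)
        · intro j _; exact mem_univ _
        · intro j hj j' hj' hjj'
          have h1 := (mem_filter.mp hj).2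
          have h2 := (mem_filter.mp hj').2
          apply hfinj
          apply Prod.ext
          · rw [hσ'] at h1 h2
            simp only at h1 h2
            rw [h1, h2]
          · exact hjj'
      rwa [card_univ, Fintype.card_fin] at this
  -- σ' is optimal
  have hσ'img : univ.image σ' ⊆ insert D V := by
    intro x hx
    obtain ⟨j, _, hj⟩ := mem_image.mp hx
    by_cases hjW : j ∈ W
    · rw [← hj, hσ'W j hjW]; exact mem_insert_self _ _
    · exact mem_insert_of_mem (hj ▸ (mem_inter.mp (hσ'nW j hjW)).1)
  have hσ'opt : ∀ τ : J → ℤ, IsIntSchedule B r d τ →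
      (univ.image σ').card ≤ (univ.image τ).card := by
    intro τ hτ
    have h1 : (univ.image σ').card ≤ V.card + 1 :=
      le_trans (card_le_card hσ'img) (card_insert_le _ _)
    have h2 := hopt τ hτ
    omega
  -- the slot D is occupied exactly by W
  have hslotD : univ.filter (fun j => σ' j = D) = Js ∪ F := by
    ext j
    simp only [mem_filter, mem_univ, true_and]
    constructor
    · intro h
      by_contra hjW
      have hfj := (mem_inter.mp (hσ'nW j hjW)).1
      apply hDV
      rw [← h]
      exact hfj
    · exact hσ'W j
  exact ⟨σ', F, hsched, hσ'opt, hFsub, hFcard, hslotD, hFbot⟩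
end

section
/- Let B ≥ 1 and let J be a finite set of unit-length jobs, each job j having an integer release time r_j and an integer deadline d_j with r_j + 1 ≤ d_j. For every real schedule s : J → ℝ (satisfying r_j ≤ s_j ≤ d_j − 1 for every j, and |{j : s_j ≤ t < s_j + 1}| ≤ B for every real t), there exists a real schedule s' with s'_j ∈ ℤ for every j such that the Lebesgue measure of ⋃_j [s'_j, s'_j + 1) is at most the Lebesgue measure of ⋃_j [s_j, s_j + 1). In particular, some schedule of minimum active time starts every job at an integer time. -/
open Finset

/-- A real (continuous, nonpreemptive) schedule of unit jobs on `B` processors: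
each job `j` starts at a real time `s j ∈ [r j, d j - 1]` and executes during
`[s j, s j + 1)`, and at every instant at most `B` jobs are executing. -/
def IsRealSchedule {J : Type*} [Fintype J] (B : ℕ) (r d : J → ℤ) (s : J → ℝ) : Prop :=
  (∀ j, (r j : ℝ) ≤ s j ∧ s j ≤ (d j : ℝ) - 1) ∧
    ∀ t : ℝ, (Finset.univ.filter (fun j => s j ≤ t ∧ t < s j + 1)).card ≤ B

section Aux
open scoped Classical
variable {J : Type*} [Fintype J]

/-- An anchor is a job with no other start in `[s k - 1, s k)`. -/
def IsAnchor (s : J → ℝ) (k : J) : Prop := ∀ m, ¬(s k - 1 ≤ s m ∧ s m < s k)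

noncomputable def anchSet (s : J → ℝ) (j : J) : Finset ℝ :=
  (univ.filter (fun k => IsAnchor s k ∧ s k ≤ s j)).image s

lemma anchSet_nonempty (s : J → ℝ) (j : J) : (anchSet s j).Nonempty := by
  obtain ⟨k, -, hk⟩ := Finset.exists_min_image univ s ⟨j, mem_univ j⟩
  exact ⟨s k, mem_image.2 ⟨k, mem_filter.2 ⟨mem_univ k,
    ⟨fun m hm => absurd (hk m (mem_univ m)) (not_le.2 hm.2), hk j (mem_univ j)⟩⟩, rfl⟩⟩

/-- The anchor value of `j`: the largest anchor start `≤ s j`. -/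
noncomputable def anch (s : J → ℝ) (j : J) : ℝ := (anchSet s j).max' (anchSet_nonempty s j)

lemma anch_mem (s : J → ℝ) (j : J) :
    ∃ k, IsAnchor s k ∧ s k = anch s j ∧ s k ≤ s j := by
  have h : anch s j ∈ (univ.filter (fun k => IsAnchor s k ∧ s k ≤ s j)).image s :=
    (anchSet s j).max'_mem (anchSet_nonempty s j)
  rw [mem_image] at h
  obtain ⟨k, hk, hks⟩ := h
  rw [mem_filter] at hk
  exact ⟨k, hk.2.1, hks, hk.2.2⟩

lemma le_anch {s : J → ℝ} {k : J} (hk : IsAnchor s k) {j : J} (h : s k ≤ s j) :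
    s k ≤ anch s j :=
  Finset.le_max' _ _ (mem_image.2 ⟨k, mem_filter.2 ⟨mem_univ k, ⟨hk, h⟩⟩, rfl⟩)

lemma anch_le_self (s : J → ℝ) (j : J) : anch s j ≤ s j := by
  obtain ⟨k, -, hks, hk⟩ := anch_mem s j
  rw [← hks]; exact hk

lemma anch_of_anchor {s : J → ℝ} {j : J} (h : IsAnchor s j) : anch s j = s j :=
  le_antisymm (anch_le_self s j) (le_anch h le_rfl)

lemma anch_eq_of_close {s : J → ℝ} {j k : J} (h1 : s j - 1 ≤ s k) (h2 : s k < s j) :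
    anch s k = anch s j := by
  apply le_antisymm
  · obtain ⟨m, hm, hms, hmk⟩ := anch_mem s k
    rw [← hms]; exact le_anch hm (hmk.trans h2.le)
  · obtain ⟨m, hm, hms, hmj⟩ := anch_mem s j
    rw [← hms]
    refine le_anch hm ?_
    by_contra hlt
    push_neg at hlt
    exact hm k ⟨by linarith, hlt⟩

/-- Separation: any job anchored strictly below an anchor `m` ends by `s m`. -/
lemma sep {s : J → ℝ} {j m : J} (hm : IsAnchor s m) (h : anch s j < s m) :
    s j + 1 ≤ s m := by
  have hjm : s j < s m := by
    by_contra hge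
    push_neg at hge
    exact absurd (le_anch hm hge) (not_le.2 h)
  by_contra hgt
  push_neg at hgt
  exact hm j ⟨by linarith, hjm⟩

/-- Coverage: the interval from `j`'s anchor to the end of `j` is fully busy. -/
lemma cover (s : J → ℝ) :
    ∀ n (j : J), (univ.filter (fun m => s m < s j)).card ≤ n →
      Set.Ico (anch s j) (s j + 1) ⊆ ⋃ m, Set.Ico (s m) (s m + 1) := by
  intro n
  induction n with
  | zero =>
    intro j hj
    have hA : IsAnchor s j := by
      intro m hm
      have : m ∈ univ.filter (fun m => s m < s j) := mem_filter.2 ⟨mem_univ m, hm.2⟩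
      simp [Finset.card_eq_zero.1 (Nat.le_zero.1 hj)] at this
    rw [anch_of_anchor hA]
    exact Set.subset_iUnion (fun m => Set.Ico (s m) (s m + 1)) j
  | succ n ih =>
    intro j hj
    by_cases hA : IsAnchor s j
    · rw [anch_of_anchor hA]
      exact Set.subset_iUnion (fun m => Set.Ico (s m) (s m + 1)) j
    · obtain ⟨k, hk⟩ : ∃ k, s j - 1 ≤ s k ∧ s k < s j := by
        simpa [IsAnchor] using hA
      have heq := anch_eq_of_close hk.1 hk.2
      have hcard : (univ.filter (fun m => s m < s k)).card < (univ.filter (fun m => s m < s j)).card := by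
        apply Finset.card_lt_card
        constructor
        · intro m hm
          rw [mem_filter] at hm ⊢
          exact ⟨hm.1, hm.2.trans hk.2⟩
        · intro hsub
          have := hsub (mem_filter.2 ⟨mem_univ k, hk.2⟩)
          rw [mem_filter] at this
          exact lt_irrefl _ this.2
      intro x hx
      rcases lt_or_ge x (s k + 1) with hxk | hxk
      · exact ih k (by omega) ⟨heq ▸ hx.1, hxk⟩
      · refine Set.mem_iUnion.2 ⟨j, ⟨by linarith [hk.1], hx.2⟩⟩

end Aux

/-- For any real schedule there is a real schedule with integer start times whose
active time (the Lebesgue measure of the union of execution intervals) is no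
larger. Hence some minimum active time schedule starts every job at an integer. -/
theorem integral_start_times_wlog
    {J : Type*} [Fintype J] (B : ℕ) (hB : 1 ≤ B) (r d : J → ℤ)
    (hrd : ∀ j, r j + 1 ≤ d j)
    (s : J → ℝ) (hs : IsRealSchedule B r d s) :
    ∃ s' : J → ℝ, IsRealSchedule B r d s' ∧ (∀ j, ∃ z : ℤ, s' j = (z : ℝ)) ∧
      MeasureTheory.volume (⋃ j, Set.Ico (s' j) (s' j + 1)) ≤
        MeasureTheory.volume (⋃ j, Set.Ico (s j) (s j + 1)) := by
  classical
  set g : J → ℤ := fun j => ⌊s j + (⌈anch s j⌉ - anch s j)⌋ with hgdef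
  -- basic facts about the rounding
  have htheta0 : ∀ j, (0:ℝ) ≤ ⌈anch s j⌉ - anch s j := fun j => by
    have := Int.le_ceil (anch s j); linarith
  have htheta1 : ∀ j, (⌈anch s j⌉:ℝ) - anch s j < 1 := fun j => by
    have := Int.ceil_lt_add_one (anch s j); linarith
  have hglow : ∀ j, ⌈anch s j⌉ ≤ g j := fun j =>
    Int.le_floor.2 (by have := anch_le_self s j; linarith)
  have hgup : ∀ j, (g j : ℝ) ≤ s j + (⌈anch s j⌉ - anch s j) := fun j => Int.floor_le _
  have hgup1 : ∀ j, (g j : ℝ) < s j + 1 := fun j => lt_of_le_of_lt (hgup j)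
    (by have := htheta1 j; linarith)
  -- same slot implies same anchor
  have hlt : ∀ j k, anch s j < anch s k → g j < g k := by
    intro j k h
    obtain ⟨m, hm, hms, -⟩ := anch_mem s k
    have hsep : s j + 1 ≤ s m := sep hm (by rw [hms]; exact h)
    have h1 : (g j : ℝ) < anch s k := by
      have := hgup j; have := htheta1 j; rw [← hms]; push_cast; linarith
    have h2 : anch s k ≤ (g k : ℝ) := by
      have h3 := hglow k
      have h4 := Int.le_ceil (anch s k)
      have h5 : ((⌈anch s k⌉:ℤ):ℝ) ≤ (g k : ℝ) := by exact_mod_cast h3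
      linarith
    exact_mod_cast h1.trans_le h2
  have hslot : ∀ j k, g j = g k → anch s j = anch s k := by
    intro j k h
    rcases lt_trichotomy (anch s j) (anch s k) with hc | hc | hc
    · exact absurd h (hlt j k hc).ne
    · exact hc
    · exact absurd h.symm (hlt k j hc).ne
  refine ⟨fun j => (g j : ℝ), ⟨?_, ?_⟩, fun j => ⟨g j, rfl⟩, ?_⟩
  · -- window feasibility
    intro j
    obtain ⟨h1, h2⟩ := hs.1 j
    constructor
    · have h3 : r j ≤ g j := Int.le_floor.2 (by have := htheta0 j; linarith)
      show (r j : ℝ) ≤ ((g j : ℤ) : ℝ)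
      exact_mod_cast h3
    · have : g j < d j := Int.floor_lt.2 (by have := htheta1 j; push_cast; linarith)
      have : g j ≤ d j - 1 := by omega
      have : ((g j : ℤ):ℝ) ≤ ((d j - 1 : ℤ):ℝ) := by exact_mod_cast this
      push_cast at this; linarith
  · -- capacity
    intro t
    set E := univ.filter (fun j => ((g j:ℝ)) ≤ t ∧ t < (g j:ℝ) + 1) with hE
    rcases E.eq_empty_or_nonempty with h | h
    · rw [h]; simp
    · obtain ⟨j0, hj0E, hj0max⟩ := Finset.exists_max_image E s h
      have hsame : ∀ k ∈ E, g k = g j0 := by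
        intro k hk
        have hk' := (mem_filter.1 hk).2
        have hj' := (mem_filter.1 hj0E).2
        have e1 : ⌊t⌋ = g k := Int.floor_eq_iff.2 ⟨hk'.1, by push_cast; exact hk'.2⟩
        have e2 : ⌊t⌋ = g j0 := Int.floor_eq_iff.2 ⟨hj'.1, by push_cast; exact hj'.2⟩
        omega
      have hsub : E ⊆ univ.filter (fun k => s k ≤ s j0 ∧ s j0 < s k + 1) := by
        intro k hk
        refine mem_filter.2 ⟨mem_univ k, hj0max k hk, ?_⟩
        have hgk := hsame k hk
        have ha := hslot k j0 hgk
        -- both s k + θ and s j0 + θ in [g j0, g j0 + 1) with same θ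
        have b1 := hgup k
        have b2 := hgup1 k
        have b3 := hgup j0
        have b4 := hgup1 j0
        have c1 : (g k : ℝ) ≤ s k + (⌈anch s k⌉ - anch s k) := b1
        have c2 : (g j0 : ℝ) ≤ s j0 + (⌈anch s j0⌉ - anch s j0) := b3
        -- floor bounds: x - 1 < ⌊x⌋
        have d1 : s k + (⌈anch s k⌉ - anch s k) - 1 < (g k : ℝ) := by
          exact Int.sub_one_lt_floor (s k + (⌈anch s k⌉ - anch s k))
        have d2 : s j0 + (⌈anch s j0⌉ - anch s j0) - 1 < (g j0 : ℝ) := by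
          exact Int.sub_one_lt_floor (s j0 + (⌈anch s j0⌉ - anch s j0))
        have hcast : (g k : ℝ) = (g j0 : ℝ) := by exact_mod_cast hgk
        rw [ha] at c1 d1
        linarith
      calc E.card ≤ _ := Finset.card_le_card hsub
        _ ≤ B := hs.2 (s j0)
  · -- volume bound
    set C : Finset ℝ := univ.image (anch s) with hC
    set Mx : ℝ → ℝ := fun c => sSup (s '' {j | anch s j = c}) with hMx
    have hMxfacts : ∀ c ∈ C, (∃ jm, anch s jm = c ∧ s jm = Mx c) ∧
        (∀ j, anch s j = c → s j ≤ Mx c) := by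
      intro c hc
      obtain ⟨j, -, hj⟩ := mem_image.1 hc
      have hfin : (s '' {j | anch s j = c}).Finite := Set.toFinite _
      have hne : (s '' {j | anch s j = c}).Nonempty := ⟨s j, j, hj, rfl⟩
      constructor
      · obtain ⟨jm, hjm, hx⟩ := hne.csSup_mem hfin
        exact ⟨jm, hjm, hx⟩
      · intro k hk
        exact le_csSup hfin.bddAbove ⟨k, hk, rfl⟩
    have hcM : ∀ c ∈ C, c ≤ Mx c := by
      intro c hc
      obtain ⟨⟨jm, hjm, hx⟩, -⟩ := hMxfacts c hc
      rw [← hx, ← hjm]; exact anch_le_self s jm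
    -- separation between components
    have hsep : ∀ c ∈ C, ∀ c' ∈ C, c < c' → Mx c + 1 ≤ c' := by
      intro c hc c' hc' hlt'
      obtain ⟨⟨jm, hjm, hx⟩, -⟩ := hMxfacts c hc
      obtain ⟨k, -, hk⟩ := mem_image.1 hc'
      obtain ⟨m, hm, hms, -⟩ := anch_mem s k
      rw [hk] at hms
      have : s jm + 1 ≤ s m := sep hm (by rw [hjm, hms]; exact hlt')
      rw [← hx, ← hms]; exact this
    -- step 1 : volume of rounded union ≤ number of slots
    have key1 : MeasureTheory.volume (⋃ j, Set.Ico ((g j : ℝ)) ((g j : ℝ) + 1)) ≤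
        ((univ.image g).card : ENNReal) := by
      have hsub : (⋃ j, Set.Ico ((g j : ℝ)) ((g j : ℝ) + 1)) ⊆
          ⋃ n ∈ univ.image g, Set.Ico ((n : ℝ)) ((n : ℝ) + 1) := by
        refine Set.iUnion_subset fun j x hx => ?_
        exact Set.mem_biUnion (mem_image_of_mem g (mem_univ j)) hx
      calc MeasureTheory.volume (⋃ j, Set.Ico ((g j : ℝ)) ((g j : ℝ) + 1))
          ≤ MeasureTheory.volume (⋃ n ∈ univ.image g, Set.Ico ((n:ℝ)) ((n:ℝ) + 1)) :=
            MeasureTheory.measure_mono hsub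
        _ ≤ ∑ n ∈ univ.image g, MeasureTheory.volume (Set.Ico ((n:ℝ)) ((n:ℝ) + 1)) :=
            MeasureTheory.measure_biUnion_finset_le _ _
        _ = ((univ.image g).card : ENNReal) := by
            simp [Real.volume_Ico]
    -- step 2 : number of slots ≤ sum of component spans
    have key2 : ((univ.image g).card : ENNReal) ≤
        ∑ c ∈ C, ENNReal.ofReal (Mx c + 1 - c) := by
      have hsub : univ.image g ⊆ C.biUnion (fun c => Finset.Icc ⌈c⌉ ⌊Mx c + (⌈c⌉ - c)⌋) := by
        intro n hn
        obtain ⟨j, -, hj⟩ := mem_image.1 hn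
        refine Finset.mem_biUnion.2 ⟨anch s j, mem_image_of_mem _ (mem_univ j), ?_⟩
        refine Finset.mem_Icc.2 ⟨hj ▸ hglow j, ?_⟩
        obtain ⟨-, hle⟩ := hMxfacts (anch s j) (mem_image_of_mem _ (mem_univ j))
        rw [← hj]
        exact Int.floor_le_floor (by have := hle j rfl; linarith)
      have h1 : (univ.image g).card ≤ ∑ c ∈ C, (Finset.Icc ⌈c⌉ ⌊Mx c + (⌈c⌉ - c)⌋).card :=
        (Finset.card_le_card hsub).trans (Finset.card_biUnion_le)
      calc ((univ.image g).card : ENNReal)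
          ≤ ((∑ c ∈ C, (Finset.Icc ⌈c⌉ ⌊Mx c + (⌈c⌉ - c)⌋).card : ℕ) : ENNReal) := by
            exact_mod_cast h1
        _ = ∑ c ∈ C, (((Finset.Icc ⌈c⌉ ⌊Mx c + (⌈c⌉ - c)⌋).card : ℕ) : ENNReal) := by
            push_cast; rfl
        _ ≤ ∑ c ∈ C, ENNReal.ofReal (Mx c + 1 - c) := by
            refine Finset.sum_le_sum fun c hc => ?_
            rw [Int.card_Icc]
            rw [← ENNReal.ofReal_natCast]
            apply ENNReal.ofReal_le_ofReal
            rcases le_or_gt (⌊Mx c + (⌈c⌉ - c)⌋ + 1 - ⌈c⌉) 0 with hneg | hpos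
            · rw [Int.toNat_of_nonpos hneg]
              have := hcM c hc
              simp only [Nat.cast_zero]
              linarith
            · have e : (((⌊Mx c + (⌈c⌉ - c)⌋ + 1 - ⌈c⌉).toNat : ℕ) : ℝ)
                  = ((⌊Mx c + (⌈c⌉ - c)⌋ + 1 - ⌈c⌉ : ℤ) : ℝ) := by
                rw [← Int.toNat_of_nonneg hpos.le]
                exact (Int.cast_natCast _).symm
              rw [e]
              have f1 : ((⌊Mx c + (⌈c⌉ - c)⌋ : ℤ) : ℝ) ≤ Mx c + (⌈c⌉ - c) := Int.floor_le _
              push_cast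
              linarith
    -- step 3 : sum of component spans ≤ volume of original union
    have key3 : ∑ c ∈ C, ENNReal.ofReal (Mx c + 1 - c) ≤
        MeasureTheory.volume (⋃ j, Set.Ico (s j) (s j + 1)) := by
      have hdisj : (C : Set ℝ).Pairwise (Function.onFun Disjoint
          (fun c => Set.Ico c (Mx c + 1))) := by
        intro c hc c' hc' hne
        have : ∀ a b : ℝ, a ∈ C → b ∈ C → a < b →
            Disjoint (Set.Ico a (Mx a + 1)) (Set.Ico b (Mx b + 1)) := by
          intro a b ha hb hab
          have h := hsep a ha b hb hab
          refine Set.disjoint_left.2 fun x hx hx' => ?_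
          exact absurd hx'.1 (not_le.2 (lt_of_lt_of_le hx.2 h))
        rcases lt_or_gt_of_ne hne with h | h
        · exact this c c' hc hc' h
        · exact (this c' c hc' hc h).symm
      have hmeas : ∀ c ∈ C, MeasurableSet (Set.Ico c (Mx c + 1)) :=
        fun c _ => measurableSet_Ico
      have heq := MeasureTheory.measure_biUnion_finset hdisj hmeas (μ := MeasureTheory.volume)
      have hsub : (⋃ c ∈ C, Set.Ico c (Mx c + 1)) ⊆ ⋃ j, Set.Ico (s j) (s j + 1) := by
        refine Set.iUnion₂_subset fun c hc => ?_
        obtain ⟨⟨jm, hjm, hx⟩, -⟩ := hMxfacts c hc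
        rw [← hx, ← hjm]
        exact cover s _ jm le_rfl
      calc ∑ c ∈ C, ENNReal.ofReal (Mx c + 1 - c)
          = ∑ c ∈ C, MeasureTheory.volume (Set.Ico c (Mx c + 1)) := by
            refine Finset.sum_congr rfl fun c hc => ?_
            rw [Real.volume_Ico]
        _ = MeasureTheory.volume (⋃ c ∈ C, Set.Ico c (Mx c + 1)) := heq.symm
        _ ≤ MeasureTheory.volume (⋃ j, Set.Ico (s j) (s j + 1)) :=
            MeasureTheory.measure_mono hsub
    exact key1.trans (key2.trans key3)
end

section
/- Let G be a finite simple graph with no isolated vertices, and let ν(G) denote the maximum cardinality of a matching in G. Consider the unit-job multi-slot instance with B = 2 whose jobs are the vertices of G, whose time slots are the edges of G, and where the feasible slots of a vertex v are the edges incident to v. Then the minimum active time over all schedules of the full job set V(G) equals |V(G)| − ν(G). -/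
open Finset

/-- Scheduling the vertices of a graph `G` (unit jobs) into its edges (time slots),
where a vertex may be scheduled only in an incident edge and each edge holds at
most two vertices: the minimum number of active edges equals `|V| - ν(G)`, where
`ν(G)` is the maximum cardinality of a matching of `G`. -/
theorem min_active_time_eq_card_sub_matching_number
    {V : Type*} [Fintype V] [DecidableEq V]
    (G : SimpleGraph V) [DecidableRel G.Adj]
    (hiso : ∀ v : V, ∃ w : V, G.Adj v w)
    (ν : ℕ)
    (hν : IsGreatest {n : ℕ | ∃ M : Finset (Sym2 V), M ⊆ G.edgeFinset ∧
        (∀ e ∈ M, ∀ f ∈ M, e ≠ f → ∀ v : V, ¬(v ∈ e ∧ v ∈ f)) ∧ M.card = n} ν) :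
    IsLeast {n : ℕ | ∃ σ : V → Sym2 V,
        (∀ v : V, σ v ∈ G.edgeFinset ∧ v ∈ σ v) ∧
        (∀ e : Sym2 V, (Finset.univ.filter (fun v => σ v = e)).card ≤ 2) ∧
        (Finset.univ.image σ).card = n}
      (Fintype.card V - ν) := by
  classical
  constructor
  · -- membership: construct a schedule from a maximum matching
    obtain ⟨M, hMsub, hMdis, hMcard⟩ := hν.1
    -- maximality: no two adjacent unmatched vertices
    have hmax : ∀ u v : V, G.Adj u v → (∀ f ∈ M, u ∉ f) → (∀ f ∈ M, v ∉ f) → False := by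
      intro u v huv hu hv
      have hnotmem : s(u, v) ∉ M := fun h => hu _ h (Sym2.mem_mk_left u v)
      have hmem : ν + 1 ∈ {n : ℕ | ∃ M : Finset (Sym2 V), M ⊆ G.edgeFinset ∧
          (∀ e ∈ M, ∀ f ∈ M, e ≠ f → ∀ v : V, ¬(v ∈ e ∧ v ∈ f)) ∧ M.card = n} := by
        refine ⟨insert s(u, v) M, ?_, ?_, ?_⟩
        · intro e he
          rcases Finset.mem_insert.mp he with rfl | he
          · exact SimpleGraph.mem_edgeFinset.mpr huv
          · exact hMsub he
        · intro e he f hf hef w hw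
          have key : ∀ g ∈ M, w ∈ g → w ∈ s(u, v) → False := by
            intro g hg hwg hwuv
            rcases Sym2.mem_iff.mp hwuv with rfl | rfl
            · exact hu g hg hwg
            · exact hv g hg hwg
          rcases Finset.mem_insert.mp he with he1 | he1 <;>
            rcases Finset.mem_insert.mp hf with hf1 | hf1
          · exact hef (he1.trans hf1.symm)
          · exact key f hf1 hw.2 (he1 ▸ hw.1)
          · exact key e he1 hw.1 (hf1 ▸ hw.2)
          · exact hMdis e he1 f hf1 hef w hw
        · rw [Finset.card_insert_of_notMem hnotmem, hMcard]
      have := hν.2 hmem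
      omega
    -- choose the schedule
    have hch : ∀ v : V, ∃ e : Sym2 V, e ∈ G.edgeFinset ∧ v ∈ e ∧
        ((∃ f ∈ M, v ∈ f) → e ∈ M) := by
      intro v
      by_cases h : ∃ f ∈ M, v ∈ f
      · obtain ⟨f, hf, hvf⟩ := h
        exact ⟨f, hMsub hf, hvf, fun _ => hf⟩
      · obtain ⟨w, hw⟩ := hiso v
        exact ⟨s(v, w), SimpleGraph.mem_edgeFinset.mpr hw, Sym2.mem_mk_left _ _,
          fun hc => absurd hc h⟩
    choose σ hσe hσv hσM using hch
    refine ⟨σ, fun v => ⟨hσe v, hσv v⟩, ?_, ?_⟩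
    · -- load at most 2
      intro e
      induction e using Sym2.ind with
      | _ a b =>
        have hsub : Finset.univ.filter (fun v => σ v = s(a, b)) ⊆ {a, b} := by
          intro v hv
          have hve : v ∈ s(a, b) := (Finset.mem_filter.mp hv).2 ▸ hσv v
          rcases Sym2.mem_iff.mp hve with rfl | rfl
          · exact Finset.mem_insert_self _ _
          · exact Finset.mem_insert_of_mem (Finset.mem_singleton_self _)
        calc (Finset.univ.filter (fun v => σ v = s(a, b))).card
            ≤ ({a, b} : Finset V).card := Finset.card_le_card hsub
          _ ≤ 2 := Finset.card_insert_le a {b} |>.trans (by simp)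
    · -- the image has cardinality |V| - ν
      set A : Finset V := Finset.univ.filter (fun v => ∃ f ∈ M, v ∈ f) with hA
      set U : Finset V := Finset.univ.filter (fun v => ¬∃ f ∈ M, v ∈ f) with hU
      have huniv : A ∪ U = Finset.univ := Finset.filter_union_filter_not_eq _ _
      have himg : Finset.univ.image σ = M ∪ U.image σ := by
        rw [← huniv, Finset.image_union]
        congr 1
        apply Finset.Subset.antisymm
        · intro e he
          obtain ⟨v, hv, rfl⟩ := Finset.mem_image.mp he
          exact hσM v (Finset.mem_filter.mp hv).2
        · intro f hf
          induction f using Sym2.ind with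
          | _ a b =>
            have ha : a ∈ s(a, b) := Sym2.mem_mk_left a b
            have haA : a ∈ A := Finset.mem_filter.mpr ⟨Finset.mem_univ _, ⟨_, hf, ha⟩⟩
            have hσaM : σ a ∈ M := hσM a ⟨_, hf, ha⟩
            have : σ a = s(a, b) := by
              by_contra hne
              exact hMdis _ hσaM _ hf hne a ⟨hσv a, ha⟩
            exact Finset.mem_image.mpr ⟨a, haA, this⟩
      have hdisj : Disjoint M (U.image σ) := by
        rw [Finset.disjoint_right]
        intro e he heM
        obtain ⟨v, hv, rfl⟩ := Finset.mem_image.mp he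
        exact (Finset.mem_filter.mp hv).2 ⟨_, heM, hσv v⟩
      have hinj : Set.InjOn σ U := by
        intro u hu v hv huv
        by_contra hne
        have hue : u ∈ σ v := huv ▸ hσv u
        have hve : v ∈ σ v := hσv v
        have hsuv : σ v = s(u, v) := ((Sym2.mem_and_mem_iff hne).mp ⟨hue, hve⟩)
        have hadj : G.Adj u v := by
          have h1 := SimpleGraph.mem_edgeFinset.mp (hσe v)
          rw [hsuv] at h1
          exact h1
        have hu' : ∀ f ∈ M, u ∉ f := by
          intro f hf hmem'
          exact (Finset.mem_filter.mp (Finset.mem_coe.mp hu)).2 ⟨f, hf, hmem'⟩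
        have hv' : ∀ f ∈ M, v ∉ f := by
          intro f hf hmem'
          exact (Finset.mem_filter.mp (Finset.mem_coe.mp hv)).2 ⟨f, hf, hmem'⟩
        exact hmax u v hadj hu' hv'
      have hcardU : (U.image σ).card = U.card := Finset.card_image_of_injOn hinj
      -- card A = 2 * ν
      have hAbi : A = M.biUnion (fun e => Finset.univ.filter (fun v => v ∈ e)) := by
        ext v
        simp [hA, Finset.mem_biUnion]
      have hcardA : A.card = 2 * ν := by
        rw [hAbi, Finset.card_biUnion]
        · rw [Finset.sum_congr rfl (fun e he => ?_), Finset.sum_const, hMcard,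
            smul_eq_mul, mul_comm]
          -- each edge covers exactly 2 vertices
          have hed := hMsub he
          revert hed
          induction e using Sym2.ind with
          | _ a b =>
            intro hed
            have hab : a ≠ b := by
              intro h
              exact (SimpleGraph.irrefl G) (h ▸ SimpleGraph.mem_edgeFinset.mp hed)
            have : Finset.univ.filter (fun v => v ∈ s(a, b)) = {a, b} := by
              ext v
              simp [Sym2.mem_iff]
            rw [this, Finset.card_insert_of_notMem (by simp [hab]),
              Finset.card_singleton]
        · intro e he f hf hef
          rw [Function.onFun, Finset.disjoint_left]
          intro v hv hv'
          exact hMdis e he f hf hef v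
            ⟨(Finset.mem_filter.mp hv).2, (Finset.mem_filter.mp hv').2⟩
      have hcardsplit : A.card + U.card = Fintype.card V := by
        rw [← Finset.card_union_of_disjoint (Finset.disjoint_filter_filter_not _ _ _),
          huniv, Finset.card_univ]
      rw [himg, Finset.card_union_of_disjoint hdisj, hMcard, hcardU]
      omega
  · -- lower bound
    rintro n ⟨σ, hσ1, hσ2, hσ3⟩
    set E' : Finset (Sym2 V) := Finset.univ.image σ with hE'
    set M' : Finset (Sym2 V) :=
      E'.filter (fun e => (Finset.univ.filter (fun v => σ v = e)).card = 2) with hM'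
    -- M' is a matching
    have hkey : ∀ e ∈ M', ∀ v : V, v ∈ e → σ v = e := by
      intro e he v hv
      obtain ⟨heE, hload⟩ := Finset.mem_filter.mp he
      obtain ⟨w, hw, rfl⟩ := Finset.mem_image.mp heE
      -- the two vertices scheduled on e are its endpoints
      have hwne : w ∈ σ w := (hσ1 w).2
      -- get the two distinct vertices a b with σ a = σ b = σ w
      have : ∃ a b : V, a ≠ b ∧ σ a = σ w ∧ σ b = σ w := by
        rw [Finset.card_eq_two] at hload
        obtain ⟨a, b, hab, hset⟩ := hload
        have haf : a ∈ Finset.univ.filter (fun v => σ v = σ w) := by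
          rw [hset]; simp
        have hbf : b ∈ Finset.univ.filter (fun v => σ v = σ w) := by
          rw [hset]; simp
        exact ⟨a, b, hab, (Finset.mem_filter.mp haf).2, (Finset.mem_filter.mp hbf).2⟩
      obtain ⟨a, b, hab, ha, hb⟩ := this
      have hae : a ∈ σ w := ha ▸ (hσ1 a).2
      have hbe : b ∈ σ w := hb ▸ (hσ1 b).2
      have hewab : σ w = s(a, b) := (Sym2.mem_and_mem_iff hab).mp ⟨hae, hbe⟩
      rw [hewab] at hv
      rcases Sym2.mem_iff.mp hv with rfl | rfl
      · exact ha
      · exact hb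
    have hM'match : M'.card ≤ ν := by
      apply hν.2
      refine ⟨M', ?_, ?_, rfl⟩
      · intro e he
        obtain ⟨heE, _⟩ := Finset.mem_filter.mp he
        obtain ⟨w, _, rfl⟩ := Finset.mem_image.mp heE
        exact (hσ1 w).1
      · intro e he f hf hef v hv
        have h1 := hkey e he v hv.1
        have h2 := hkey f hf v hv.2
        exact hef (h1 ▸ h2)
    -- counting
    have hcount : Fintype.card V ≤ n + M'.card := by
      have hfib : Fintype.card V = ∑ e ∈ E', (Finset.univ.filter (fun v => σ v = e)).card := by
        rw [← Finset.card_univ]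
        apply Finset.card_eq_sum_card_fiberwise
        intro v _
        exact Finset.mem_image_of_mem σ (Finset.mem_univ v)
      have hbound : ∀ e ∈ E',
          (Finset.univ.filter (fun v => σ v = e)).card ≤ 1 + if e ∈ M' then 1 else 0 := by
        intro e he
        by_cases h : e ∈ M'
        · simp only [h, if_true]
          exact hσ2 e
        · simp only [h, if_false]
          have : (Finset.univ.filter (fun v => σ v = e)).card ≠ 2 := by
            intro hc
            exact h (Finset.mem_filter.mpr ⟨he, hc⟩)
          have := hσ2 e
          omega
      calc Fintype.card V = ∑ e ∈ E', (Finset.univ.filter (fun v => σ v = e)).card := hfib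
        _ ≤ ∑ e ∈ E', (1 + if e ∈ M' then 1 else 0) := Finset.sum_le_sum hbound
        _ = E'.card + ∑ e ∈ E', (if e ∈ M' then 1 else 0) := by
            rw [Finset.sum_add_distrib, Finset.sum_const, smul_eq_mul, mul_one]
        _ = n + M'.card := by
            rw [hσ3]
            congr 1
            rw [← Finset.card_filter]
            congr 1
            exact Finset.filter_mem_eq_inter.trans (by
              rw [Finset.inter_eq_right.mpr (Finset.filter_subset _ _)])
      -- done
    omega
end
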